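/- arXiv:2605.05233 — 10 statements merged into one kernel-verified Lean document; each statement's English description precedes it below -/
import Mathlib

section
/- Let n ≥ 1, let u_1, …, u_n be nonnegative integers and let t be a nonnegative integer satisfying Σ_{j=1}^n u_j + n(n+1) = n·t. Consider the BMKP instance with n knapsacks, where knapsack j has capacity B_j = t − u_j, and with 2n items, namely exactly two items of weight i for each i ∈ {1, …, n}, every item having profit 1 (the items may be modeled as pairs (i, b) with i ∈ {1,…,n} and b ∈ {1,2}, the pair (i,b) having weight i and profit 1). Then the following are equivalent: (a) there exist permutations v and w of {1, …, n} such that u_j + v(j) + w(j) = t for every j ∈ {1, …, n}; (b) there exist pairwise disjoint sets I_1, …, I_n of items such that for every j the total weight of the items in I_j is at most t − u_j and |I_j| ≥ 2 (equivalently, since all profits are 1, the solution has objective value at least 2). -/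
/-- The reduction from RN3DM to BMKP: the RN3DM instance `(u, t)` has a solution
iff the BMKP instance with `n` knapsacks of capacities `t - u j` and two items of
weight `i` for each `i ∈ {1,…,n}` (all of profit 1) admits a feasible solution
of objective value at least 2 (i.e. each knapsack receives at least two items). -/
theorem stmt0 (n : ℕ) (hn : 1 ≤ n) (u : Fin n → ℕ) (t : ℕ)
    (hsum : (∑ j, u j) + n * (n + 1) = n * t) :
    (∃ v w : Equiv.Perm (Fin n),
        ∀ j : Fin n, u j + ((v j : ℕ) + 1) + ((w j : ℕ) + 1) = t) ↔
    (∃ I : Fin n → Finset (Fin n × Fin 2),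
        (∀ j j' : Fin n, j ≠ j' → Disjoint (I j) (I j')) ∧
        (∀ j : Fin n, (∑ x ∈ I j, (((x.1 : ℕ) : ℤ) + 1)) ≤ (t : ℤ) - (u j : ℤ)) ∧
        (∀ j : Fin n, 2 ≤ (I j).card)) := by
  constructor
  · rintro ⟨v, w, h⟩
    refine ⟨fun j => {(v j, 0), (w j, 1)}, ?_, ?_, ?_⟩
    · intro j j' hjj'
      rw [Finset.disjoint_left]
      intro x hx hx'
      simp only [Finset.mem_insert, Finset.mem_singleton] at hx hx'
      rcases hx with rfl | rfl <;> rcases hx' with hx' | hx' <;>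
        simp only [Prod.mk.injEq] at hx'
      · exact hjj' (v.injective hx'.1)
      · exact absurd hx'.2 (by decide)
      · exact absurd hx'.2 (by decide)
      · exact hjj' (w.injective hx'.1)
    · intro j
      have hne : ((v j, (0 : Fin 2)) : Fin n × Fin 2) ≠ (w j, 1) := by
        simp [Prod.ext_iff]
      rw [Finset.sum_pair hne]
      have := h j
      push_cast
      omega
    · intro j
      have hne : ((v j, (0 : Fin 2)) : Fin n × Fin 2) ≠ (w j, 1) := by
        simp [Prod.ext_iff]
      rw [Finset.card_insert_of_notMem (by simpa using hne), Finset.card_singleton]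
  · rintro ⟨I, hdisj, hW, hc⟩
    have hmem : ∀ {z : Fin n × Fin 2} {j j'}, z ∈ I j → z ∈ I j' → j = j' := by
      intro z j j' h1 h2
      by_contra hne
      exact (Finset.disjoint_left.mp (hdisj j j' hne) h1) h2
    have hpd : ∀ S : Finset (Fin n),
        (↑S : Set (Fin n)).PairwiseDisjoint I := fun S j _ j' _ h => hdisj j j' h
    have hcardsum : ∀ S : Finset (Fin n),
        ∑ j ∈ S, (I j).card = (S.biUnion I).card := fun S =>
      (Finset.card_biUnion (fun j _ j' _ h => hdisj j j' h)).symm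
    have hle : (Finset.univ.biUnion I).card ≤ 2 * n := by
      have := Finset.card_le_card (Finset.subset_univ (Finset.univ.biUnion I))
      simpa [Finset.card_univ, mul_comm] using this
    have hcard : ∀ j, (I j).card = 2 := by
      by_contra hcon
      push_neg at hcon
      obtain ⟨j0, hj0⟩ := hcon
      have h3 : 2 < (I j0).card := lt_of_le_of_ne (hc j0) (Ne.symm hj0)
      have hlt : 2 * n < ∑ j, (I j).card := by
        calc 2 * n = ∑ _j : Fin n, 2 := by simp [mul_comm]
        _ < _ := Finset.sum_lt_sum (fun j _ => hc j) ⟨j0, Finset.mem_univ _, h3⟩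
      have := hcardsum Finset.univ
      omega
    have hsum2 : ∑ j, (I j).card = 2 * n := by simp [hcard, mul_comm]
    have huniv : Finset.univ.biUnion I = Finset.univ := by
      apply Finset.eq_univ_of_card
      rw [← hcardsum Finset.univ, hsum2]
      simp [mul_comm]
    -- total weight computation
    have hWsum : ∑ j, (∑ x ∈ I j, (((x.1 : ℕ) : ℤ) + 1)) = (n : ℤ) * (n + 1) := by
      rw [← Finset.sum_biUnion (hpd Finset.univ), huniv]
      rw [Fintype.sum_prod_type]
      have gauss : ∀ m : ℕ, ∑ i : Fin m, (((i : ℕ) : ℤ) + 1) = m * (m + 1) / 2 := by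
        intro m
        induction m with
        | zero => simp
        | succ k ih =>
          rw [Fin.sum_univ_castSucc]
          simp only [Fin.coe_castSucc, Fin.val_last]
          rw [ih]
          push_cast
          obtain ⟨c, hc⟩ := Int.even_mul_succ_self (k : ℤ)
          have h2 : ((k : ℤ) + 1) * ((k : ℤ) + 1 + 1) = (c + (k : ℤ) + 1) + (c + (k : ℤ) + 1) := by
            linear_combination hc
          rw [hc, h2]
          omega
      simp only [Finset.sum_const, Finset.card_univ, Fintype.card_fin, smul_eq_mul,
        nsmul_eq_mul, Nat.cast_ofNat]
      rw [← Finset.mul_sum, gauss n]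
      exact Int.mul_ediv_cancel' (Int.even_mul_succ_self ((n : ℤ))).two_dvd
    have hcap : ∑ j, ((t : ℤ) - (u j : ℤ)) = (n : ℤ) * (n + 1) := by
      have : ((∑ j, u j : ℕ) : ℤ) + (n : ℤ) * (n + 1) = (n : ℤ) * t := by
        exact_mod_cast congrArg (Nat.cast : ℕ → ℤ) hsum
      push_cast at this ⊢
      rw [Finset.sum_sub_distrib]
      simp only [Finset.sum_const, Finset.card_univ, Fintype.card_fin, nsmul_eq_mul]
      linarith
    have hWeq : ∀ j, (∑ x ∈ I j, (((x.1 : ℕ) : ℤ) + 1)) = (t : ℤ) - (u j : ℤ) := by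
      have := (Finset.sum_eq_sum_iff_of_le (fun j (_ : j ∈ Finset.univ) => hW j)).mp
        (by rw [hWsum, hcap])
      exact fun j => this j (Finset.mem_univ j)
    -- Hall's condition
    have hall : ∀ S : Finset (Fin n),
        S.card ≤ (S.biUnion (fun j => (I j).image Prod.fst)).card := by
      intro S
      have h2 : S.biUnion I ⊆
          (S.biUnion (fun j => (I j).image Prod.fst)) ×ˢ (Finset.univ : Finset (Fin 2)) := by
        intro x hx
        rw [Finset.mem_biUnion] at hx
        obtain ⟨j, hj, hxj⟩ := hx
        rw [Finset.mem_product]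
        refine ⟨Finset.mem_biUnion.mpr ⟨j, hj, Finset.mem_image.mpr ⟨x, hxj, rfl⟩⟩,
          Finset.mem_univ _⟩
      have hcc := Finset.card_le_card h2
      rw [Finset.card_product] at hcc
      have h3 : ∑ j ∈ S, (I j).card = 2 * S.card := by
        rw [Finset.sum_congr rfl (fun j _ => hcard j)]
        simp [mul_comm]
      have h4 := hcardsum S
      simp only [Finset.card_univ, Fintype.card_fin] at hcc
      omega
    obtain ⟨v, hvinj, hv⟩ :=
      (Finset.all_card_le_biUnion_card_iff_existsInjective'
        (fun j => (I j).image Prod.fst)).mp hall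
    choose x hxI hxv using fun j => Finset.mem_image.mp (hv j)
    have herase : ∀ j, ∃ a, (I j).erase (x j) = {a} := by
      intro j
      rw [← Finset.card_eq_one, Finset.card_erase_of_mem (hxI j), hcard j]
    choose y hy using herase
    have hyI : ∀ j, y j ∈ I j := fun j =>
      Finset.mem_of_mem_erase (by rw [hy j]; exact Finset.mem_singleton_self _)
    have hyx : ∀ j, y j ≠ x j := fun j =>
      Finset.ne_of_mem_erase (by rw [hy j]; exact Finset.mem_singleton_self _)
    have hIj : ∀ j, I j = insert (x j) {y j} := by
      intro j
      rw [← hy j, Finset.insert_erase (hxI j)]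
    set w : Fin n → Fin n := fun j => (y j).1 with hwdef
    have hvsurj : Function.Surjective v := Finite.surjective_of_injective hvinj
    have hfin2 : ∀ a b c : Fin 2, a ≠ b → c = a ∨ c = b := by decide
    have hwinj : Function.Injective w := by
      intro j j' hww
      by_contra hne
      have hyne : y j ≠ y j' := fun hh => hne (hmem (hyI j) (hh ▸ hyI j'))
      obtain ⟨k, hk⟩ := hvsurj (w j)
      have hxk1 : (x k).1 = w j := by rw [hxv k, hk]
      have h1 : (y j).1 = w j := rfl
      have h2 : (y j').1 = w j := hww ▸ rfl
      have hsnd : (y j).2 ≠ (y j').2 := by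
        intro hs
        exact hyne (Prod.ext (h1.trans h2.symm) hs)
      have hxk : x k = y j ∨ x k = y j' := by
        rcases hfin2 _ _ ((x k).2) hsnd with hs | hs
        · exact Or.inl (Prod.ext (hxk1.trans h1.symm) hs)
        · exact Or.inr (Prod.ext (hxk1.trans h2.symm) hs)
      rcases hxk with hh | hh
      · have hkj : k = j := hmem (hh ▸ hxI k) (hyI j)
        exact hyx j (by rw [hkj] at hh; exact hh.symm)
      · have hkj : k = j' := hmem (hh ▸ hxI k) (hyI j')
        exact hyx j' (by rw [hkj] at hh; exact hh.symm)
    have hwsurj : Function.Surjective w := Finite.surjective_of_injective hwinj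
    refine ⟨Equiv.ofBijective v ⟨hvinj, hvsurj⟩, Equiv.ofBijective w ⟨hwinj, hwsurj⟩, ?_⟩
    intro j
    have hkey := hWeq j
    rw [hIj j, Finset.sum_insert (by simpa using (hyx j).symm), Finset.sum_singleton] at hkey
    have hx1 : (x j).1 = v j := hxv j
    show u j + ((v j : ℕ) + 1) + ((w j : ℕ) + 1) = t
    rw [hx1] at hkey
    have : ((u j : ℤ)) + (((v j : ℕ) : ℤ) + 1) + (((w j : ℕ) : ℤ) + 1) = (t : ℤ) := by
      push_cast at hkey ⊢
      linarith
    exact_mod_cast this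
end

section
/- Let 0 < ε < 1/6, let X be a finite set of items where each item i has profit p(i) ≥ 0 and weight w(i) > 0, and let h ∈ X. Assume: (1) w(X) ≤ 1 and w(h) ≥ 1 − ε²; (2) p(X) ≥ 1 and p(X \ {h}) < 1; (3) 1/3 + ε < p(h) ≤ 2/3 − 6ε; (4) p(h) + p(i) < 2/3 − ε for every i ∈ X \ {h}. Then there exists a subset Y ⊆ X \ {h} such that ε ≤ p(Y) ≤ 1/3 and ε·(w(X) − w(h)) ≤ w(Y) ≤ ε². Here p(S) and w(S) denote the total profit and total weight of a set S of items. -/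
/-- Greedy sub-lemma: from a set of items of individual profit `≤ 1/3 - 2ε` with total
profit at least `ε`, extract a nonempty subset with profit in `[ε, 1/3 - ε]`. -/
lemma aux_small {ι : Type*} [DecidableEq ι] (ε : ℝ) (hε : 0 < ε) (p : ι → ℝ) :
    ∀ n (L : Finset ι), L.card ≤ n → (∀ i ∈ L, 0 ≤ p i) →
    (∀ i ∈ L, p i ≤ 1/3 - 2*ε) → ε ≤ ∑ i ∈ L, p i →
    ∃ S ⊆ L, S.Nonempty ∧ ε ≤ ∑ i ∈ S, p i ∧ ∑ i ∈ S, p i ≤ 1/3 - ε := by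
  intro n
  induction n with
  | zero =>
    intro L hcard _ _ hsum
    rw [Nat.le_zero, Finset.card_eq_zero] at hcard
    subst hcard
    simp at hsum
    linarith
  | succ n ih =>
    intro L hcard hp0 hpb hsum
    have hLne : L.Nonempty := by
      rw [Finset.nonempty_iff_ne_empty]
      rintro rfl
      simp at hsum; linarith
    by_cases hc : ∑ i ∈ L, p i ≤ 1/3 - ε
    · exact ⟨L, le_refl _, hLne, hsum, hc⟩
    · push_neg at hc
      obtain ⟨i, hi⟩ := hLne
      have herase : ∑ j ∈ L.erase i, p j = (∑ j ∈ L, p j) - p i :=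
        Finset.sum_erase_eq_sub hi
      have hpi : p i ≤ 1/3 - 2*ε := hpb i hi
      have hcard' : (L.erase i).card ≤ n := by
        have := Finset.card_erase_of_mem hi
        omega
      obtain ⟨S, hSsub, hSne, hS1, hS2⟩ := ih (L.erase i) hcard'
        (fun j hj => hp0 j (Finset.mem_of_mem_erase hj))
        (fun j hj => hpb j (Finset.mem_of_mem_erase hj))
        (by rw [herase]; linarith)
      exact ⟨S, hSsub.trans (Finset.erase_subset i L), hSne, hS1, hS2⟩

/-- Main induction: from a set of items of individual profit `≤ 1/3 - 2ε` with total
profit at least `ε`, extract a subset `Y` with profit in `[ε, 1/3]` and weight at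
least an `ε / p(L)` fraction of the total weight. -/
lemma aux_main {ι : Type*} [DecidableEq ι] (ε : ℝ) (hε : 0 < ε) (p w : ι → ℝ) :
    ∀ n (L : Finset ι), L.card ≤ n → (∀ i ∈ L, 0 ≤ p i) → (∀ i ∈ L, 0 ≤ w i) →
    (∀ i ∈ L, p i ≤ 1/3 - 2*ε) → ε ≤ ∑ i ∈ L, p i →
    ∃ Y ⊆ L, ε ≤ ∑ i ∈ Y, p i ∧ ∑ i ∈ Y, p i ≤ 1/3 ∧
      ε * ∑ i ∈ L, w i ≤ (∑ i ∈ L, p i) * ∑ i ∈ Y, w i := by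
  intro n
  induction n with
  | zero =>
    intro L hcard _ _ _ hsum
    rw [Nat.le_zero, Finset.card_eq_zero] at hcard
    subst hcard
    simp at hsum
    linarith
  | succ n ih =>
    intro L hcard hp0 hw0 hpb hsum
    have hwL : 0 ≤ ∑ i ∈ L, w i := Finset.sum_nonneg hw0
    by_cases hc : ∑ i ∈ L, p i ≤ 1/3
    · refine ⟨L, le_refl _, hsum, hc, ?_⟩
      nlinarith
    · push_neg at hc
      obtain ⟨S, hSsub, hSne, hS1, hS2⟩ :=
        aux_small ε hε p L.card L le_rfl hp0 hpb hsum
      have hwS : 0 ≤ ∑ i ∈ S, w i :=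
        Finset.sum_nonneg (fun i hi => hw0 i (hSsub hi))
      by_cases hbig : ε * ∑ i ∈ L, w i ≤ (∑ i ∈ L, p i) * ∑ i ∈ S, w i
      · exact ⟨S, hSsub, hS1, by linarith, hbig⟩
      · push_neg at hbig
        -- recurse on L \ S
        set L' := L \ S with hL'
        have hpL' : ∑ i ∈ L', p i = (∑ i ∈ L, p i) - ∑ i ∈ S, p i :=
          Finset.sum_sdiff_eq_sub hSsub
        have hwL' : ∑ i ∈ L', w i = (∑ i ∈ L, w i) - ∑ i ∈ S, w i :=
          Finset.sum_sdiff_eq_sub hSsub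
        have hcard' : L'.card ≤ n := by
          have h1 : L'.card = L.card - S.card := Finset.card_sdiff_of_subset hSsub
          have h2 : 0 < S.card := Finset.card_pos.mpr hSne
          omega
        have hsub' : L' ⊆ L := Finset.sdiff_subset
        have hsum' : ε ≤ ∑ i ∈ L', p i := by rw [hpL']; linarith
        obtain ⟨Y, hYsub, hY1, hY2, hY3⟩ := ih L' hcard'
          (fun j hj => hp0 j (hsub' hj)) (fun j hj => hw0 j (hsub' hj))
          (fun j hj => hpb j (hsub' hj)) hsum'
        refine ⟨Y, hYsub.trans hsub', hY1, hY2, ?_⟩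
        have hwY : 0 ≤ ∑ i ∈ Y, w i :=
          Finset.sum_nonneg (fun i hi => hw0 i (hsub' (hYsub hi)))
        rw [hpL', hwL'] at hY3
        -- key ratio fact: w(S) * p(L') ≤ p(S) * w(L')
        have hpL'pos : 0 < ∑ i ∈ L', p i := by rw [hpL']; linarith
        have hwL'nn : 0 ≤ ∑ i ∈ L', w i :=
          Finset.sum_nonneg (fun j hj => hw0 j (hsub' hj))
        have hkey : (∑ i ∈ S, w i) * ((∑ i ∈ L, p i) - ∑ i ∈ S, p i)
            ≤ (∑ i ∈ S, p i) * ((∑ i ∈ L, w i) - ∑ i ∈ S, w i) := by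
          nlinarith
        nlinarith [mul_nonneg (sub_nonneg.mpr hS1) hwY]


/-- Claim 9 (Clm:RemovedSets): from a knapsack `X` of weight at most 1 containing a
heavy item `h` of large profit, one can remove a set `Y ⊆ X \ {h}` of light items
whose profit is between `ε` and `1/3` and whose weight is between
`ε·(w(X) − w(h))` and `ε²`. -/
theorem stmt3 {ι : Type*} [DecidableEq ι] (ε : ℝ) (hε : 0 < ε) (hε' : ε < 1/6)
    (X : Finset ι) (p w : ι → ℝ) (h : ι) (hhX : h ∈ X)
    (hp0 : ∀ i ∈ X, 0 ≤ p i) (hw0 : ∀ i ∈ X, 0 < w i)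
    (hwX : ∑ i ∈ X, w i ≤ 1) (hwh : 1 - ε ^ 2 ≤ w h)
    (hpX : 1 ≤ ∑ i ∈ X, p i) (hpX' : ∑ i ∈ X.erase h, p i < 1)
    (hph1 : 1/3 + ε < p h) (hph2 : p h ≤ 2/3 - 6 * ε)
    (hpair : ∀ i ∈ X.erase h, p h + p i < 2/3 - ε) :
    ∃ Y ⊆ X.erase h,
      ε ≤ ∑ i ∈ Y, p i ∧ (∑ i ∈ Y, p i) ≤ 1/3 ∧
      ε * ((∑ i ∈ X, w i) - w h) ≤ ∑ i ∈ Y, w i ∧ (∑ i ∈ Y, w i) ≤ ε ^ 2 := by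
  set L := X.erase h with hL
  have hsubL : L ⊆ X := Finset.erase_subset h X
  have hpL : ∑ i ∈ L, p i = (∑ i ∈ X, p i) - p h := Finset.sum_erase_eq_sub hhX
  have hwL : ∑ i ∈ L, w i = (∑ i ∈ X, w i) - w h := Finset.sum_erase_eq_sub hhX
  have hpLlb : ε ≤ ∑ i ∈ L, p i := by rw [hpL]; linarith
  have hpb : ∀ i ∈ L, p i ≤ 1/3 - 2*ε := fun i hi => by
    have := hpair i hi; linarith
  obtain ⟨Y, hYsub, hY1, hY2, hY3⟩ := aux_main ε hε p w L.card L le_rfl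
    (fun i hi => hp0 i (hsubL hi)) (fun i hi => (hw0 i (hsubL hi)).le) hpb hpLlb
  refine ⟨Y, hYsub, hY1, hY2, ?_, ?_⟩
  · have hwY : 0 ≤ ∑ i ∈ Y, w i :=
      Finset.sum_nonneg (fun i hi => (hw0 i (hsubL (hYsub hi))).le)
    have hpLub : ∑ i ∈ L, p i < 1 := hpX'
    rw [hwL] at hY3
    nlinarith
  · have hYL : ∑ i ∈ Y, w i ≤ ∑ i ∈ L, w i :=
      Finset.sum_le_sum_of_subset_of_nonneg hYsub
        (fun i hi _ => (hw0 i (hsubL hi)).le)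
    rw [hwL] at hYL
    linarith
end

section
/- Let 0 < ε < 1/7 and let D be a finite set of items where each item i has profit π(i) ≥ 0 and weight ω(i) > 0. Assume π(D) ≥ 1 − ε and π(i) < 1/2 − (7/2)·ε for every i ∈ D. Then there exists a subset Y ⊆ D such that 3ε·π(D) ≤ π(Y) < (1/2)·π(D) and ω(Y) ≥ 3ε·ω(D). Here π(S) and ω(S) denote the total profit and total weight of a set S of items. -/
/-- Claim 14 (clm:removed-set-2): from any collection `D` of items of total profit
at least `1 − ε`, every item having profit below `1/2 − (7/2)ε`, one can extract a
subset `Y` whose profit is at least a `3ε`-fraction but strictly less than half of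
the total profit, and whose weight is at least a `3ε`-fraction of the total weight. -/
theorem stmt4 {ι : Type*} (ε : ℝ) (hε : 0 < ε) (hε' : ε < 1/7)
    (D : Finset ι) (π ω : ι → ℝ)
    (hp0 : ∀ i ∈ D, 0 ≤ π i) (hw0 : ∀ i ∈ D, 0 < ω i)
    (hprof : 1 - ε ≤ ∑ i ∈ D, π i)
    (hsmall : ∀ i ∈ D, π i < 1/2 - (7/2) * ε) :
    ∃ Y ⊆ D,
      3 * ε * (∑ i ∈ D, π i) ≤ ∑ i ∈ Y, π i ∧
      (∑ i ∈ Y, π i) < (1/2) * ∑ i ∈ D, π i ∧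
      3 * ε * (∑ i ∈ D, ω i) ≤ ∑ i ∈ Y, ω i := by
  classical
  set P := ∑ i ∈ D, π i with hP
  have hPpos : 0 < P := by
    have : (0:ℝ) < 1 - ε := by linarith
    linarith
  -- the family of candidate sets
  set T : Finset (Finset ι) := D.powerset.filter
    (fun Y => 3 * ε * P ≤ ∑ i ∈ Y, π i ∧
      ∀ a ∈ Y, ∀ b ∈ D \ Y, π a * ω b ≤ π b * ω a) with hT
  have hDT : D ∈ T := by
    rw [hT, Finset.mem_filter]
    refine ⟨Finset.mem_powerset_self D, ?_, ?_⟩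
    · nlinarith
    · intro a _ b hb
      simp at hb
  obtain ⟨Y, hYT, hmin⟩ := T.exists_min_image Finset.card ⟨D, hDT⟩
  rw [hT, Finset.mem_filter, Finset.mem_powerset] at hYT
  obtain ⟨hYD, hY1, hY2⟩ := hYT
  have hYne : Y.Nonempty := by
    rcases Y.eq_empty_or_nonempty with h | h
    · exfalso
      rw [h, Finset.sum_empty] at hY1
      nlinarith
    · exact h
  obtain ⟨i, hiY, himax⟩ := Y.exists_max_image (fun a => π a / ω a) hYne
  have hiD : i ∈ D := hYD hiY
  -- the erased set satisfies the cross condition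
  have hcross' : ∀ a ∈ Y.erase i, ∀ b ∈ D \ Y.erase i, π a * ω b ≤ π b * ω a := by
    intro a ha b hb
    have haY : a ∈ Y := Finset.mem_of_mem_erase ha
    rcases Finset.mem_sdiff.mp hb with ⟨hbD, hbnY⟩
    by_cases hbY : b ∈ Y
    · -- then b = i
      have hbi : b = i := by
        by_contra hne
        exact hbnY (Finset.mem_erase.mpr ⟨hne, hbY⟩)
      subst hbi
      have := himax a haY
      have hwa := hw0 a (hYD haY)
      have hwb := hw0 b hbD
      rw [div_le_div_iff₀ hwa hwb] at this
      linarith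
    · exact hY2 a haY b (Finset.mem_sdiff.mpr ⟨hbD, hbY⟩)
  -- minimality: the erased set has too small profit
  have hsmallsum : ∑ j ∈ Y.erase i, π j < 3 * ε * P := by
    by_contra h
    push_neg at h
    have hmem : Y.erase i ∈ T := by
      rw [hT, Finset.mem_filter, Finset.mem_powerset]
      exact ⟨(Finset.erase_subset i Y).trans hYD, h, hcross'⟩
    have := hmin _ hmem
    have hcard : (Y.erase i).card < Y.card := Finset.card_erase_lt_of_mem hiY
    omega
  have hsum_split : ∑ j ∈ Y.erase i, π j + π i = ∑ j ∈ Y, π j :=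
    Finset.sum_erase_add Y π hiY
  have hupper : ∑ j ∈ Y, π j < 3 * ε * P + (1/2 - (7/2) * ε) := by
    have := hsmall i hiD
    linarith
  have hhalf : ∑ j ∈ Y, π j < (1/2) * P := by
    nlinarith
  -- weight bound via the cross condition
  have hWnn : ∀ S : Finset ι, S ⊆ D → 0 ≤ ∑ j ∈ S, ω j := by
    intro S hS
    exact Finset.sum_nonneg (fun j hj => (hw0 j (hS hj)).le)
  have hkey : (∑ a ∈ Y, π a) * (∑ b ∈ D \ Y, ω b) ≤
      (∑ b ∈ D \ Y, π b) * (∑ a ∈ Y, ω a) := by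
    rw [Finset.sum_mul_sum, Finset.sum_mul_sum]
    rw [Finset.sum_comm (s := D \ Y)]
    refine Finset.sum_le_sum (fun a ha => Finset.sum_le_sum (fun b hb => ?_))
    exact hY2 a ha b hb
  have hsplitP : ∑ b ∈ D \ Y, π b + ∑ a ∈ Y, π a = P := Finset.sum_sdiff hYD
  have hsplitW : ∑ b ∈ D \ Y, ω b + ∑ a ∈ Y, ω a = ∑ i ∈ D, ω i :=
    Finset.sum_sdiff hYD
  have hYw : 0 ≤ ∑ a ∈ Y, ω a := hWnn Y hYD
  have hCw : 0 ≤ ∑ b ∈ D \ Y, ω b := hWnn _ (Finset.sdiff_subset)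
  have hmain : (∑ a ∈ Y, π a) * (∑ i ∈ D, ω i) ≤ P * (∑ a ∈ Y, ω a) := by
    nlinarith [hkey, hsplitP, hsplitW]
  have hweight : 3 * ε * (∑ i ∈ D, ω i) ≤ ∑ a ∈ Y, ω a := by
    have hW : 0 ≤ ∑ i ∈ D, ω i := by linarith
    have h1 : 3 * ε * P * (∑ i ∈ D, ω i) ≤ (∑ a ∈ Y, π a) * (∑ i ∈ D, ω i) :=
      mul_le_mul_of_nonneg_right hY1 hW
    have h2 : 3 * ε * P * (∑ i ∈ D, ω i) ≤ P * (∑ a ∈ Y, ω a) := h1.trans hmain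
    nlinarith
  exact ⟨Y, hYD, hY1, hhalf, hweight⟩
end

section
/- Let 0 < ε < 1, let η be a positive integer, and let τ be a positive integer with τ ≥ η·(2·ln(1/ε)/ln(1+ε) + 1). Let b_1 ≤ b_2 ≤ ⋯ ≤ b_k be positive reals such that each b_r equals (1+ε)^{q_r} for some integer q_r, and each value occurs at most η times among b_1, …, b_k. Then b_r ≤ ε²·b_{r+τ} for every index r with 1 ≤ r ≤ k − τ. -/
/-- Claim 15 (clm:large-capacity-diff): if `b_1 ≤ ⋯ ≤ b_k` are powers of `1 + ε`
with each value occurring at most `η` times, and `τ ≥ η·(2·ln(1/ε)/ln(1+ε) + 1)`,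
then entries `τ` positions apart differ by a factor of at least `1/ε²`. -/
theorem stmt5 (ε : ℝ) (hε0 : 0 < ε) (hε1 : ε < 1)
    (η τ : ℕ) (hη : 0 < η) (hτ0 : 0 < τ)
    (hτ : (η : ℝ) * (2 * Real.log (1/ε) / Real.log (1 + ε) + 1) ≤ (τ : ℝ))
    (k : ℕ) (b : Fin k → ℝ) (q : Fin k → ℤ)
    (hb : ∀ r, b r = (1 + ε) ^ (q r))
    (hmono : ∀ r s : Fin k, r ≤ s → b r ≤ b s)
    (hcount : ∀ x : ℝ, (Finset.univ.filter (fun r : Fin k => b r = x)).card ≤ η) :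
    ∀ r s : Fin k, (s : ℕ) = (r : ℕ) + τ → b r ≤ ε ^ 2 * b s := by
  intro r s hrs
  have hbase : (1 : ℝ) < 1 + ε := by linarith
  have hbasepos : (0 : ℝ) < 1 + ε := by linarith
  have hlogpos : 0 < Real.log (1 + ε) := Real.log_pos hbase
  have hrles : r ≤ s := by
    rw [Fin.le_def]; omega
  -- q is monotone on [r, s]
  have hq : ∀ t ∈ Finset.Icc r s, q t ∈ Finset.Icc (q r) (q s) := by
    intro t ht
    rw [Finset.mem_Icc] at ht ⊢
    constructor
    · have := hmono r t ht.1
      rw [hb, hb] at this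
      exact (zpow_le_zpow_iff_right₀ hbase).mp this
    · have := hmono t s ht.2
      rw [hb, hb] at this
      exact (zpow_le_zpow_iff_right₀ hbase).mp this
  -- counting
  have hcard1 : (Finset.Icc r s).card = τ + 1 := by
    rw [Fin.card_Icc]; omega
  have hcard2 : τ + 1 ≤ η * ((q s) - (q r) + 1).toNat := by
    rw [← hcard1]
    calc (Finset.Icc r s).card ≤ η * ((Finset.Icc r s).image q).card := by
          apply Finset.card_le_mul_card_image
          intro a _
          calc ((Finset.Icc r s).filter fun x => q x = a).card
              ≤ (Finset.univ.filter fun t : Fin k => b t = (1+ε) ^ a).card := by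
                apply Finset.card_le_card
                intro t ht
                simp only [Finset.mem_filter] at ht ⊢
                exact ⟨Finset.mem_univ t, by rw [hb, ht.2]⟩
            _ ≤ η := hcount _
      _ ≤ η * ((q s) - (q r) + 1).toNat := by
          apply Nat.mul_le_mul_left
          calc ((Finset.Icc r s).image q).card ≤ (Finset.Icc (q r) (q s)).card :=
                Finset.card_le_card (by
                  intro a ha
                  obtain ⟨t, ht, rfl⟩ := Finset.mem_image.mp ha
                  exact hq t ht)
            _ = ((q s) - (q r) + 1).toNat := by rw [Int.card_Icc]; ring_nf
  -- get real inequality on d := q s - q r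
  have hqrs : q r ≤ q s := by
    have := hmono r s hrles
    rw [hb, hb] at this
    exact (zpow_le_zpow_iff_right₀ hbase).mp this
  set d : ℤ := q s - q r with hd
  have hd0 : 0 ≤ d := by omega
  have hdge : ((τ : ℝ) + 1) ≤ (η : ℝ) * ((d : ℝ) + 1) := by
    have hz : (τ : ℤ) + 1 ≤ (η : ℤ) * (d + 1) := by
      have h2 : ((τ + 1 : ℕ) : ℤ) ≤ ((η * (d + 1).toNat : ℕ) : ℤ) := by exact_mod_cast hcard2
      push_cast [Int.toNat_of_nonneg (show (0:ℤ) ≤ d + 1 by omega)] at h2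
      linarith
    exact_mod_cast hz
  -- d ≥ 2 log(1/ε)/log(1+ε)
  have hηpos : (0 : ℝ) < η := by exact_mod_cast hη
  have hdkey : 2 * Real.log (1/ε) / Real.log (1 + ε) ≤ (d : ℝ) := by
    nlinarith [hdge, hτ]
  -- main log inequality
  have hlog : (d : ℝ) * Real.log (1 + ε) ≥ 2 * Real.log (1/ε) := by
    have := (div_le_iff₀ hlogpos).mp hdkey
    linarith
  have hεpow : (0:ℝ) < ε ^ 2 := by positivity
  have key : (1 + ε) ^ (q r) ≤ ε ^ 2 * (1 + ε) ^ (q s) := by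
    rw [← Real.log_le_log_iff (by positivity) (by positivity)]
    rw [Real.log_mul (ne_of_gt hεpow) (ne_of_gt (zpow_pos hbasepos _)),
      Real.log_zpow, Real.log_zpow, Real.log_pow]
    have h1 : Real.log (1/ε) = - Real.log ε := by
      rw [one_div, Real.log_inv]
    rw [h1] at hlog
    have hdc : (d : ℝ) * Real.log (1 + ε) =
        ((q s : ℝ)) * Real.log (1 + ε) - ((q r : ℝ)) * Real.log (1 + ε) := by
      rw [hd]; push_cast; ring
    push_cast
    linarith [hlog, hdc]
  rw [hb, hb]
  exact key
end

section
/- There exists a constant ε₀ > 0 such that the following holds for every ε ∈ (0, ε₀]. Let I be a finite set of items where each item i has profit p(i) ≥ 0 and weight w(i) ≥ 0, with p(i) = 0 whenever w(i) = 0, and p(i) < 2/3 − 6ε for every i ∈ I. Suppose there exist pairwise disjoint subsets X_1, …, X_m ⊆ I with w(X_j) ≤ 1 and p(X_j) ≥ 1 for every j ∈ {1,…,m}. Then there exist pairwise disjoint subsets I_1, …, I_m ⊆ I with w(I_j) ≤ 1 for every j such that (I_1, …, I_m) is slack and p(I_j) ≥ 2/3 − ε for every j ∈ {1,…,m}. 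-/
universe u

variable {ι : Type u}

/-- An item is heavy if its weight is at least `1 - ε²`. -/
def Heavy (ε : ℝ) (w : ι → ℝ) (i : ι) : Prop := 1 - ε ^ 2 ≤ w i

/-- A solution `(A 1, …, A m)` is slack if for every knapsack with at least three
items exactly one of the following holds: (i) all its items are light and its
weight is at most `1 - ε³`; (ii) it contains a heavy item `h` and
`w(A j) - w h ≤ (1 - ε)(1 - w h)`. -/
def Slack (ε : ℝ) {m : ℕ} (w : ι → ℝ) (A : Fin m → Finset ι) : Prop :=
  ∀ j, 3 ≤ (A j).card →
    Xor' ((∀ i ∈ A j, ¬ Heavy ε w i) ∧ ∑ i ∈ A j, w i ≤ 1 - ε ^ 3)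
      (∃ h ∈ A j, Heavy ε w h ∧ (∑ i ∈ A j, w i) - w h ≤ (1 - ε) * (1 - w h))


lemma greedy {ι : Type u} (p w : ι → ℝ) (B C : ℝ) (hB : 0 ≤ B) (hC : 0 < C) :
    ∀ (T : Finset ι), (∀ i ∈ T, 0 ≤ w i) → (∀ i ∈ T, 0 ≤ p i) → (∀ i ∈ T, p i ≤ B) →
    ∃ S, S ⊆ T ∧ (∑ i ∈ S, w i) ≤ C ∧
      C * ((∑ i ∈ T, p i) - ∑ i ∈ S, p i) ≤
        (max ((∑ i ∈ T, w i) - C) 0) * (∑ i ∈ T, p i) + C * B := by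
  intro T
  induction T using Finset.strongInduction with
  | _ T ih =>
    intro hw hp hpB
    classical
    have hpT : (0:ℝ) ≤ ∑ i ∈ T, p i := Finset.sum_nonneg hp
    by_cases hwT : ∑ i ∈ T, w i ≤ C
    · refine ⟨T, subset_rfl, hwT, ?_⟩
      have h1 : (0:ℝ) ≤ (max ((∑ i ∈ T, w i) - C) 0) * (∑ i ∈ T, p i) :=
        mul_nonneg (le_max_right _ _) hpT
      nlinarith
    · push_neg at hwT
      have hne : (T.filter fun i => 0 < w i).Nonempty := by
        by_contra h
        rw [Finset.not_nonempty_iff_eq_empty, Finset.filter_eq_empty_iff] at h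
        have : ∑ i ∈ T, w i = 0 := Finset.sum_eq_zero (fun i hi => le_antisymm (not_lt.mp (h hi)) (hw i hi))
        linarith
      obtain ⟨i, hiF, hmin⟩ := Finset.exists_min_image _ (fun i => p i / w i) hne
      obtain ⟨hiT, hwi⟩ := Finset.mem_filter.mp hiF
      have hpi : 0 ≤ p i := hp i hiT
      have key : ∀ j ∈ T, p i * w j ≤ p j * w i := by
        intro j hj
        rcases eq_or_lt_of_le (hw j hj) with h0 | h0
        · rw [← h0, mul_zero]
          exact mul_nonneg (hp j hj) hwi.le
        · have h1 := hmin j (Finset.mem_filter.mpr ⟨hj, h0⟩)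
          exact (div_le_div_iff₀ hwi h0).mp h1
      have keysum : p i * ∑ j ∈ T, w j ≤ (∑ j ∈ T, p j) * w i := by
        rw [Finset.mul_sum, Finset.sum_mul]
        exact Finset.sum_le_sum key
      have hpe : ∑ x ∈ T.erase i, p x + p i = ∑ x ∈ T, p x := Finset.sum_erase_add _ _ hiT
      have hwe : ∑ x ∈ T.erase i, w x + w i = ∑ x ∈ T, w x := Finset.sum_erase_add _ _ hiT
      have hmaxT : max ((∑ i ∈ T, w i) - C) 0 = (∑ i ∈ T, w i) - C := max_eq_left (by linarith)
      by_cases h2 : ∑ j ∈ T.erase i, w j ≤ C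
      · refine ⟨T.erase i, Finset.erase_subset _ _, h2, ?_⟩
        have h3 : (∑ x ∈ T, p x) - ∑ x ∈ T.erase i, p x = p i := by linarith
        rw [h3, hmaxT]
        have h4 : 0 ≤ ((∑ i ∈ T, w i) - C) * (∑ i ∈ T, p i) := mul_nonneg (by linarith) hpT
        nlinarith [hpB i hiT]
      · push_neg at h2
        obtain ⟨S, hS, hSw, hSb⟩ := ih (T.erase i) (Finset.erase_ssubset hiT)
          (fun j hj => hw j (Finset.mem_of_mem_erase hj))
          (fun j hj => hp j (Finset.mem_of_mem_erase hj))
          (fun j hj => hpB j (Finset.mem_of_mem_erase hj))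
        refine ⟨S, hS.trans (Finset.erase_subset _ _), hSw, ?_⟩
        rw [hmaxT]
        rw [max_eq_left (by linarith)] at hSb
        have hpS : (0:ℝ) ≤ ∑ x ∈ S, p x := Finset.sum_nonneg (fun j hj => hp j (Finset.mem_of_mem_erase (hS hj)))
        nlinarith [mul_nonneg hpi (show (0:ℝ) ≤ 2*(∑ x ∈ T, w x) - w i - 2*C by linarith)]


set_option maxHeartbeats 2000000 in
lemma per_knapsack {ι : Type u} (ε : ℝ) (hε : 0 < ε) (hε' : ε ≤ 1/100)
    (p w : ι → ℝ) (X : Finset ι)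
    (hp0 : ∀ i ∈ X, 0 ≤ p i) (hw0 : ∀ i ∈ X, 0 ≤ w i)
    (hz : ∀ i ∈ X, w i = 0 → p i = 0)
    (hpm : ∀ i ∈ X, p i < 2/3 - 6*ε)
    (hwX : ∑ i ∈ X, w i ≤ 1) (hpX : 1 ≤ ∑ i ∈ X, p i) :
    ∃ A, A ⊆ X ∧ (∑ i ∈ A, w i) ≤ 1 ∧ (2/3 - ε ≤ ∑ i ∈ A, p i) ∧
      (3 ≤ A.card →
        Xor' ((∀ i ∈ A, ¬ Heavy ε w i) ∧ ∑ i ∈ A, w i ≤ 1 - ε ^ 3)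
          (∃ h ∈ A, Heavy ε w h ∧ (∑ i ∈ A, w i) - w h ≤ (1 - ε) * (1 - w h))) := by
  classical
  by_cases hheavy : ∃ h ∈ X, Heavy ε w h
  · obtain ⟨h, hhX, hh⟩ := hheavy
    have hhw : 1 - ε ^ 2 ≤ w h := hh
    set L := X.erase h with hLdef
    have hsump : ∑ x ∈ L, p x + p h = ∑ x ∈ X, p x := Finset.sum_erase_add _ _ hhX
    have hsumw : ∑ x ∈ L, w x + w h = ∑ x ∈ X, w x := Finset.sum_erase_add _ _ hhX
    have hLsub : L ⊆ X := Finset.erase_subset _ _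
    have hwL : ∑ x ∈ L, w x ≤ ε ^ 2 := by linarith
    have hwLnn : (0:ℝ) ≤ ∑ x ∈ L, w x := Finset.sum_nonneg (fun i hi => hw0 i (hLsub hi))
    have hlight : ∀ i ∈ L, ¬ Heavy ε w i := by
      intro i hiL hcon
      have h1 : w i ≤ ∑ x ∈ L, w x :=
        Finset.single_le_sum (fun j hj => hw0 j (hLsub hj)) hiL
      have h2 : (1:ℝ) - ε ^ 2 ≤ w i := hcon
      nlinarith
    have hph : p h < 2/3 - 6*ε := hpm h hhX
    have hph0 : 0 ≤ p h := hp0 h hhX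
    by_cases c1 : ∃ t ∈ L, 2/3 - ε ≤ p h + p t
    · obtain ⟨t, htL, hpt⟩ := c1
      have hth : t ≠ h := Finset.ne_of_mem_erase htL
      have htX : t ∈ X := hLsub htL
      have hsub : ({h, t} : Finset ι) ⊆ X := by
        intro x hx
        rcases Finset.mem_insert.mp hx with rfl | hx
        · exact hhX
        · rw [Finset.mem_singleton.mp hx]; exact htX
      refine ⟨{h, t}, hsub, ?_, ?_, ?_⟩
      · calc ∑ i ∈ {h, t}, w i ≤ ∑ i ∈ X, w i :=
              Finset.sum_le_sum_of_subset_of_nonneg hsub (fun i hi _ => hw0 i hi)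
          _ ≤ 1 := hwX
      · rw [Finset.sum_pair (Ne.symm hth)]
        linarith
      · intro hcard
        exfalso
        have : ({h, t} : Finset ι).card ≤ 2 := by
          apply le_trans (Finset.card_insert_le _ _)
          simp
        omega
    · push_neg at c1
      by_cases c2 : p h ≤ 1/3 + ε
      · refine ⟨L, hLsub, by nlinarith, by linarith, ?_⟩
        intro _
        left
        refine ⟨⟨hlight, by nlinarith⟩, ?_⟩
        rintro ⟨h', hh', hH, -⟩
        exact hlight h' hh' hH
      · push_neg at c2
        have hpL : 1 - p h ≤ ∑ x ∈ L, p x := by linarith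
        have hpLnn : (0:ℝ) ≤ ∑ x ∈ L, p x := Finset.sum_nonneg (fun i hi => hp0 i (hLsub hi))
        have hLwpos : 0 < ∑ x ∈ L, w x := by
          rcases eq_or_lt_of_le hwLnn with h0 | h0
          · exfalso
            have hz' : ∀ i ∈ L, w i = 0 :=
              (Finset.sum_eq_zero_iff_of_nonneg (fun i hi => hw0 i (hLsub hi))).mp h0.symm
            have : ∑ x ∈ L, p x = 0 :=
              Finset.sum_eq_zero (fun i hi => hz i (hLsub hi) (hz' i hi))
            nlinarith
          · exact h0
        have hwh1 : w h < 1 := by linarith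
        set C := (1 - ε) * (1 - w h) with hCdef
        have hC : 0 < C := by nlinarith
        set B := 2/3 - ε - p h with hBdef
        have hB : 0 ≤ B := by simp only [hBdef]; linarith
        obtain ⟨S, hSL, hSw, hSb⟩ := greedy p w B C hB hC L
          (fun i hi => hw0 i (hLsub hi)) (fun i hi => hp0 i (hLsub hi))
          (fun i hi => le_of_lt (by have := c1 i hi; simp only [hBdef]; linarith))
        have hhS : h ∉ S := fun hc => Finset.notMem_erase h X (hSL hc)
        have hwS : ∑ x ∈ insert h S, w x = w h + ∑ x ∈ S, w x := Finset.sum_insert hhS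
        have hpSins : ∑ x ∈ insert h S, p x = p h + ∑ x ∈ S, p x := Finset.sum_insert hhS
        have hSwnn : (0:ℝ) ≤ ∑ x ∈ S, w x :=
          Finset.sum_nonneg (fun i hi => hw0 i (hLsub (hSL hi)))
        have hDelta : max ((∑ x ∈ L, w x) - C) 0 ≤ 2 * ε * C := by
          apply max_le
          · have h1 : ∑ x ∈ L, w x ≤ 1 - w h := by linarith
            simp only [hCdef]
            nlinarith [mul_nonneg (mul_nonneg hε.le (show (0:ℝ) ≤ 1 - w h by linarith))
              (show (0:ℝ) ≤ 1 - 2*ε by linarith)]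
          · positivity
        have hloss : (∑ x ∈ L, p x) - ∑ x ∈ S, p x ≤ 2 * ε * (∑ x ∈ L, p x) + B := by
          have h1 : (max ((∑ x ∈ L, w x) - C) 0) * (∑ x ∈ L, p x) ≤
              2 * ε * C * (∑ x ∈ L, p x) := mul_le_mul_of_nonneg_right hDelta hpLnn
          have h2 : C * ((∑ x ∈ L, p x) - ∑ x ∈ S, p x) ≤
              C * (2 * ε * (∑ x ∈ L, p x) + B) := by nlinarith
          exact le_of_mul_le_mul_left h2 hC
        refine ⟨insert h S, ?_, ?_, ?_, ?_⟩
        · exact Finset.insert_subset hhX (hSL.trans hLsub)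
        · rw [hwS]
          have : ∑ x ∈ S, w x ≤ (1 - ε) * (1 - w h) := hSw
          nlinarith
        · rw [hpSins]
          have e2 : (1 - 2*ε) * (∑ x ∈ L, p x) - B ≤ ∑ x ∈ S, p x := by nlinarith [hloss]
          have e1 : (1 - 2*ε) * (1 - p h) ≤ (1 - 2*ε) * (∑ x ∈ L, p x) :=
            mul_le_mul_of_nonneg_left hpL (by linarith)
          have e3 : 2*ε*(1/3) ≤ 2*ε*(p h) := by nlinarith
          simp only [hBdef] at e2
          linarith [e1, e2, e3]
        · intro _
          right
          constructor
          · refine ⟨h, Finset.mem_insert_self _ _, hh, ?_⟩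
            rw [hwS]
            simp only [hCdef] at hSw
            linarith
          · rintro ⟨hl, -⟩
            exact hl h (Finset.mem_insert_self _ _) hh
  · push_neg at hheavy
    by_cases l1 : ∑ i ∈ X, w i ≤ 1 - ε ^ 3
    · refine ⟨X, subset_rfl, hwX, by linarith, ?_⟩
      intro _
      left
      refine ⟨⟨hheavy, l1⟩, ?_⟩
      rintro ⟨h', hh', hH, -⟩
      exact hheavy h' hh' hH
    · push_neg at l1
      have hXne : X.Nonempty := by
        rcases X.eq_empty_or_nonempty with rfl | h
        · simp at hpX; linarith
        · exact h
      obtain ⟨t, htX, htmax⟩ := Finset.exists_max_image X p hXne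
      set T := X.erase t with hTdef
      have hTsub : T ⊆ X := Finset.erase_subset _ _
      have hsump : ∑ x ∈ T, p x + p t = ∑ x ∈ X, p x := Finset.sum_erase_add _ _ htX
      have hsumw : ∑ x ∈ T, w x + w t = ∑ x ∈ X, w x := Finset.sum_erase_add _ _ htX
      have hpt0 : 0 ≤ p t := hp0 t htX
      have hptm : p t < 2/3 - 6*ε := hpm t htX
      by_cases l2 : ∃ u ∈ T, 2/3 - ε ≤ p t + p u
      · obtain ⟨u, huT, hpu⟩ := l2
        have hut : u ≠ t := Finset.ne_of_mem_erase huT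
        have huX : u ∈ X := hTsub huT
        have hsub : ({t, u} : Finset ι) ⊆ X := by
          intro x hx
          rcases Finset.mem_insert.mp hx with rfl | hx
          · exact htX
          · rw [Finset.mem_singleton.mp hx]; exact huX
        refine ⟨{t, u}, hsub, ?_, ?_, ?_⟩
        · calc ∑ i ∈ {t, u}, w i ≤ ∑ i ∈ X, w i :=
              Finset.sum_le_sum_of_subset_of_nonneg hsub (fun i hi _ => hw0 i hi)
            _ ≤ 1 := hwX
        · rw [Finset.sum_pair (Ne.symm hut)]
          linarith
        · intro hcard
          exfalso
          have : ({t, u} : Finset ι).card ≤ 2 := by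
            apply le_trans (Finset.card_insert_le _ _)
            simp
          omega
      · push_neg at l2
        set B := min (p t) (1/3 - ε/2) with hBdef
        have hB : 0 ≤ B := le_min hpt0 (by linarith)
        have hBT : ∀ i ∈ T, p i ≤ B := by
          intro i hiT
          have h1 : p i ≤ p t := htmax i (hTsub hiT)
          have h2 := l2 i hiT
          exact le_min h1 (by linarith)
        have hwt : w t < 1 - ε ^ 2 := by
          have := hheavy t htX
          simp only [Heavy, not_le] at this
          exact this
        have hwt0 : 0 ≤ w t := hw0 t htX
        set C := 1 - ε ^ 3 - w t with hCdef
        have hC : 0 < C := by nlinarith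
        obtain ⟨S, hST, hSw, hSb⟩ := greedy p w B C hB hC T
          (fun i hi => hw0 i (hTsub hi)) (fun i hi => hp0 i (hTsub hi)) hBT
        have htS : t ∉ S := fun hc => Finset.notMem_erase t X (hST hc)
        have hwSins : ∑ x ∈ insert t S, w x = w t + ∑ x ∈ S, w x := Finset.sum_insert htS
        have hpSins : ∑ x ∈ insert t S, p x = p t + ∑ x ∈ S, p x := Finset.sum_insert htS
        have hpTnn : (0:ℝ) ≤ ∑ x ∈ T, p x := Finset.sum_nonneg (fun i hi => hp0 i (hTsub hi))
        have hDelta : max ((∑ x ∈ T, w x) - C) 0 ≤ 2 * ε * C := by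
          apply max_le
          · have h1 : ∑ x ∈ T, w x ≤ 1 - w t := by linarith
            simp only [hCdef]
            nlinarith [mul_pos (mul_pos hε hε) hε, mul_pos hε hε]
          · positivity
        have hloss : (∑ x ∈ T, p x) - ∑ x ∈ S, p x ≤ 2 * ε * (∑ x ∈ T, p x) + B := by
          have h1 : (max ((∑ x ∈ T, w x) - C) 0) * (∑ x ∈ T, p x) ≤
              2 * ε * C * (∑ x ∈ T, p x) := mul_le_mul_of_nonneg_right hDelta hpTnn
          have h2 : C * ((∑ x ∈ T, p x) - ∑ x ∈ S, p x) ≤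
              C * (2 * ε * (∑ x ∈ T, p x) + B) := by nlinarith
          exact le_of_mul_le_mul_left h2 hC
        have hAsub : insert t S ⊆ X := Finset.insert_subset htX (hST.trans hTsub)
        have hwA : ∑ x ∈ insert t S, w x ≤ 1 - ε ^ 3 := by
          rw [hwSins]
          simp only [hCdef] at hSw
          linarith
        refine ⟨insert t S, hAsub, by nlinarith, ?_, ?_⟩
        · rw [hpSins]
          have hb1 : B ≤ p t := min_le_left _ _
          have hb2 : B ≤ 1/3 - ε/2 := min_le_right _ _
          have hpT : 1 - p t ≤ ∑ x ∈ T, p x := by linarith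
          have e2 : (1 - 2*ε) * (∑ x ∈ T, p x) - B ≤ ∑ x ∈ S, p x := by nlinarith [hloss]
          have e1 : (1 - 2*ε) * (1 - p t) ≤ (1 - 2*ε) * (∑ x ∈ T, p x) :=
            mul_le_mul_of_nonneg_left hpT (by linarith)
          have t1 : (0:ℝ) ≤ (1 - 2*ε) * (1/3 - ε/2 - B) :=
            mul_nonneg (by linarith) (by linarith)
          have t2 : (0:ℝ) ≤ 2*ε*(p t - B) := mul_nonneg (by linarith) (by linarith)
          have t3 : (0:ℝ) < ε*(1/6 - ε) := mul_pos hε (by linarith)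
          linarith [e1, e2, t1, t2, t3]
        · intro _
          left
          refine ⟨⟨fun i hi => hheavy i (hAsub hi), hwA⟩, ?_⟩
          rintro ⟨h', hh', hH, -⟩
          exact hheavy h' (hAsub hh') hH

/-- Step 1 of Lemma 4.4: for sufficiently small `ε`, any identical-capacity BMKP
instance admitting a feasible solution of value at least 1 (with every item profit
below `2/3 - 6ε`) admits a slack feasible solution of value at least `2/3 - ε`. -/
theorem stmt6 : ∃ ε₀ : ℝ, 0 < ε₀ ∧
    ∀ ε : ℝ, 0 < ε → ε ≤ ε₀ →
    ∀ (ι : Type u) (p w : ι → ℝ) (I : Finset ι) (m : ℕ) (X : Fin m → Finset ι),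
      (∀ i ∈ I, 0 ≤ p i) → (∀ i ∈ I, 0 ≤ w i) →
      (∀ i ∈ I, w i = 0 → p i = 0) →
      (∀ i ∈ I, p i < 2/3 - 6 * ε) →
      (∀ j, X j ⊆ I) → (∀ j j', j ≠ j' → Disjoint (X j) (X j')) →
      (∀ j, ∑ i ∈ X j, w i ≤ 1) → (∀ j, 1 ≤ ∑ i ∈ X j, p i) →
      ∃ A : Fin m → Finset ι,
        (∀ j, A j ⊆ I) ∧ (∀ j j', j ≠ j' → Disjoint (A j) (A j')) ∧
        (∀ j, ∑ i ∈ A j, w i ≤ 1) ∧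
        Slack ε w A ∧
        (∀ j, 2/3 - ε ≤ ∑ i ∈ A j, p i) := by
  refine ⟨1/100, by norm_num, ?_⟩
  intro ε hε hεle ι p w I m X hp0 hw0 hz hpm hXI hXdisj hXw hXp
  choose A hA1 hA2 hA3 hA4 using fun j => per_knapsack ε hε hεle p w (X j)
    (fun i hi => hp0 i (hXI j hi)) (fun i hi => hw0 i (hXI j hi))
    (fun i hi => hz i (hXI j hi)) (fun i hi => hpm i (hXI j hi))
    (hXw j) (hXp j)
  exact ⟨A, fun j => (hA1 j).trans (hXI j),
    fun j j' hjj' => (hXdisj j j' hjj').mono (hA1 j) (hA1 j'),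
    hA2, fun j => hA4 j, hA3⟩
end

section
/- There exists a constant ε₀ > 0 such that the following holds for every ε ∈ (0, ε₀]. Let I be a finite set of items where each item i has profit p(i) ≥ 0 and weight w(i) ≥ 0, with p(i) = 0 whenever w(i) = 0, p(i) < 2/3 − 6ε for every i ∈ I, and p(i) ≥ ε whenever w(i) ≥ 1 − ε² (every heavy item is expensive). Suppose there exist pairwise disjoint subsets X_1, …, X_m ⊆ I with w(X_j) ≤ 1 and p(X_j) ≥ 1 for every j. Then there exist pairwise disjoint subsets I_1, …, I_m ⊆ I with w(I_j) ≤ 1 for every j such that (I_1, …, I_m) is slack, p(I_j) ≥ 2/3 − ε for every j, and (I_1, …, I_m) admits a profile T ⊆ I of heavy items with |T| ≤ 2/ε². -/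
universe u

variable {ι : Type u}

/-- An item is expensive if its profit is at least `ε`. -/
def Expensive (ε : ℝ) (p : ι → ℝ) (i : ι) : Prop := ε ≤ p i

/-- `T` is a profile of the solution `A`: for every knapsack `A j` containing a
critical heavy item `h` (heavy, and `|A j| ≥ 3`), there is `t ∈ T` with
`⌊p t / ε⌋ = ⌊p h / ε⌋` and `w(A j) - w h ≤ (1-ε)(1 - w t) ≤ (1-ε)(1 - w h)`. -/
def IsProfile (ε : ℝ) {m : ℕ} (p w : ι → ℝ) (A : Fin m → Finset ι)
    (T : Finset ι) : Prop :=
  ∀ j : Fin m, ∀ h ∈ A j, Heavy ε w h → 3 ≤ (A j).card →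
    ∃ t ∈ T, ⌊p t / ε⌋ = ⌊p h / ε⌋ ∧
      (∑ i ∈ A j, w i) - w h ≤ (1 - ε) * (1 - w t) ∧
      (1 - ε) * (1 - w t) ≤ (1 - ε) * (1 - w h)

open Finset

private lemma sorted_list_exists {α : Type*} [DecidableEq α] (f : α → ℝ) :
    ∀ (n : ℕ) (J : Finset α), J.card ≤ n →
    ∃ l : List α, l.Nodup ∧ l.toFinset = J ∧ l.Pairwise (fun a b => f a ≤ f b) := by
  intro n
  induction n with
  | zero =>
    intro J hJ
    have : J = ∅ := Finset.card_eq_zero.mp (Nat.le_zero.mp hJ)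
    exact ⟨[], by simp [this]⟩
  | succ n ih =>
    intro J hJ
    rcases J.eq_empty_or_nonempty with rfl | hne
    · exact ⟨[], by simp⟩
    · obtain ⟨a, haJ, hamin⟩ := Finset.exists_min_image J f hne
      obtain ⟨l, hnd, htf, hpw⟩ := ih (J.erase a) (by
        have := Finset.card_erase_of_mem haJ
        omega)
      refine ⟨a :: l, ?_, ?_, ?_⟩
      · refine List.nodup_cons.mpr ⟨?_, hnd⟩
        intro hal
        have : a ∈ J.erase a := htf ▸ List.mem_toFinset.mpr hal
        exact (Finset.notMem_erase a J) this
      · simp only [List.toFinset_cons, htf, Finset.insert_erase haJ]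
      · refine List.pairwise_cons.mpr ⟨?_, hpw⟩
        intro b hbl
        have hb : b ∈ J.erase a := htf ▸ List.mem_toFinset.mpr hbl
        exact hamin b (Finset.mem_of_mem_erase hb)

private lemma floor_eq_abs_lt {x y ε : ℝ} (hε : 0 < ε) (h : ⌊x / ε⌋ = ⌊y / ε⌋) :
    |x - y| < ε := by
  have h1 : x / ε < ⌊x / ε⌋ + 1 := Int.lt_floor_add_one _
  have h2 : (⌊x / ε⌋ : ℝ) ≤ x / ε := Int.floor_le _
  have h3 : y / ε < ⌊y / ε⌋ + 1 := Int.lt_floor_add_one _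
  have h4 : (⌊y / ε⌋ : ℝ) ≤ y / ε := Int.floor_le _
  rw [abs_lt]
  rw [h] at h1 h2
  constructor
  · have hyx : (y - x) / ε < 1 := by rw [sub_div]; linarith
    have := (div_lt_one hε).mp hyx
    linarith
  · have hxy : (x - y) / ε < 1 := by rw [sub_div]; linarith
    have := (div_lt_one hε).mp hxy
    linarith

/-- density selection lemma -/
private lemma lemD (p w : ι → ℝ) :
    ∀ (n : ℕ) (X : Finset ι) (τ c : ℝ), X.card ≤ n →
    (∀ i ∈ X, 0 ≤ p i) → (∀ i ∈ X, 0 ≤ w i) → (∀ i ∈ X, w i = 0 → p i = 0) →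
    (∀ i ∈ X, p i < c) → 0 < τ → τ ≤ ∑ i ∈ X, p i →
    ∃ S ⊆ X, τ ≤ ∑ i ∈ S, p i ∧ (∑ i ∈ S, p i) < τ + c ∧
      (∑ i ∈ S, w i) * (∑ i ∈ X, p i) ≤ (∑ i ∈ S, p i) * (∑ i ∈ X, w i) := by
  classical
  intro n
  induction n with
  | zero =>
    intro X τ c hcard _ _ _ _ hτ hτle
    have : X = ∅ := Finset.card_eq_zero.mp (Nat.le_zero.mp hcard)
    subst this
    simp only [Finset.sum_empty] at hτle
    linarith
  | succ n ih =>
    intro X τ c hcard hp hw hwp hpc hτ hτle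
    -- there is an item with positive weight
    have hpos : ∃ i ∈ X, 0 < w i := by
      by_contra hcon
      push_neg at hcon
      have : ∑ i ∈ X, p i = 0 := Finset.sum_eq_zero (fun i hi => hwp i hi
        (le_antisymm (hcon i hi) (hw i hi)))
      linarith
    -- argmax of density among positive-weight items
    obtain ⟨i₀, hi₀X, hi₀w, hmax⟩ :
        ∃ i₀ ∈ X, 0 < w i₀ ∧ ∀ i ∈ X, p i * w i₀ ≤ p i₀ * w i := by
      obtain ⟨iw, hiwX, hiww⟩ := hpos
      have hne : (X.filter (fun i => 0 < w i)).Nonempty :=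
        ⟨iw, Finset.mem_filter.mpr ⟨hiwX, hiww⟩⟩
      obtain ⟨i₀, hi₀, hmax'⟩ := Finset.exists_max_image _ (fun i => p i / w i) hne
      obtain ⟨hi₀X, hi₀w⟩ := Finset.mem_filter.mp hi₀
      refine ⟨i₀, hi₀X, hi₀w, ?_⟩
      intro i hiX
      by_cases hiw : 0 < w i
      · have := hmax' i (Finset.mem_filter.mpr ⟨hiX, hiw⟩)
        exact (div_le_div_iff₀ hiw hi₀w).mp this
      · have hw0 : w i = 0 := le_antisymm (not_lt.mp hiw) (hw i hiX)
        have hp0 : p i = 0 := hwp i hiX hw0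
        rw [hp0, hw0]
        simp
    by_cases hcase : τ ≤ p i₀
    · refine ⟨{i₀}, Finset.singleton_subset_iff.mpr hi₀X, by simpa using hcase, ?_, ?_⟩
      · have := hpc i₀ hi₀X
        simp only [Finset.sum_singleton]
        linarith
      · simp only [Finset.sum_singleton]
        calc w i₀ * ∑ i ∈ X, p i = ∑ i ∈ X, p i * w i₀ := by
              rw [← Finset.sum_mul]; ring
        _ ≤ ∑ i ∈ X, p i₀ * w i := Finset.sum_le_sum hmax
        _ = p i₀ * ∑ i ∈ X, w i := by rw [Finset.mul_sum]
    · push_neg at hcase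
      set X' := X.erase i₀ with hX'
      have hsum_p : p i₀ + ∑ i ∈ X', p i = ∑ i ∈ X, p i := Finset.add_sum_erase X p hi₀X
      have hsum_w : w i₀ + ∑ i ∈ X', w i = ∑ i ∈ X, w i := Finset.add_sum_erase X w hi₀X
      have hcard' : X'.card ≤ n := by
        have hc2 : X'.card = X.card - 1 := by rw [hX']; exact Finset.card_erase_of_mem hi₀X
        have hpos1 : 0 < X.card := Finset.card_pos.mpr ⟨i₀, hi₀X⟩
        omega
      have hsub : X' ⊆ X := Finset.erase_subset _ _
      obtain ⟨S', hS'sub, h1, h2, h3⟩ := ih X' (τ - p i₀) c hcard'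
        (fun i hi => hp i (hsub hi)) (fun i hi => hw i (hsub hi))
        (fun i hi => hwp i (hsub hi)) (fun i hi => hpc i (hsub hi))
        (by linarith) (by linarith)
      have hi₀S' : i₀ ∉ S' := fun h => (Finset.notMem_erase i₀ X) (hS'sub h)
      refine ⟨insert i₀ S', ?_, ?_, ?_, ?_⟩
      · exact Finset.insert_subset hi₀X (hS'sub.trans hsub)
      · rw [Finset.sum_insert hi₀S']; linarith
      · rw [Finset.sum_insert hi₀S']; linarith
      · rw [Finset.sum_insert hi₀S', Finset.sum_insert hi₀S']
        -- abbreviations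
        set P := ∑ i ∈ X, p i
        set W := ∑ i ∈ X, w i
        set P' := ∑ i ∈ X', p i
        set W' := ∑ i ∈ X', w i
        set a := p i₀
        set b := w i₀
        set ps := ∑ i ∈ S', p i
        set ws := ∑ i ∈ S', w i
        have hd : P * b ≤ a * W := by
          calc P * b = ∑ i ∈ X, p i * b := by rw [← Finset.sum_mul]
          _ ≤ ∑ i ∈ X, a * w i := Finset.sum_le_sum hmax
          _ = a * W := by rw [Finset.mul_sum]
        have hps : ps ≤ P' := Finset.sum_le_sum_of_subset_of_nonneg hS'sub
          (fun i hi _ => hp i (hsub hi))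
        have hP' : 0 < P' := by linarith
        have hPP' : P' = P - a := by linarith
        have hWW' : W' = W - b := by linarith
        have key : (b + ws) * P * P' ≤ (a + ps) * W * P' := by
          have hh1 : 0 ≤ ((P - a) - ps) * (a * W - P * b) :=
            mul_nonneg (by linarith) (by linarith)
          have hh2 : 0 ≤ P * (ps * (W - b) - ws * (P - a)) := by
            have hP : 0 ≤ P := by linarith
            have h3' : ws * (P - a) ≤ ps * (W - b) := by rw [← hPP', ← hWW']; exact h3
            exact mul_nonneg hP (by linarith)
          rw [hPP']
          nlinarith [hh1, hh2]
        exact le_of_mul_le_mul_right key hP'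
/-- Pair selection: choose a light sub-bundle from the pool `L` (the lights of bag `b`)
to complete the heavy item of bag `a`. -/
private lemma pairSelCore (p w : ι → ℝ) (L : Finset ι) (pa pb ε : ℝ)
    (hε : 0 < ε) (hεb : ε ≤ 1/100)
    (hp : ∀ i ∈ L, 0 ≤ p i) (hw : ∀ i ∈ L, 0 ≤ w i) (hwp : ∀ i ∈ L, w i = 0 → p i = 0)
    (hsmall : ∀ x ∈ L, p x < 2/3 - ε - pb)
    (hL : 1 - pb ≤ ∑ i ∈ L, p i)
    (hpa1 : 1/3 + ε ≤ pa) (hpa2 : pa < 2/3 - 6*ε)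
    (hab : |pa - pb| < ε) :
    ∃ S ⊆ L, (2/3 - ε - pa ≤ ∑ i ∈ S, p i) ∧
      (2/3 - ε ≤ (1 - pa) + ((∑ i ∈ L, p i) - ∑ i ∈ S, p i)) ∧
      (∑ i ∈ S, w i ≤ ∑ i ∈ L, w i) ∧
      (S.card ≤ 1 ∨ ∑ i ∈ S, w i ≤ (1 - 2*ε) * ∑ i ∈ L, w i) := by
  classical
  obtain ⟨hab1, hab2⟩ := abs_lt.mp hab
  have hτpos : 0 < 2/3 - ε - pa := by linarith
  by_cases hesc : ∃ x ∈ L, 2/3 - ε - pa ≤ p x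
  · obtain ⟨x, hxL, hxp⟩ := hesc
    refine ⟨{x}, Finset.singleton_subset_iff.mpr hxL, by simpa using hxp, ?_, ?_, ?_⟩
    · have := hsmall x hxL
      simp only [Finset.sum_singleton]
      linarith
    · simp only [Finset.sum_singleton]
      exact Finset.single_le_sum hw hxL
    · left; simp
  · push_neg at hesc
    have hτle : 2/3 - ε - pa ≤ ∑ i ∈ L, p i := by linarith
    obtain ⟨S, hSsub, h1, h2, h3⟩ := lemD p w L.card L (2/3 - ε - pa) (2/3 - ε - pa) le_rfl
      hp hw hwp hesc hτpos hτle
    have hwS : ∑ i ∈ S, w i ≤ ∑ i ∈ L, w i :=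
      Finset.sum_le_sum_of_subset_of_nonneg hSsub (fun i hi _ => hw i hi)
    have hPL : 0 < ∑ i ∈ L, p i := by linarith
    have hWL : 0 ≤ ∑ i ∈ L, w i := Finset.sum_nonneg hw
    refine ⟨S, hSsub, h1, ?_, hwS, Or.inr ?_⟩
    · -- leftover bound
      linarith
    · -- density bound
      have h2τ : ∑ i ∈ S, p i ≤ (1 - 2*ε) * ∑ i ∈ L, p i := by
        have hstep : 2 * (2/3 - ε - pa) ≤ (1 - 2*ε) * ((2/3 - ε - pa) + 1/3) := by
          nlinarith
        have hstep2 : (2/3 - ε - pa) + 1/3 ≤ 1 - pb := by linarith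
        have : (1 - 2*ε) * ((2/3 - ε - pa) + 1/3) ≤ (1 - 2*ε) * ∑ i ∈ L, p i := by
          apply mul_le_mul_of_nonneg_left _ (by linarith)
          linarith
        linarith
      have := h3
      have hchain : (∑ i ∈ S, w i) * (∑ i ∈ L, p i) ≤
          ((1 - 2*ε) * ∑ i ∈ L, w i) * (∑ i ∈ L, p i) := by
        calc (∑ i ∈ S, w i) * (∑ i ∈ L, p i) ≤ (∑ i ∈ S, p i) * (∑ i ∈ L, w i) := h3
        _ ≤ ((1 - 2*ε) * ∑ i ∈ L, p i) * (∑ i ∈ L, w i) :=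
            mul_le_mul_of_nonneg_right h2τ hWL
        _ = ((1 - 2*ε) * ∑ i ∈ L, w i) * (∑ i ∈ L, p i) := by ring
      exact le_of_mul_le_mul_right hchain hPL

/-- Claim C : selection for an all-light bag of profit at least 1. -/
private lemma claimC (p w : ι → ℝ) (ε : ℝ) (hε : 0 < ε) (hεb : ε ≤ 1/100) (Y : Finset ι)
    (hp : ∀ i ∈ Y, 0 ≤ p i) (hw : ∀ i ∈ Y, 0 ≤ w i) (hwp : ∀ i ∈ Y, w i = 0 → p i = 0)
    (hub : ∀ i ∈ Y, p i < 2/3 - 6*ε)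
    (hpY : 1 ≤ ∑ i ∈ Y, p i) (hwY : ∑ i ∈ Y, w i ≤ 1)
    (hlight : ∀ i ∈ Y, w i < 1 - ε^2) :
    ∃ S ⊆ Y, (2/3 - ε ≤ ∑ i ∈ S, p i) ∧ (S.card ≤ 2 ∨ ∑ i ∈ S, w i ≤ 1 - ε^3) := by
  classical
  set B := Y.filter (fun i => 1/3 - ε/2 ≤ p i) with hBdef
  by_cases hB2 : 1 < B.card
  · obtain ⟨x, hx, y, hy, hxy⟩ := Finset.one_lt_card.mp hB2
    obtain ⟨hxY, hxp⟩ := Finset.mem_filter.mp hx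
    obtain ⟨hyY, hyp⟩ := Finset.mem_filter.mp hy
    refine ⟨{x, y}, ?_, ?_, Or.inl ?_⟩
    · intro i hi
      rcases Finset.mem_insert.mp hi with rfl | hi
      · exact hxY
      · rw [Finset.mem_singleton.mp hi]; exact hyY
    · rw [Finset.sum_pair hxy]; linarith
    · exact (Finset.card_insert_le _ _).trans (by simp)
  · push_neg at hB2
    rcases Finset.eq_empty_or_nonempty B with hBe | hBne
    · -- no big item
      have hsm : ∀ i ∈ Y, p i < 1/3 - ε/2 := by
        intro i hi
        by_contra hcon
        push_neg at hcon
        have : i ∈ B := Finset.mem_filter.mpr ⟨hi, hcon⟩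
        simp [hBe] at this
      obtain ⟨S, hSsub, h1, h2, h3⟩ := lemD p w Y.card Y (2/3 - ε) (1/3 - ε/2) le_rfl
        hp hw hwp hsm (by linarith) (by linarith)
      refine ⟨S, hSsub, h1, Or.inr ?_⟩
      have hwS : 0 ≤ ∑ i ∈ S, w i := Finset.sum_nonneg (fun i hi => hw i (hSsub hi))
      have hpS : 0 ≤ ∑ i ∈ S, p i := Finset.sum_nonneg (fun i hi => hp i (hSsub hi))
      have c1 : ∑ i ∈ S, w i ≤ (∑ i ∈ S, w i) * (∑ i ∈ Y, p i) :=
        le_mul_of_one_le_right hwS hpY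
      have c2 : (∑ i ∈ S, p i) * (∑ i ∈ Y, w i) ≤ ∑ i ∈ S, p i := by
        nlinarith
      have hε2 : ε^2 ≤ 1 := by nlinarith
      have hε3 : ε^3 ≤ ε := by nlinarith [mul_le_mul_of_nonneg_left hε2 hε.le]
      linarith
    · -- exactly one big item b
      obtain ⟨b, hbB⟩ := hBne
      have hBb : B = {b} := by
        apply Finset.eq_singleton_iff_unique_mem.mpr
        exact ⟨hbB, fun x hx => Finset.card_le_one.mp hB2 x hx b hbB⟩
      obtain ⟨hbY, hbp⟩ := Finset.mem_filter.mp hbB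
      have hsm : ∀ i ∈ Y.erase b, p i < 1/3 - ε/2 := by
        intro i hi
        obtain ⟨hib, hiY⟩ := Finset.mem_erase.mp hi
        by_contra hcon
        push_neg at hcon
        have : i ∈ B := Finset.mem_filter.mpr ⟨hiY, hcon⟩
        rw [hBb, Finset.mem_singleton] at this
        exact hib this
      have hsub' : Y.erase b ⊆ Y := Finset.erase_subset _ _
      have hsum_p : p b + ∑ i ∈ Y.erase b, p i = ∑ i ∈ Y, p i := Finset.add_sum_erase Y p hbY
      have hsum_w : w b + ∑ i ∈ Y.erase b, w i = ∑ i ∈ Y, w i := Finset.add_sum_erase Y w hbY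
      have hbub := hub b hbY
      have hτpos : 0 < 2/3 - ε - p b := by linarith
      have hτle : 2/3 - ε - p b ≤ ∑ i ∈ Y.erase b, p i := by linarith
      obtain ⟨S', hS'sub, h1, h2, h3⟩ := lemD p w (Y.erase b).card (Y.erase b)
        (2/3 - ε - p b) (1/3 - ε/2) le_rfl
        (fun i hi => hp i (hsub' hi)) (fun i hi => hw i (hsub' hi))
        (fun i hi => hwp i (hsub' hi)) hsm hτpos hτle
      have hbS' : b ∉ S' := fun h => (Finset.notMem_erase b Y) (hS'sub h)
      set P' := ∑ i ∈ Y.erase b, p i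
      set W' := ∑ i ∈ Y.erase b, w i
      set ps := ∑ i ∈ S', p i
      set ws := ∑ i ∈ S', w i
      have hP'pos : 0 < P' := by linarith
      have hW'ub : W' ≤ 1 - w b := by linarith
      have hW'nn : 0 ≤ W' := Finset.sum_nonneg (fun i hi => hw i (hsub' hi))
      have hratio : ps ≤ (1 - ε) * P' := by
        have hP'lb : 2/3 - ε - p b + 1/3 + ε ≤ P' := by linarith
        have hτub : 2/3 - ε - p b ≤ 1/3 - ε/2 := by linarith
        nlinarith
      have hwb : 0 ≤ w b := hw b hbY
      have hws : ws ≤ (1 - ε) * (1 - w b) := by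
        have hc : ws * P' ≤ ((1 - ε) * (1 - w b)) * P' := by
          calc ws * P' ≤ ps * W' := h3
          _ ≤ ((1 - ε) * P') * W' := mul_le_mul_of_nonneg_right hratio hW'nn
          _ ≤ ((1 - ε) * P') * (1 - w b) := by
              apply mul_le_mul_of_nonneg_left hW'ub
              nlinarith
          _ = ((1 - ε) * (1 - w b)) * P' := by ring
        exact le_of_mul_le_mul_right hc hP'pos
      refine ⟨insert b S', Finset.insert_subset hbY (hS'sub.trans hsub'), ?_, Or.inr ?_⟩
      · rw [Finset.sum_insert hbS']; linarith
      · rw [Finset.sum_insert hbS']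
        have hblight := hlight b hbY
        nlinarith
/-- The half-split matching on a finite set sorted by a real key. -/
private lemma exists_matching {α : Type*} [DecidableEq α] (f : α → ℝ) (J : Finset α)
    (hne : J.Nonempty) :
    ∃ (σ : α → α) (t : α) (isA : α → Prop), t ∈ J ∧
      (∀ j ∈ J, σ j ∈ J) ∧ (∀ j ∈ J, σ (σ j) = j) ∧
      (∀ j ∈ J, isA j → f (σ j) ≤ f t ∧ f t ≤ f j) ∧
      (∀ j ∈ J, isA j → σ j ≠ j → ¬ isA (σ j)) ∧
      (∀ j ∈ J, ¬ isA j → isA (σ j) ∧ σ j ≠ j) := by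
  classical
  obtain ⟨l, hnd, htf, hpw⟩ := sorted_list_exists f J.card J le_rfl
  have hmem : ∀ a, a ∈ l ↔ a ∈ J := by
    intro a; rw [← htf, List.mem_toFinset]
  set d := hne.choose with hd
  have hnpos : 0 < l.length := by
    obtain ⟨a, haJ⟩ := hne
    have : a ∈ l := (hmem a).mpr haJ
    exact List.length_pos_iff.mpr (List.ne_nil_of_mem this)
  set g : ℕ → α := fun i => l.getD i d with hg
  have hgd : ∀ i (_ : i < l.length), g i = l[i]'(by omega) := by
    intro i hi
    simp only [hg, List.getD_eq_getElem?_getD, List.getElem?_eq_getElem hi]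
    rfl
  have hgJ : ∀ i (_ : i < l.length), g i ∈ J := by
    intro i hi
    rw [hgd i hi]
    exact (hmem _).mp (List.getElem_mem _)
  have hmono : ∀ i j, i ≤ j → j < l.length → f (g i) ≤ f (g j) := by
    intro i j hij hj
    rcases Nat.lt_or_ge i j with h | h
    · rw [hgd i (by omega), hgd j hj]
      exact List.pairwise_iff_getElem.mp hpw i j (by omega) (by omega) h
    · have : i = j := by omega
      subst this
      exact le_refl _
  have hidx : ∀ a ∈ J, l.idxOf a < l.length := by
    intro a ha
    exact List.idxOf_lt_length_iff.mpr ((hmem a).mpr ha)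
  have hgetidx : ∀ a ∈ J, g (l.idxOf a) = a := by
    intro a ha
    rw [hgd _ (hidx a ha)]
    exact List.getElem_idxOf (hidx a ha)
  have hinj : ∀ i j, i < l.length → j < l.length → g i = g j → i = j := by
    intro i j hi hj hgij
    rw [hgd i hi, hgd j hj] at hgij
    exact (List.Nodup.getElem_inj_iff hnd).mp hgij
  have hidxget : ∀ i (_ : i < l.length), l.idxOf (g i) = i := by
    intro i hi
    have h1 := hgetidx (g i) (hgJ i hi)
    exact hinj _ _ (hidx (g i) (hgJ i hi)) hi h1
  refine ⟨fun a => if a ∈ J then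
      (if l.idxOf a < l.length / 2 then g (l.length - l.length / 2 + l.idxOf a)
       else if l.length - l.length / 2 ≤ l.idxOf a then
         g (l.idxOf a - (l.length - l.length / 2)) else a) else a,
    g (l.length / 2), fun a => ¬ (l.idxOf a < l.length / 2),
    hgJ _ (by omega), ?_, ?_, ?_, ?_, ?_⟩
  · -- σ maps J to J
    intro j hj
    have hq := hidx j hj
    simp only [if_pos hj]
    by_cases h1 : l.idxOf j < l.length / 2
    · rw [if_pos h1]; exact hgJ _ (by omega)
    · rw [if_neg h1]
      by_cases h2 : l.length - l.length / 2 ≤ l.idxOf j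
      · rw [if_pos h2]; exact hgJ _ (by omega)
      · rw [if_neg h2]; exact hj
  · -- involution
    intro j hj
    have hq := hidx j hj
    simp only [if_pos hj]
    by_cases h1 : l.idxOf j < l.length / 2
    · rw [if_pos h1]
      have hlt : l.length - l.length / 2 + l.idxOf j < l.length := by omega
      have hJ' := hgJ _ hlt
      have hidx' := hidxget _ hlt
      rw [if_pos hJ', hidx']
      rw [if_neg (by omega), if_pos (by omega)]
      have heq : l.length - l.length / 2 + l.idxOf j - (l.length - l.length / 2) =
          l.idxOf j := by omega
      rw [heq]
      exact hgetidx j hj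
    · rw [if_neg h1]
      by_cases h2 : l.length - l.length / 2 ≤ l.idxOf j
      · rw [if_pos h2]
        have hlt : l.idxOf j - (l.length - l.length / 2) < l.length := by omega
        have hJ' := hgJ _ hlt
        have hidx' := hidxget _ hlt
        rw [if_pos hJ', hidx', if_pos (by omega)]
        have heq : l.length - l.length / 2 + (l.idxOf j - (l.length - l.length / 2)) =
            l.idxOf j := by omega
        rw [heq]
        exact hgetidx j hj
      · rw [if_neg h2, if_pos hj, if_neg h1, if_neg h2]
  · -- f inequalities for A-side
    intro j hj hA
    have hq := hidx j hj
    simp only [if_pos hj, if_neg hA]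
    by_cases h2 : l.length - l.length / 2 ≤ l.idxOf j
    · rw [if_pos h2]
      constructor
      · exact hmono _ (l.length / 2) (by omega) (by omega)
      · have h6 := hmono (l.length / 2) (l.idxOf j) (by omega) hq
        rwa [hgetidx j hj] at h6
    · rw [if_neg h2]
      have hqk : l.idxOf j = l.length / 2 := by omega
      have hjt : j = g (l.length / 2) := by rw [← hqk]; exact (hgetidx j hj).symm
      rw [← hjt]
      exact ⟨le_refl _, le_refl _⟩
  · -- A-side partner is B-side
    intro j hj hA hne'
    have hq := hidx j hj
    simp only [if_pos hj, if_neg hA] at hne' ⊢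
    by_cases h2 : l.length - l.length / 2 ≤ l.idxOf j
    · rw [if_pos h2] at hne' ⊢
      have hlt : l.idxOf j - (l.length - l.length / 2) < l.length := by omega
      rw [hidxget _ hlt]
      omega
    · rw [if_neg h2] at hne'
      exact absurd rfl hne'
  · -- B-side: partner is A-side and differs
    intro j hj hB
    have hq := hidx j hj
    rw [not_not] at hB
    simp only [if_pos hj, if_pos hB]
    have hlt : l.length - l.length / 2 + l.idxOf j < l.length := by omega
    constructor
    · rw [hidxget _ hlt]
      omega
    · intro hcon
      have h5 := hidxget _ hlt
      rw [hcon] at h5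
      omega

set_option maxHeartbeats 4000000 in
/-- Lemma 4.4: for sufficiently small `ε`, any identical-capacity BMKP instance
admitting a feasible solution of value at least 1 admits a slack feasible solution
of value at least `2/3 - ε` together with a profile `T` of heavy items with
`|T| ≤ 2/ε²`. -/
theorem stmt7 : ∃ ε₀ : ℝ, 0 < ε₀ ∧
    ∀ ε : ℝ, 0 < ε → ε ≤ ε₀ →
    ∀ (ι : Type u) (p w : ι → ℝ) (I : Finset ι) (m : ℕ) (X : Fin m → Finset ι),
      (∀ i ∈ I, 0 ≤ p i) → (∀ i ∈ I, 0 ≤ w i) →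
      (∀ i ∈ I, w i = 0 → p i = 0) →
      (∀ i ∈ I, p i < 2/3 - 6 * ε) →
      (∀ i ∈ I, Heavy ε w i → Expensive ε p i) →
      (∀ j, X j ⊆ I) → (∀ j j', j ≠ j' → Disjoint (X j) (X j')) →
      (∀ j, ∑ i ∈ X j, w i ≤ 1) → (∀ j, 1 ≤ ∑ i ∈ X j, p i) →
      ∃ A : Fin m → Finset ι,
        (∀ j, A j ⊆ I) ∧ (∀ j j', j ≠ j' → Disjoint (A j) (A j')) ∧
        (∀ j, ∑ i ∈ A j, w i ≤ 1) ∧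
        Slack ε w A ∧
        (∀ j, 2/3 - ε ≤ ∑ i ∈ A j, p i) ∧
        ∃ T ⊆ I, (∀ t ∈ T, Heavy ε w t) ∧ IsProfile ε p w A T ∧
          (T.card : ℝ) ≤ 2 / ε ^ 2 := by
  classical
  refine ⟨1/100, by norm_num, ?_⟩
  intro ε hε hεb ι p w I m X hpI hwI hwpI hubI hheI hXI hXd hXw hXp
  rcases Nat.eq_zero_or_pos m with hm0 | hm
  · subst hm0
    refine ⟨fun j => j.elim0, fun j => j.elim0, fun j => j.elim0, fun j => j.elim0,
      fun j => j.elim0, fun j => j.elim0, ∅, Finset.empty_subset _, by simp, fun j => j.elim0, ?_⟩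
    simp only [Finset.card_empty, Nat.cast_zero]
    positivity
  -- basic numeric facts
  have hε1 : ε ≤ 1 := by linarith
  have hε2 : ε^2 ≤ ε := by nlinarith
  have hε3 : ε^3 ≤ ε^2 := by nlinarith
  have hε2b : ε^2 ≤ 1/10000 := by nlinarith
  -- bags are nonempty
  have hXne : ∀ j, (X j).Nonempty := by
    intro j
    rcases Finset.eq_empty_or_nonempty (X j) with h | h
    · exfalso
      have := hXp j
      rw [h, Finset.sum_empty] at this
      linarith
    · exact h
  obtain ⟨i0, hi0⟩ := hXne ⟨0, hm⟩
  have hpX : ∀ j, ∀ x ∈ X j, 0 ≤ p x := fun j x hx => hpI x (hXI j hx)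
  have hwX : ∀ j, ∀ x ∈ X j, 0 ≤ w x := fun j x hx => hwI x (hXI j hx)
  have hwpX : ∀ j, ∀ x ∈ X j, w x = 0 → p x = 0 := fun j x hx => hwpI x (hXI j hx)
  have hubX : ∀ j, ∀ x ∈ X j, p x < 2/3 - 6*ε := fun j x hx => hubI x (hXI j hx)
  have hw1 : ∀ j, ∀ x ∈ X j, w x ≤ 1 := by
    intro j x hx
    have h1 : w x ≤ ∑ i ∈ X j, w i := Finset.single_le_sum (hwX j) hx
    linarith [hXw j]
  -- choice of heavy item
  have hhex : ∀ j : Fin m, ∃ y : ι, (∃ x ∈ X j, Heavy ε w x) → y ∈ X j ∧ Heavy ε w y := by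
    intro j
    by_cases h : ∃ x ∈ X j, Heavy ε w x
    · obtain ⟨x, hx1, hx2⟩ := h
      exact ⟨x, fun _ => ⟨hx1, hx2⟩⟩
    · exact ⟨i0, fun hcon => absurd hcon h⟩
  choose hh hhs using hhex
  -- at most one heavy item per bag
  have huniq : ∀ j, ∀ x ∈ (X j).erase (hh j), ¬ Heavy ε w x := by
    intro j x hx hxH
    obtain ⟨hxne, hxX⟩ := Finset.mem_erase.mp hx
    obtain ⟨hhX, hhH⟩ := hhs j ⟨x, hxX, hxH⟩
    have hsum : w x + w (hh j) ≤ ∑ i ∈ X j, w i := by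
      have hsub : ({x, hh j} : Finset ι) ⊆ X j := by
        intro y hy
        rcases Finset.mem_insert.mp hy with rfl | hy
        · exact hxX
        · rw [Finset.mem_singleton.mp hy]; exact hhX
      calc w x + w (hh j) = ∑ i ∈ ({x, hh j} : Finset ι), w i := (Finset.sum_pair hxne).symm
      _ ≤ ∑ i ∈ X j, w i := Finset.sum_le_sum_of_subset_of_nonneg hsub
          (fun i hi _ => hwX j i hi)
    have h1 : (1:ℝ) - ε^2 ≤ w x := hxH
    have h2 : (1:ℝ) - ε^2 ≤ w (hh j) := hhH
    have h3 := hXw j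
    nlinarith
  set L : Fin m → Finset ι := fun j => (X j).erase (hh j) with hLdef
  have hLsubX : ∀ j, L j ⊆ X j := fun j => Finset.erase_subset _ _
  have hLlight : ∀ j, ∀ x ∈ L j, ¬ Heavy ε w x := huniq
  have hLlight' : ∀ j, ∀ x ∈ L j, w x < 1 - ε^2 := by
    intro j x hx
    have h1 := hLlight j x hx
    simp only [Heavy, not_le] at h1
    exact h1
  set Hv : Fin m → Prop := fun j => ∃ x ∈ X j, Heavy ε w x with hHvdef
  have hhmem : ∀ j, Hv j → hh j ∈ X j := fun j h => (hhs j h).1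
  have hhheavy : ∀ j, Hv j → Heavy ε w (hh j) := fun j h => (hhs j h).2
  have hhwlb : ∀ j, Hv j → 1 - ε^2 ≤ w (hh j) := fun j h => hhheavy j h
  have hsplitp : ∀ j, Hv j → p (hh j) + ∑ i ∈ L j, p i = ∑ i ∈ X j, p i := by
    intro j h
    exact Finset.add_sum_erase (X j) p (hhmem j h)
  have hsplitw : ∀ j, Hv j → w (hh j) + ∑ i ∈ L j, w i = ∑ i ∈ X j, w i := by
    intro j h
    exact Finset.add_sum_erase (X j) w (hhmem j h)
  have hcapnn : ∀ j, Hv j → 0 ≤ 1 - w (hh j) := by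
    intro j h
    have := hw1 j (hh j) (hhmem j h)
    linarith
  have hwL : ∀ j, Hv j → ∑ i ∈ L j, w i ≤ 1 - w (hh j) := by
    intro j h
    have := hsplitw j h
    have := hXw j
    linarith
  have hwLε : ∀ j, Hv j → ∑ i ∈ L j, w i ≤ ε^2 := by
    intro j h
    have h1 := hwL j h
    have h2 := hhwlb j h
    linarith
  have hpLlb : ∀ j, Hv j → 1 - p (hh j) ≤ ∑ i ∈ L j, p i := by
    intro j h
    have := hsplitp j h
    have := hXp j
    linarith
  have hwLnn : ∀ j, 0 ≤ ∑ i ∈ L j, w i :=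
    fun j => Finset.sum_nonneg (fun i hi => hwX j i (hLsubX j hi))
  -- categories
  set c1 : Fin m → Prop := fun j => ¬ Hv j with hc1def
  set c2 : Fin m → Prop := fun j => Hv j ∧ 2/3 - ε ≤ ∑ i ∈ L j, p i with hc2def
  set c3 : Fin m → Prop := fun j => Hv j ∧ (∑ i ∈ L j, p i < 2/3 - ε) ∧
      ∃ x ∈ L j, 2/3 - ε - p (hh j) ≤ p x with hc3def
  set c4 : Fin m → Prop := fun j => Hv j ∧ (∑ i ∈ L j, p i < 2/3 - ε) ∧
      ∀ x ∈ L j, p x < 2/3 - ε - p (hh j) with hc4def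
  have hcases : ∀ j, c1 j ∨ c2 j ∨ c3 j ∨ c4 j := by
    intro j
    by_cases h1 : Hv j
    · by_cases h2 : 2/3 - ε ≤ ∑ i ∈ L j, p i
      · exact Or.inr (Or.inl ⟨h1, h2⟩)
      · push_neg at h2
        by_cases h3 : ∃ x ∈ L j, 2/3 - ε - p (hh j) ≤ p x
        · exact Or.inr (Or.inr (Or.inl ⟨h1, h2, h3⟩))
        · push_neg at h3
          exact Or.inr (Or.inr (Or.inr ⟨h1, h2, h3⟩))
    · exact Or.inl h1
  have hc4pa : ∀ j, c4 j → 1/3 + ε ≤ p (hh j) ∧ p (hh j) < 2/3 - 6*ε := by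
    intro j hj
    obtain ⟨h1, h2, _⟩ := hj
    constructor
    · have := hsplitp j h1
      have := hXp j
      linarith
    · exact hubX j (hh j) (hhmem j h1)
  set cls : Fin m → ℤ := fun j => ⌊p (hh j) / ε⌋ with hclsdef
  -- selection for category 1 via claimC
  have hCCex : ∀ j, ∃ S : Finset ι, c1 j → (S ⊆ X j ∧ 2/3 - ε ≤ ∑ i ∈ S, p i ∧
      (S.card ≤ 2 ∨ ∑ i ∈ S, w i ≤ 1 - ε^3)) := by
    intro j
    by_cases h : c1 j
    · have hlight : ∀ i ∈ X j, w i < 1 - ε^2 := by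
        intro i hi
        by_contra hcon
        push_neg at hcon
        exact h ⟨i, hi, hcon⟩
      obtain ⟨S, h1, h2, h3⟩ := claimC p w ε hε hεb (X j) (hpX j) (hwX j) (hwpX j)
        (hubX j) (hXp j) (hXw j) hlight
      exact ⟨S, fun _ => ⟨h1, h2, h3⟩⟩
    · exact ⟨∅, fun hcon => absurd hcon h⟩
  choose CC CCs using hCCex
  -- escape item for category 3
  have hescx : ∀ j, ∃ x : ι, c3 j → (x ∈ L j ∧ 2/3 - ε - p (hh j) ≤ p x) := by
    intro j
    by_cases h : c3 j
    · obtain ⟨-, -, x, hx1, hx2⟩ := h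
      exact ⟨x, fun _ => ⟨hx1, hx2⟩⟩
    · exact ⟨i0, fun hcon => absurd hcon h⟩
  choose esc escs using hescx
  -- pair selections for category 4
  have hPSex : ∀ a b : Fin m, ∃ S : Finset ι,
      (c4 a ∧ c4 b ∧ cls a = cls b) →
      (S ⊆ L b ∧ (2/3 - ε - p (hh a) ≤ ∑ i ∈ S, p i) ∧
       (2/3 - ε ≤ (1 - p (hh a)) + ((∑ i ∈ L b, p i) - ∑ i ∈ S, p i)) ∧
       (∑ i ∈ S, w i ≤ ∑ i ∈ L b, w i) ∧
       (S.card ≤ 1 ∨ ∑ i ∈ S, w i ≤ (1 - 2*ε) * ∑ i ∈ L b, w i)) := by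
    intro a b
    by_cases h : c4 a ∧ c4 b ∧ cls a = cls b
    · obtain ⟨h4a, h4b, hcls⟩ := h
      have hab : |p (hh a) - p (hh b)| < ε := floor_eq_abs_lt hε hcls
      obtain ⟨hpa1, hpa2⟩ := hc4pa a h4a
      obtain ⟨S, hs0, hs1, hs2, hs3, hs4⟩ := pairSelCore p w (L b) (p (hh a)) (p (hh b)) ε
        hε hεb (fun i hi => hpX b i (hLsubX b hi)) (fun i hi => hwX b i (hLsubX b hi))
        (fun i hi => hwpX b i (hLsubX b hi)) h4b.2.2 (hpLlb b h4b.1) hpa1 hpa2 hab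
      exact ⟨S, fun _ => ⟨hs0, hs1, hs2, hs3, hs4⟩⟩
    · exact ⟨∅, fun hcon => absurd hcon h⟩
  choose PS PSs using hPSex
  -- per-class matching
  set C4 : Finset (Fin m) := Finset.univ.filter c4 with hC4def
  set Jc : ℤ → Finset (Fin m) := fun c => C4.filter (fun j => cls j = c) with hJcdef
  have hmex : ∀ c : ℤ, ∃ (σ : Fin m → Fin m) (t : Fin m) (isA : Fin m → Prop),
      (Jc c).Nonempty →
      (t ∈ Jc c ∧ (∀ j ∈ Jc c, σ j ∈ Jc c) ∧ (∀ j ∈ Jc c, σ (σ j) = j) ∧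
       (∀ j ∈ Jc c, isA j → (1 - w (hh (σ j))) ≤ (1 - w (hh t)) ∧
          (1 - w (hh t)) ≤ (1 - w (hh j))) ∧
       (∀ j ∈ Jc c, isA j → σ j ≠ j → ¬ isA (σ j)) ∧
       (∀ j ∈ Jc c, ¬ isA j → isA (σ j) ∧ σ j ≠ j)) := by
    intro c
    by_cases h : (Jc c).Nonempty
    · obtain ⟨σ, t, isA, hb1, hb2, hb3, hb4, hb5, hb6⟩ :=
        exists_matching (fun j => 1 - w (hh j)) (Jc c) h
      exact ⟨σ, t, isA, fun _ => ⟨hb1, hb2, hb3, hb4, hb5, hb6⟩⟩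
    · exact ⟨id, ⟨0, hm⟩, fun _ => True, fun hcon => absurd hcon h⟩
  choose σf tf isAf hms using hmex
  set σg : Fin m → Fin m := fun j => σf (cls j) j with hσgdef
  -- membership facts
  have hJmem : ∀ c j, j ∈ Jc c → c4 j ∧ cls j = c := by
    intro c j hj
    have := Finset.mem_filter.mp hj
    exact ⟨(Finset.mem_filter.mp this.1).2, this.2⟩
  have hmemJ : ∀ j, c4 j → j ∈ Jc (cls j) := by
    intro j hj
    exact Finset.mem_filter.mpr ⟨Finset.mem_filter.mpr ⟨Finset.mem_univ j, hj⟩, rfl⟩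
  have hJne : ∀ j, c4 j → (Jc (cls j)).Nonempty := fun j hj => ⟨j, hmemJ j hj⟩
  -- facts about σg for category-4 bags
  have hσmem : ∀ j, c4 j → c4 (σg j) ∧ cls (σg j) = cls j := by
    intro j hj
    have hb := hms (cls j) (hJne j hj)
    exact hJmem _ _ (hb.2.1 j (hmemJ j hj))
  have hσσ : ∀ j, c4 j → σg (σg j) = j := by
    intro j hj
    have hb := hms (cls j) (hJne j hj)
    have h1 := hb.2.2.1 j (hmemJ j hj)
    have h2 := (hσmem j hj).2
    show σf (cls (σg j)) (σg j) = j
    rw [h2]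
    exact h1
  have htf : ∀ j, c4 j → c4 (tf (cls j)) ∧ cls (tf (cls j)) = cls j := by
    intro j hj
    have hb := hms (cls j) (hJne j hj)
    exact hJmem _ _ hb.1
  have hcapA : ∀ j, c4 j → isAf (cls j) j →
      (1 - w (hh (σg j))) ≤ (1 - w (hh (tf (cls j)))) ∧
      (1 - w (hh (tf (cls j)))) ≤ (1 - w (hh j)) := by
    intro j hj hA
    have hb := hms (cls j) (hJne j hj)
    exact hb.2.2.2.1 j (hmemJ j hj) hA
  have hBside : ∀ j, c4 j → ¬ isAf (cls j) j → isAf (cls j) (σg j) ∧ σg j ≠ j := by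
    intro j hj hB
    have hb := hms (cls j) (hJne j hj)
    exact hb.2.2.2.2.2 j (hmemJ j hj) hB
  have hAside : ∀ j, c4 j → isAf (cls j) j → σg j ≠ j → ¬ isAf (cls j) (σg j) := by
    intro j hj hA hne
    have hb := hms (cls j) (hJne j hj)
    exact hb.2.2.2.2.1 j (hmemJ j hj) hA hne
  -- the knapsacks
  set A : Fin m → Finset ι := fun j =>
    if c1 j then CC j
    else if c2 j then L j
    else if c3 j then {hh j, esc j}
    else if isAf (cls j) j then insert (hh j) (PS j (σg j))
    else L (σg j) ∪ (L j \ PS (σg j) j) with hAdef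
  have hc1n : ∀ j, c4 j → ¬ c1 j := fun j hj hc => hc hj.1
  have hc2n : ∀ j, c4 j → ¬ c2 j := fun j hj hc => absurd hc.2 (not_le.mpr hj.2.1)
  have hc3n : ∀ j, c4 j → ¬ c3 j := by
    intro j hj hc
    obtain ⟨x, hx1, hx2⟩ := hc.2.2
    exact absurd hx2 (not_le.mpr (hj.2.2 x hx1))
  have hAeq1 : ∀ j, c1 j → A j = CC j := by
    intro j h
    simp only [hAdef]
    rw [if_pos h]
  have hAeq2 : ∀ j, c2 j → A j = L j := by
    intro j h
    simp only [hAdef]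
    rw [if_neg (fun hc : c1 j => hc h.1), if_pos h]
  have hAeq3 : ∀ j, c3 j → A j = {hh j, esc j} := by
    intro j h
    simp only [hAdef]
    rw [if_neg (fun hc : c1 j => hc h.1),
      if_neg (fun hc : c2 j => absurd hc.2 (not_le.mpr h.2.1)), if_pos h]
  have hAeq4A : ∀ j, c4 j → isAf (cls j) j → A j = insert (hh j) (PS j (σg j)) := by
    intro j h hA
    simp only [hAdef]
    rw [if_neg (hc1n j h), if_neg (hc2n j h), if_neg (hc3n j h), if_pos hA]
  have hAeq4B : ∀ j, c4 j → ¬ isAf (cls j) j → A j = L (σg j) ∪ (L j \ PS (σg j) j) := by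
    intro j h hB
    simp only [hAdef]
    rw [if_neg (hc1n j h), if_neg (hc2n j h), if_neg (hc3n j h), if_neg hB]
  -- bundled facts for category-4 A-side bags
  have hhyp4A : ∀ j, c4 j → (c4 j ∧ c4 (σg j) ∧ cls j = cls (σg j)) := by
    intro j hj
    exact ⟨hj, (hσmem j hj).1, ((hσmem j hj).2).symm⟩
  have hhyp4B : ∀ j, c4 j → (c4 (σg j) ∧ c4 j ∧ cls (σg j) = cls j) := by
    intro j hj
    exact ⟨(hσmem j hj).1, hj, (hσmem j hj).2⟩
  have hhnot : ∀ j, c4 j → hh j ∉ PS j (σg j) := by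
    intro j hj hcon
    have hspec := PSs j (σg j) (hhyp4A j hj)
    have hmem := hspec.1 hcon
    by_cases hbe : σg j = j
    · rw [hbe] at hmem
      exact (Finset.notMem_erase (hh j) (X j)) hmem
    · have h1 : hh j ∈ X (σg j) := hLsubX _ hmem
      have h2 : hh j ∈ X j := hhmem j hj.1
      exact Finset.disjoint_left.mp (hXd j (σg j) (fun hc => hbe hc.symm)) h2 h1
  -- category-4 B-side: the two parts are disjoint
  have hBdisj : ∀ j, c4 j → ¬ isAf (cls j) j →
      Disjoint (L (σg j)) (L j \ PS (σg j) j) := by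
    intro j hj hB
    have hne := (hBside j hj hB).2
    have h1 : L (σg j) ⊆ X (σg j) := hLsubX _
    have h2 : L j \ PS (σg j) j ⊆ X j := (Finset.sdiff_subset).trans (hLsubX j)
    exact Finset.disjoint_of_subset_left h1 (Finset.disjoint_of_subset_right h2 (hXd _ _ hne))
  -- knapsacks are contained in their bag pair
  have hAsub2 : ∀ j, A j ⊆ X j ∪ X (σg j) := by
    intro j
    rcases hcases j with h | h | h | h
    · rw [hAeq1 j h]
      exact (CCs j h).1.trans Finset.subset_union_left
    · rw [hAeq2 j h]
      exact (hLsubX j).trans Finset.subset_union_left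
    · rw [hAeq3 j h]
      intro x hx
      rcases Finset.mem_insert.mp hx with rfl | hx
      · exact Finset.mem_union_left _ (hhmem j h.1)
      · rw [Finset.mem_singleton.mp hx]
        exact Finset.mem_union_left _ (hLsubX j (escs j h).1)
    · by_cases hA : isAf (cls j) j
      · rw [hAeq4A j h hA]
        intro x hx
        rcases Finset.mem_insert.mp hx with rfl | hx
        · exact Finset.mem_union_left _ (hhmem j h.1)
        · exact Finset.mem_union_right _ (hLsubX _ ((PSs j (σg j) (hhyp4A j h)).1 hx))
      · rw [hAeq4B j h hA]
        intro x hx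
        rcases Finset.mem_union.mp hx with hx | hx
        · exact Finset.mem_union_right _ (hLsubX _ hx)
        · exact Finset.mem_union_left _ (hLsubX j (Finset.mem_sdiff.mp hx).1)
  have hAsubI : ∀ j, A j ⊆ I := by
    intro j
    refine (hAsub2 j).trans ?_
    intro x hx
    rcases Finset.mem_union.mp hx with hx | hx
    · exact hXI j hx
    · exact hXI _ hx
  -- capacities
  have hcapbj : ∀ j, c4 j → isAf (cls j) j → 1 - w (hh (σg j)) ≤ 1 - w (hh j) := by
    intro j hj hA
    have h := hcapA j hj hA
    linarith [h.1, h.2]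
  -- weights of knapsacks
  have hwA : ∀ j, ∑ i ∈ A j, w i ≤ 1 := by
    intro j
    rcases hcases j with h | h | h | h
    · rw [hAeq1 j h]
      have h1 : ∑ i ∈ CC j, w i ≤ ∑ i ∈ X j, w i :=
        Finset.sum_le_sum_of_subset_of_nonneg (CCs j h).1 (fun i hi _ => hwX j i hi)
      linarith [hXw j]
    · rw [hAeq2 j h]
      have h1 : ∑ i ∈ L j, w i ≤ ∑ i ∈ X j, w i :=
        Finset.sum_le_sum_of_subset_of_nonneg (hLsubX j) (fun i hi _ => hwX j i hi)
      linarith [hXw j]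
    · rw [hAeq3 j h]
      have hne : hh j ≠ esc j := by
        intro hcon
        have := (escs j h).1
        rw [← hcon] at this
        exact (Finset.notMem_erase (hh j) (X j)) this
      rw [Finset.sum_pair hne]
      have hsub : ({hh j, esc j} : Finset ι) ⊆ X j := by
        intro y hy
        rcases Finset.mem_insert.mp hy with rfl | hy
        · exact hhmem j h.1
        · rw [Finset.mem_singleton.mp hy]
          exact hLsubX j (escs j h).1
      calc w (hh j) + w (esc j) = ∑ i ∈ ({hh j, esc j} : Finset ι), w i :=
            (Finset.sum_pair hne).symm
      _ ≤ ∑ i ∈ X j, w i := Finset.sum_le_sum_of_subset_of_nonneg hsub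
          (fun i hi _ => hwX j i hi)
      _ ≤ 1 := hXw j
    · by_cases hA : isAf (cls j) j
      · rw [hAeq4A j h hA, Finset.sum_insert (hhnot j h)]
        have hspec := PSs j (σg j) (hhyp4A j h)
        have h1 := hspec.2.2.2.1
        have h2 := hwL (σg j) (hσmem j h).1.1
        have h3 := hcapbj j h hA
        linarith
      · rw [hAeq4B j h hA, Finset.sum_union (hBdisj j h hA)]
        have h1 : ∑ i ∈ L j \ PS (σg j) j, w i ≤ ∑ i ∈ L j, w i :=
          Finset.sum_le_sum_of_subset_of_nonneg Finset.sdiff_subset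
            (fun i hi _ => hwX j i (hLsubX j hi))
        have h2 := hwLε (σg j) (hσmem j h).1.1
        have h3 := hwLε j h.1
        nlinarith
  -- profits of knapsacks
  have hpA : ∀ j, 2/3 - ε ≤ ∑ i ∈ A j, p i := by
    intro j
    rcases hcases j with h | h | h | h
    · rw [hAeq1 j h]
      exact (CCs j h).2.1
    · rw [hAeq2 j h]
      exact h.2
    · rw [hAeq3 j h]
      have hne : hh j ≠ esc j := by
        intro hcon
        have := (escs j h).1
        rw [← hcon] at this
        exact (Finset.notMem_erase (hh j) (X j)) this
      rw [Finset.sum_pair hne]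
      have := (escs j h).2
      linarith
    · by_cases hA : isAf (cls j) j
      · rw [hAeq4A j h hA, Finset.sum_insert (hhnot j h)]
        have hspec := PSs j (σg j) (hhyp4A j h)
        have h1 := hspec.2.1
        linarith
      · rw [hAeq4B j h hA, Finset.sum_union (hBdisj j h hA),
          Finset.sum_sdiff_eq_sub (PSs (σg j) j (hhyp4B j h)).1]
        have hspec := PSs (σg j) j (hhyp4B j h)
        have h1 := hspec.2.2.1
        have h2 := hpLlb (σg j) (hσmem j h).1.1
        linarith
  -- lightness of non-A-side knapsacks
  have hlight1 : ∀ j, c1 j → ∀ x ∈ A j, ¬ Heavy ε w x := by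
    intro j h x hx hxH
    rw [hAeq1 j h] at hx
    exact h ⟨x, (CCs j h).1 hx, hxH⟩
  have hlight2 : ∀ j, c2 j → ∀ x ∈ A j, ¬ Heavy ε w x := by
    intro j h x hx
    rw [hAeq2 j h] at hx
    exact hLlight j x hx
  have hlight4B : ∀ j, c4 j → ¬ isAf (cls j) j → ∀ x ∈ A j, ¬ Heavy ε w x := by
    intro j h hB x hx
    rw [hAeq4B j h hB] at hx
    rcases Finset.mem_union.mp hx with hx | hx
    · exact hLlight _ x hx
    · exact hLlight j x (Finset.mem_sdiff.mp hx).1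
  have hcard3 : ∀ j, c3 j → ¬ (3 ≤ (A j).card) := by
    intro j h hcon
    rw [hAeq3 j h] at hcon
    have h1 : ({hh j, esc j} : Finset ι).card ≤ 2 := by
      refine (Finset.card_insert_le _ _).trans ?_
      simp
    omega
  -- the A-side slack bound
  have hA4wS : ∀ j, c4 j → isAf (cls j) j → 3 ≤ (A j).card →
      ∑ i ∈ PS j (σg j), w i ≤ (1 - 2*ε) * ∑ i ∈ L (σg j), w i := by
    intro j h hA hcard
    have hspec := PSs j (σg j) (hhyp4A j h)
    rcases hspec.2.2.2.2 with hc | hc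
    · exfalso
      rw [hAeq4A j h hA] at hcard
      have := Finset.card_insert_le (hh j) (PS j (σg j))
      omega
    · exact hc
  -- Slack
  have hslack : Slack ε w A := by
    intro j hcard
    rcases hcases j with h | h | h | h
    · refine Or.inl ⟨⟨hlight1 j h, ?_⟩, ?_⟩
      · rw [hAeq1 j h] at hcard ⊢
        rcases (CCs j h).2.2 with hc | hc
        · omega
        · exact hc
      · rintro ⟨x, hx, hxH, -⟩
        exact hlight1 j h x hx hxH
    · refine Or.inl ⟨⟨hlight2 j h, ?_⟩, ?_⟩
      · rw [hAeq2 j h]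
        have := hwLε j h.1
        nlinarith
      · rintro ⟨x, hx, hxH, -⟩
        exact hlight2 j h x hx hxH
    · exact absurd hcard (hcard3 j h)
    · by_cases hA : isAf (cls j) j
      · refine Or.inr ⟨⟨hh j, ?_, hhheavy j h.1, ?_⟩, ?_⟩
        · rw [hAeq4A j h hA]
          exact Finset.mem_insert_self _ _
        · have h1 := hA4wS j h hA hcard
          have h2 := hwL (σg j) (hσmem j h).1.1
          have h3 := hcapbj j h hA
          have h4 := hcapnn j h.1
          have h5 := hcapnn (σg j) (hσmem j h).1.1
          rw [hAeq4A j h hA, Finset.sum_insert (hhnot j h)]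
          have h6 : (1 - 2*ε) * ∑ i ∈ L (σg j), w i ≤ (1 - 2*ε) * (1 - w (hh (σg j))) := by
            apply mul_le_mul_of_nonneg_left h2
            linarith
          nlinarith
        · rintro ⟨hall, -⟩
          refine hall (hh j) ?_ (hhheavy j h.1)
          rw [hAeq4A j h hA]
          exact Finset.mem_insert_self _ _
      · refine Or.inl ⟨⟨hlight4B j h hA, ?_⟩, ?_⟩
        · rw [hAeq4B j h hA, Finset.sum_union (hBdisj j h hA)]
          have h1 : ∑ i ∈ L j \ PS (σg j) j, w i ≤ ∑ i ∈ L j, w i :=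
            Finset.sum_le_sum_of_subset_of_nonneg Finset.sdiff_subset
              (fun i hi _ => hwX j i (hLsubX j hi))
          have h2 := hwLε (σg j) (hσmem j h).1.1
          have h3 := hwLε j h.1
          nlinarith
        · rintro ⟨x, hx, hxH, -⟩
          exact hlight4B j h hA x hx hxH
  -- pairwise disjointness
  have hπ : ∀ j, c4 j → c4 (σg j) ∧ σg (σg j) = j := fun j hj => ⟨(hσmem j hj).1, hσσ j hj⟩
  have hpairdisj : ∀ j, c4 j → isAf (cls j) j → σg j ≠ j → Disjoint (A j) (A (σg j)) := by
    intro j hj hA hne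
    have hj' : c4 (σg j) := (hσmem j hj).1
    have hB' : ¬ isAf (cls (σg j)) (σg j) := by
      rw [(hσmem j hj).2]
      exact hAside j hj hA hne
    have hAj := hAeq4A j hj hA
    have hAj' := hAeq4B (σg j) hj' hB'
    have hσσj : σg (σg j) = j := hσσ j hj
    rw [hσσj] at hAj'
    rw [hAj, hAj']
    rw [Finset.disjoint_left]
    intro x hx hx'
    rcases Finset.mem_insert.mp hx with rfl | hx
    · rcases Finset.mem_union.mp hx' with hx' | hx'
      · exact (Finset.notMem_erase (hh j) (X j)) hx'
      · have h1 : hh j ∈ X (σg j) := hLsubX _ (Finset.mem_sdiff.mp hx').1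
        have h2 : hh j ∈ X j := hhmem j hj.1
        exact Finset.disjoint_left.mp (hXd j (σg j) (fun hc => hne hc.symm)) h2 h1
    · have hxL : x ∈ L (σg j) := (PSs j (σg j) (hhyp4A j hj)).1 hx
      rcases Finset.mem_union.mp hx' with hx' | hx'
      · have h1 : x ∈ X (σg j) := hLsubX _ hxL
        have h2 : x ∈ X j := hLsubX j hx'
        exact Finset.disjoint_left.mp (hXd j (σg j) (fun hc => hne hc.symm)) h2 h1
      · exact (Finset.mem_sdiff.mp hx').2 hx
  have hAsubX : ∀ a, ¬ c4 a → A a ⊆ X a := by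
    intro a h
    rcases hcases a with hc | hc | hc | hc
    · rw [hAeq1 a hc]
      exact (CCs a hc).1
    · rw [hAeq2 a hc]
      exact hLsubX a
    · rw [hAeq3 a hc]
      intro x hx
      rcases Finset.mem_insert.mp hx with rfl | hx
      · exact hhmem a hc.1
      · rw [Finset.mem_singleton.mp hx]
        exact hLsubX a (escs a hc).1
    · exact absurd hc h
  have hdisjA : ∀ j j', j ≠ j' → Disjoint (A j) (A j') := by
    have hπinv : ∀ a, c4 a → σg (σg a) = a := hσσ
    have hπ4 : ∀ a, c4 a → c4 (σg a) := fun a h => (hσmem a h).1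
    intro j j' hne
    by_cases hcase : c4 j ∧ j' = σg j
    · obtain ⟨hj4, rfl⟩ := hcase
      by_cases hA : isAf (cls j) j
      · exact hpairdisj j hj4 hA (fun hc => hne hc.symm)
      · have hB := hBside j hj4 hA
        have hA' : isAf (cls (σg j)) (σg j) := by
          rw [(hσmem j hj4).2]
          exact hB.1
        have h1 := hpairdisj (σg j) (hπ4 j hj4) hA' (by
          rw [hπinv j hj4]
          exact fun hc => hB.2 hc.symm)
        rw [hπinv j hj4] at h1
        exact h1.symm
    · -- the two knapsacks live in disjoint bag pairs
      set π : Fin m → Fin m := fun a => if h : c4 a then σg a else a with hπdef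
      have hπi : ∀ a, c4 a → π a = σg a := by
        intro a h
        simp only [hπdef]
        rw [dif_pos h]
      have hπn : ∀ a, ¬ c4 a → π a = a := by
        intro a h
        simp only [hπdef]
        rw [dif_neg h]
      have hπinv' : ∀ a, π (π a) = a := by
        intro a
        by_cases h : c4 a
        · rw [hπi a h, hπi _ (hπ4 a h), hπinv a h]
        · rw [hπn a h, hπn a h]
      have hπsub : ∀ a, A a ⊆ X a ∪ X (π a) := by
        intro a
        by_cases h : c4 a
        · rw [hπi a h]
          exact hAsub2 a
        · exact (hAsubX a h).trans Finset.subset_union_left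
      have hd1 : j' ≠ π j := by
        intro hc
        by_cases h : c4 j
        · exact hcase ⟨h, by rw [hc, hπi j h]⟩
        · rw [hπn j h] at hc
          exact hne hc.symm
      have hd2 : j ≠ π j' := by
        intro hc
        have : π j = j' := by rw [hc, hπinv']
        exact hd1 this.symm
      have hd3 : π j ≠ π j' := by
        intro hc
        have : j = j' := by rw [← hπinv' j, hc, hπinv']
        exact hne this
      have hbig : Disjoint (X j ∪ X (π j)) (X j' ∪ X (π j')) := by
        rw [Finset.disjoint_union_left]
        constructor
        · rw [Finset.disjoint_union_right]
          exact ⟨hXd j j' hne, hXd j (π j') hd2⟩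
        · rw [Finset.disjoint_union_right]
          exact ⟨hXd (π j) j' (fun hc => hd1 hc.symm), hXd (π j) (π j') hd3⟩
      exact Finset.disjoint_of_subset_left (hπsub j)
        (Finset.disjoint_of_subset_right (hπsub j') hbig)
  -- the profile set
  set T : Finset ι := (C4.image cls).image (fun c => hh (tf c)) with hTdef
  have hTmem : ∀ t ∈ T, ∃ j, c4 j ∧ t = hh (tf (cls j)) := by
    intro t ht
    rw [hTdef] at ht
    obtain ⟨c, hc, hct⟩ := Finset.mem_image.mp ht
    obtain ⟨j, hj, hjc⟩ := Finset.mem_image.mp hc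
    have hj4 : c4 j := (Finset.mem_filter.mp hj).2
    exact ⟨j, hj4, by rw [← hct, ← hjc]⟩
  have hTsubI : T ⊆ I := by
    intro t ht
    obtain ⟨j, hj4, rfl⟩ := hTmem t ht
    have h1 := (htf j hj4).1
    exact hXI _ (hhmem _ h1.1)
  have hTheavy : ∀ t ∈ T, Heavy ε w t := by
    intro t ht
    obtain ⟨j, hj4, rfl⟩ := hTmem t ht
    have h1 := (htf j hj4).1
    exact hhheavy _ h1.1
  -- profile property
  have hprof : IsProfile ε p w A T := by
    intro j h' hmem hH hcard
    rcases hcases j with h | h | h | h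
    · exact absurd hH (hlight1 j h h' hmem)
    · exact absurd hH (hlight2 j h h' hmem)
    · exact absurd hcard (hcard3 j h)
    · by_cases hA : isAf (cls j) j
      · -- the only heavy item is hh j
        have hh' : h' = hh j := by
          rw [hAeq4A j h hA] at hmem
          rcases Finset.mem_insert.mp hmem with hc | hc
          · exact hc
          · exact absurd hH (hLlight _ h' ((PSs j (σg j) (hhyp4A j h)).1 hc))
        subst hh'
        refine ⟨hh (tf (cls j)), ?_, ?_, ?_, ?_⟩
        · rw [hTdef]
          refine Finset.mem_image.mpr ⟨cls j, ?_, rfl⟩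
          exact Finset.mem_image.mpr ⟨j, Finset.mem_filter.mpr ⟨Finset.mem_univ j, h⟩, rfl⟩
        · exact (htf j h).2
        · rw [hAeq4A j h hA, Finset.sum_insert (hhnot j h), add_sub_cancel_left]
          have h1 := hA4wS j h hA hcard
          have h2 := hwL (σg j) (hσmem j h).1.1
          have hcap := hcapA j h hA
          have h4 := hcapnn (tf (cls j)) (htf j h).1.1
          have h5 := hcapnn (σg j) (hσmem j h).1.1
          have h6 : (1 - 2*ε) * ∑ i ∈ L (σg j), w i ≤ (1 - 2*ε) * (1 - w (hh (σg j))) := by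
            apply mul_le_mul_of_nonneg_left h2
            linarith
          nlinarith [hcap.1, hcap.2]
        · have hcap := hcapA j h hA
          apply mul_le_mul_of_nonneg_left hcap.2
          linarith
      · exact absurd hH (hlight4B j h hA h' hmem)
  -- cardinality of the profile
  have hTcard : (T.card : ℝ) ≤ 2 / ε ^ 2 := by
    set M : ℤ := ⌊(2/3 : ℝ)/ε⌋ with hMdef
    have hM0 : 0 ≤ M := Int.floor_nonneg.mpr (by positivity)
    have hsub : C4.image cls ⊆ Finset.Icc (0 : ℤ) M := by
      intro c hc
      obtain ⟨j, hj, hjc⟩ := Finset.mem_image.mp hc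
      have hj4 : c4 j := (Finset.mem_filter.mp hj).2
      rw [Finset.mem_Icc, ← hjc]
      constructor
      · exact Int.floor_nonneg.mpr (div_nonneg (hpX j (hh j) (hhmem j hj4.1)) hε.le)
      · apply Int.floor_le_floor
        have hub := (hc4pa j hj4).2
        apply (div_le_div_iff_of_pos_right hε).mpr
        linarith
    have h1 : T.card ≤ (C4.image cls).card := by
      rw [hTdef]
      exact Finset.card_image_le
    have h2 : (C4.image cls).card ≤ (Finset.Icc (0 : ℤ) M).card := Finset.card_le_card hsub
    have h3 : (Finset.Icc (0 : ℤ) M).card = (M + 1).toNat := by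
      rw [Int.card_Icc]
      norm_num
    have h4 : ((M + 1).toNat : ℝ) = (M : ℝ) + 1 := by
      have h4' : (((M + 1).toNat : ℤ)) = M + 1 := Int.toNat_of_nonneg (by omega)
      rw [← Int.cast_natCast (R := ℝ), h4']
      push_cast
      ring
    have hMle : (M : ℝ) ≤ (2/3)/ε := Int.floor_le _
    have hεε : (0:ℝ) < ε^2 := by positivity
    have hkey : (2/3)/ε + 1 ≤ 2/ε^2 := by
      rw [le_div_iff₀ hεε]
      have e1 : ((2/3)/ε + 1) * ε^2 = (2/3)*ε + ε^2 := by
        field_simp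
      rw [e1]
      nlinarith
    have h5 : (T.card : ℝ) ≤ ((M + 1).toNat : ℝ) := by
      have := h1.trans (h2.trans_eq h3)
      exact_mod_cast Nat.cast_le.mpr this
    rw [h4] at h5
    linarith
  exact ⟨A, hAsubI, hdisjA, hwA, hslack, hpA, T, hTsubI, hTheavy, hprof, hTcard⟩
end

section
/- There exists a constant ε₀ > 0 such that the following holds for every ε ∈ (0, ε₀]. Let I be a finite set of items where each item i has profit p(i) ≥ 0 and weight w(i) ≥ 0, with p(i) = 0 whenever w(i) = 0, p(i) < 2/3 − 6ε for every i ∈ I, and p(i) ≥ ε whenever w(i) ≥ 1 − ε². Let T ⊆ I be a set of heavy items. For a heavy item h, let T(h) = { t ∈ T : ⌊p(t)/ε⌋ = ⌊p(h)/ε⌋ and w(t) ≥ w(h) }; when T(h) ≠ ∅ define the label weight w̃(h) = min{ w(t) : t ∈ T(h) }, and say two heavy items h₁, h₂ have the same type if ⌊p(h₁)/ε⌋ = ⌊p(h₂)/ε⌋ and T(h₁), T(h₂) are nonempty with w̃(h₁) = w̃(h₂). Suppose there exists a slack feasible solution (J_1, …, J_m) with p(J_j) ≥ 2/3 − ε for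 all j that has T as a profile. Then there exists a slack feasible solution (I_1, …, I_m) satisfying: (i) p(I_j) ≥ 2/3 − 2ε for every j; (ii) for every j and every critical heavy item h ∈ I_j, T(h) ≠ ∅ and w(I_j) − w(h) ≤ (1 − ε)(1 − w̃(h)); (iii) there is no critical heavy item h and non-critical heavy item h′ of the same type with w(h) < w(h′). -/
open scoped Classical

universe u

variable {ι : Type u}

/-- `T(h)`: elements of the profile `T` with the same rounded profit as `h` and
weight at least `w h`. -/
noncomputable def TSet (ε : ℝ) (p w : ι → ℝ) (T : Finset ι) (h : ι) : Finset ι :=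
  T.filter (fun t => ⌊p t / ε⌋ = ⌊p h / ε⌋ ∧ w h ≤ w t)

/-- The label weight `w̃(h)` of a heavy item: the minimum weight of an element of
`T(h)` (via `sInf`; irrelevant when `T(h) = ∅`). -/
noncomputable def labelW (ε : ℝ) (p w : ι → ℝ) (T : Finset ι) (h : ι) : ℝ :=
  sInf {x : ℝ | ∃ t ∈ TSet ε p w T h, w t = x}

/-- Two heavy items have the same type: equal rounded profits, both `T(·)`
nonempty, and equal label weights. -/
def SameType (ε : ℝ) (p w : ι → ℝ) (T : Finset ι) (h₁ h₂ : ι) : Prop :=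
  ⌊p h₁ / ε⌋ = ⌊p h₂ / ε⌋ ∧ (TSet ε p w T h₁).Nonempty ∧
    (TSet ε p w T h₂).Nonempty ∧ labelW ε p w T h₁ = labelW ε p w T h₂

/-- An item is critical in a solution if it is heavy or expensive and lies in a
knapsack with at least three items. -/
def Critical (ε : ℝ) (p w : ι → ℝ) {m : ℕ} (A : Fin m → Finset ι) (i : ι) : Prop :=
  (Heavy ε w i ∨ Expensive ε p i) ∧ ∃ j, i ∈ A j ∧ 3 ≤ (A j).card

lemma labelW_eq (ε : ℝ) (p w : ι → ℝ) (T : Finset ι) (h : ι) :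
    labelW ε p w T h = sInf ↑((TSet ε p w T h).image w) := by
  unfold labelW; congr 1; ext x; simp [eq_comm]

lemma le_labelW {ε : ℝ} {p w : ι → ℝ} {T : Finset ι} {h : ι}
    (hne : (TSet ε p w T h).Nonempty) : w h ≤ labelW ε p w T h := by
  rw [labelW_eq]
  refine le_csInf (Finset.coe_nonempty.mpr (hne.image w)) ?_
  rintro b hb
  simp only [Finset.coe_image, Set.mem_image, Finset.mem_coe] at hb
  obtain ⟨t, ht, rfl⟩ := hb
  exact (Finset.mem_filter.mp ht).2.2

lemma labelW_le {ε : ℝ} {p w : ι → ℝ} {T : Finset ι} {h t : ι}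
    (ht : t ∈ TSet ε p w T h) : labelW ε p w T h ≤ w t := by
  rw [labelW_eq]
  exact csInf_le (Finset.bddBelow _) (Finset.mem_coe.mpr (Finset.mem_image_of_mem w ht))

lemma heavy_unique {ε : ℝ} {w : ι → ℝ} {s : Finset ι} {a b : ι} (hε : ε ^ 2 ≤ 1/4)
    (hw0 : ∀ i ∈ s, 0 ≤ w i) (hw1 : ∑ i ∈ s, w i ≤ 1)
    (ha : a ∈ s) (hb : b ∈ s) (hha : Heavy ε w a) (hhb : Heavy ε w b) : a = b := by
  by_contra hne
  have hsub : ({a, b} : Finset ι) ⊆ s := by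
    intro x hx
    rcases Finset.mem_insert.mp hx with rfl | hx
    · exact ha
    · rw [Finset.mem_singleton.mp hx]; exact hb
  have hsum : w a + w b ≤ ∑ i ∈ s, w i := by
    have := Finset.sum_le_sum_of_subset_of_nonneg hsub (fun i hi _ => hw0 i hi)
    rwa [Finset.sum_pair hne] at this
  unfold Heavy at hha hhb
  linarith

lemma filter_heavy_eq {ε : ℝ} {w : ι → ℝ} {s : Finset ι} {a : ι} (hε : ε ^ 2 ≤ 1/4)
    (hw0 : ∀ i ∈ s, 0 ≤ w i) (hw1 : ∑ i ∈ s, w i ≤ 1)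
    (ha : a ∈ s) (hha : Heavy ε w a) : s.filter (Heavy ε w) = {a} := by
  ext i
  simp only [Finset.mem_filter, Finset.mem_singleton]
  constructor
  · rintro ⟨hi, hhi⟩
    exact heavy_unique hε hw0 hw1 hi ha hhi hha
  · rintro rfl
    exact ⟨ha, hha⟩

def Good (ε : ℝ) (p w : ι → ℝ) (I T : Finset ι) {m : ℕ} (J A : Fin m → Finset ι) : Prop :=
  (∀ j, A j ⊆ I) ∧ (∀ j j', j ≠ j' → Disjoint (A j) (A j')) ∧
  (∀ j, ∑ i ∈ A j, w i ≤ 1) ∧ Slack ε w A ∧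
  (∀ j : Fin m, ∀ h ∈ A j, Heavy ε w h → 3 ≤ (A j).card →
    (TSet ε p w T h).Nonempty ∧
    (∑ i ∈ A j, w i) - w h ≤ (1 - ε) * (1 - labelW ε p w T h)) ∧
  (∀ j, A j = J j ∨ ∃ g h₀, g ∈ J j ∧ h₀ ∈ I ∧ h₀ ∉ J j ∧ Heavy ε w h₀ ∧
    ⌊p h₀ / ε⌋ = ⌊p g / ε⌋ ∧ A j = insert h₀ ((J j).erase g))

noncomputable def Phi (ε : ℝ) (w : ι → ℝ) {m : ℕ} (A : Fin m → Finset ι) : ℝ :=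
  ∑ j, if 3 ≤ (A j).card then ∑ i ∈ (A j).filter (Heavy ε w), w i else 0

lemma good_swap {ε : ℝ} {p w : ι → ℝ} {I T : Finset ι} {m : ℕ} {J A : Fin m → Finset ι}
    {h h' : ι}
    (hε : 0 < ε) (hε2 : ε ≤ 1/2)
    (hw0 : ∀ i ∈ I, 0 ≤ w i)
    (hG : Good ε p w I T J A)
    (hheavy : Heavy ε w h) (hcrit : Critical ε p w A h)
    (h'I : h' ∈ I) (h'heavy : Heavy ε w h') (h'ncrit : ¬ Critical ε p w A h')
    (hst : SameType ε p w T h h') (hww : w h < w h') :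
    ∃ A' : Fin m → Finset ι, Good ε p w I T J A' ∧ Phi ε w A < Phi ε w A' := by
  obtain ⟨hsub, hdisj, hwle, hslack, hvi, hinv⟩ := hG
  obtain ⟨-, j, hj, hcard⟩ := hcrit
  obtain ⟨hfl, hTh, hTh', hlw⟩ := hst
  have hε4 : ε ^ 2 ≤ 1/4 := by nlinarith
  have h1ε : 0 < 1 - ε := by linarith
  have hne : h ≠ h' := by rintro rfl; exact lt_irrefl _ hww
  have h'nj : h' ∉ A j := fun hh => h'ncrit ⟨Or.inl h'heavy, j, hh, hcard⟩
  have h'card : ∀ k, h' ∈ A k → ¬ 3 ≤ (A k).card :=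
    fun k hk hc => h'ncrit ⟨Or.inl h'heavy, k, hk, hc⟩
  have hhI : h ∈ I := hsub j hj
  have honly : ∀ k, h ∈ A k → k = j := by
    intro k hk
    by_contra hkj
    exact (Finset.disjoint_left.mp (hdisj k j hkj) hk) hj
  have h'only : ∀ k l, h' ∈ A k → h' ∈ A l → k = l := by
    intro k l hk hl
    by_contra hkl
    exact (Finset.disjoint_left.mp (hdisj k l hkl) hk) hl
  obtain ⟨-, hviw⟩ := hvi j h hj hheavy hcard
  rw [hlw] at hviw
  have hwh'lw : w h' ≤ labelW ε p w T h' := le_labelW hTh'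
  have hpos : 0 ≤ (∑ i ∈ A j, w i) - w h := by
    have : w h ≤ ∑ i ∈ A j, w i :=
      Finset.single_le_sum (fun i hi => hw0 i (hsub j hi)) hj
    linarith
  have hlw1 : labelW ε p w T h' ≤ 1 := by nlinarith
  have hwh'1 : w h' ≤ 1 := le_trans hwh'lw hlw1
  set A' : Fin m → Finset ι := fun k =>
    if k = j then insert h' ((A j).erase h)
    else if h' ∈ A k then insert h ((A k).erase h') else A k with hA'
  have hA'j : A' j = insert h' ((A j).erase h) := by simp [hA']
  have hA'k1 : ∀ k, k ≠ j → h' ∈ A k → A' k = insert h ((A k).erase h') := by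
    intro k hk hk'; simp [hA', hk, hk']
  have hA'k2 : ∀ k, k ≠ j → h' ∉ A k → A' k = A k := by
    intro k hk hk'; simp [hA', hk, hk']
  have h'ne : h' ∉ (A j).erase h := fun hm => h'nj (Finset.mem_of_mem_erase hm)
  have hsumj : ∀ f : ι → ℝ, ∑ i ∈ A' j, f i = (∑ i ∈ A j, f i) - f h + f h' := by
    intro f
    rw [hA'j, Finset.sum_insert h'ne, Finset.sum_erase_eq_sub hj]
    ring
  have hcardj : (A' j).card = (A j).card := by
    rw [hA'j, Finset.card_insert_of_notMem h'ne, Finset.card_erase_of_mem hj]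
    have : 1 ≤ (A j).card := Finset.card_pos.mpr ⟨h, hj⟩
    omega
  have hcardk : ∀ k, k ≠ j → h' ∈ A k → (A' k).card = (A k).card := by
    intro k hk hk'
    have hnm : h ∉ (A k).erase h' := fun hm => hk (honly k (Finset.mem_of_mem_erase hm))
    rw [hA'k1 k hk hk', Finset.card_insert_of_notMem hnm, Finset.card_erase_of_mem hk']
    have : 1 ≤ (A k).card := Finset.card_pos.mpr ⟨h', hk'⟩
    omega
  have hsumk : ∀ k, k ≠ j → h' ∈ A k →
      ∀ f : ι → ℝ, ∑ i ∈ A' k, f i = (∑ i ∈ A k, f i) - f h' + f h := by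
    intro k hk hk' f
    have hnm : h ∉ (A k).erase h' := fun hm => hk (honly k (Finset.mem_of_mem_erase hm))
    rw [hA'k1 k hk hk', Finset.sum_insert hnm, Finset.sum_erase_eq_sub hk']
    ring
  have hm1 : ∀ i ∈ A' j, i = h' ∨ (i ∈ A j ∧ i ≠ h) := by
    intro i hi
    rw [hA'j, Finset.mem_insert] at hi
    rcases hi with rfl | hi
    · exact Or.inl rfl
    · exact Or.inr ⟨Finset.mem_of_mem_erase hi, (Finset.mem_erase.mp hi).1⟩
  have hm2 : ∀ k, k ≠ j → ∀ i ∈ A' k, (i = h ∧ h' ∈ A k) ∨ (i ∈ A k ∧ i ≠ h') := by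
    intro k hk i hi
    by_cases hk' : h' ∈ A k
    · rw [hA'k1 k hk hk', Finset.mem_insert] at hi
      rcases hi with rfl | hi
      · exact Or.inl ⟨rfl, hk'⟩
      · exact Or.inr ⟨Finset.mem_of_mem_erase hi, (Finset.mem_erase.mp hi).1⟩
    · rw [hA'k2 k hk hk'] at hi
      exact Or.inr ⟨hi, fun e => hk' (e ▸ hi)⟩
  have hsub' : ∀ k, A' k ⊆ I := by
    intro k i hi
    by_cases hk : k = j
    · subst hk
      rcases hm1 i hi with rfl | ⟨hi', -⟩
      · exact h'I
      · exact hsub k hi'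
    · rcases hm2 k hk i hi with ⟨rfl, -⟩ | ⟨hi', -⟩
      · exact hhI
      · exact hsub k hi'
  have hdisjj : ∀ l, l ≠ j → Disjoint (A' j) (A' l) := by
    intro l hl
    rw [Finset.disjoint_left]
    intro i hij hil
    rcases hm1 i hij with rfl | ⟨hiA, hih⟩
    · rcases hm2 l hl i hil with ⟨e, -⟩ | ⟨-, e⟩
      · exact hne e.symm
      · exact e rfl
    · rcases hm2 l hl i hil with ⟨rfl, -⟩ | ⟨hiA', -⟩
      · exact hih rfl
      · exact Finset.disjoint_left.mp (hdisj j l (fun e => hl e.symm)) hiA hiA'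
  have hdisj' : ∀ k l, k ≠ l → Disjoint (A' k) (A' l) := by
    intro k l hkl
    by_cases hk : k = j
    · subst hk; exact hdisjj l (fun e => hkl e.symm)
    · by_cases hl : l = j
      · subst hl; exact (hdisjj k hk).symm
      · rw [Finset.disjoint_left]
        intro i hik hil
        rcases hm2 k hk i hik with ⟨rfl, hk'⟩ | ⟨hiA, hih'⟩
        · rcases hm2 l hl i hil with ⟨-, hl'⟩ | ⟨hiA', -⟩
          · exact hkl (h'only k l hk' hl')
          · exact hl (honly l hiA')
        · rcases hm2 l hl i hil with ⟨rfl, -⟩ | ⟨hiA', -⟩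
          · exact hk (honly k hiA)
          · exact Finset.disjoint_left.mp (hdisj k l hkl) hiA hiA'
  have hwj : ∑ i ∈ A' j, w i ≤ 1 := by
    rw [hsumj w]
    nlinarith [hviw, hwh'lw, hlw1]
  have hw' : ∀ k, ∑ i ∈ A' k, w i ≤ 1 := by
    intro k
    by_cases hk : k = j
    · subst hk; exact hwj
    · by_cases hk' : h' ∈ A k
      · rw [hsumk k hk hk' w]
        linarith [hwle k]
      · rw [hA'k2 k hk hk']
        exact hwle k
  have hkey : (∑ i ∈ A' j, w i) - w h' ≤ (1 - ε) * (1 - labelW ε p w T h') := by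
    rw [hsumj w]; linarith
  have h'mem : h' ∈ A' j := by rw [hA'j]; exact Finset.mem_insert_self _ _
  have huniq' : ∀ i ∈ A' j, Heavy ε w i → i = h' := by
    intro i hi hhi
    exact heavy_unique hε4 (fun x hx => hw0 x (hsub' j hx)) hwj hi h'mem hhi h'heavy
  have hslack' : Slack ε w A' := by
    intro k hcard3
    by_cases hk : k = j
    · subst hk
      refine Or.inr ⟨⟨h', h'mem, h'heavy, ?_⟩, ?_⟩
      · calc (∑ i ∈ A' k, w i) - w h' ≤ (1 - ε) * (1 - labelW ε p w T h') := hkey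
          _ ≤ (1 - ε) * (1 - w h') := by nlinarith
      · rintro ⟨hall, -⟩
        exact hall h' h'mem h'heavy
    · by_cases hk' : h' ∈ A k
      · rw [hcardk k hk hk'] at hcard3
        exact absurd hcard3 (h'card k hk')
      · rw [hA'k2 k hk hk'] at hcard3 ⊢
        exact hslack k hcard3
  have hvi' : ∀ k : Fin m, ∀ h₀ ∈ A' k, Heavy ε w h₀ → 3 ≤ (A' k).card →
      (TSet ε p w T h₀).Nonempty ∧
      (∑ i ∈ A' k, w i) - w h₀ ≤ (1 - ε) * (1 - labelW ε p w T h₀) := by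
    intro k h₀ hh₀ hh₀h hcard3
    by_cases hk : k = j
    · subst hk
      have he := huniq' h₀ hh₀ hh₀h
      subst he
      exact ⟨hTh', hkey⟩
    · by_cases hk' : h' ∈ A k
      · rw [hcardk k hk hk'] at hcard3
        exact absurd hcard3 (h'card k hk')
      · rw [hA'k2 k hk hk'] at hh₀ hcard3 ⊢
        exact hvi k h₀ hh₀ hh₀h hcard3
  have hAjI : A j ⊆ I := hsub j
  have hinv' : ∀ k, A' k = J k ∨ ∃ g h₀, g ∈ J k ∧ h₀ ∈ I ∧ h₀ ∉ J k ∧ Heavy ε w h₀ ∧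
      ⌊p h₀ / ε⌋ = ⌊p g / ε⌋ ∧ A' k = insert h₀ ((J k).erase g) := by
    intro k
    by_cases hk : k = j
    · subst hk
      rcases hinv k with hAJ | ⟨g, h₀, hgJ, h₀I, h₀J, h₀heavy, hfl0, hAj⟩
      · right
        refine ⟨h, h', ?_, h'I, ?_, h'heavy, hfl.symm, ?_⟩
        · rw [← hAJ]; exact hj
        · rw [← hAJ]; exact h'nj
        · rw [hA'j, hAJ]
      · have hh₀mem : h₀ ∈ A k := by rw [hAj]; exact Finset.mem_insert_self _ _
        have hhh₀ : h = h₀ :=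
          heavy_unique hε4 (fun x hx => hw0 x (hAjI hx)) (hwle k) hj hh₀mem hheavy h₀heavy
        subst hhh₀
        have herase : (A k).erase h = (J k).erase g := by
          rw [hAj, Finset.erase_insert (fun hm => h₀J (Finset.mem_of_mem_erase hm))]
        by_cases h'J : h' ∈ J k
        · have h'g : h' = g := by
            by_contra h'g
            exact h'nj (by
              rw [hAj]
              exact Finset.mem_insert_of_mem (Finset.mem_erase.mpr ⟨h'g, h'J⟩))
          left
          rw [hA'j, herase, h'g, Finset.insert_erase hgJ]
        · right
          exact ⟨g, h', hgJ, h'I, h'J, h'heavy, hfl.symm.trans hfl0,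
            by rw [hA'j, herase]⟩
    · by_cases hk' : h' ∈ A k
      · have hnAk : h ∉ A k := fun hm => hk (honly k hm)
        rcases hinv k with hAJ | ⟨g, h₀, hgJ, h₀I, h₀J, h₀heavy, hfl0, hAk⟩
        · right
          refine ⟨h', h, ?_, hhI, ?_, hheavy, hfl, ?_⟩
          · rw [← hAJ]; exact hk'
          · rw [← hAJ]; exact hnAk
          · rw [hA'k1 k hk hk', hAJ]
        · have hh₀mem : h₀ ∈ A k := by rw [hAk]; exact Finset.mem_insert_self _ _
          have hh'h₀ : h' = h₀ :=
            heavy_unique hε4 (fun x hx => hw0 x (hsub k hx)) (hwle k) hk' hh₀mem h'heavy h₀heavy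
          subst hh'h₀
          have herase : (A k).erase h' = (J k).erase g := by
            rw [hAk, Finset.erase_insert (fun hm => h₀J (Finset.mem_of_mem_erase hm))]
          by_cases hJ : h ∈ J k
          · have hg : h = g := by
              by_contra hg
              exact hnAk (by
                rw [hAk]
                exact Finset.mem_insert_of_mem (Finset.mem_erase.mpr ⟨hg, hJ⟩))
            left
            rw [hA'k1 k hk hk', herase, hg, Finset.insert_erase hgJ]
          · right
            exact ⟨g, h, hgJ, hhI, hJ, hheavy, hfl.trans hfl0,
              by rw [hA'k1 k hk hk', herase]⟩
      · rw [hA'k2 k hk hk']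
        exact hinv k
  have hPhi : Phi ε w A < Phi ε w A' := by
    unfold Phi
    apply Finset.sum_lt_sum
    · intro k _
      by_cases hk : k = j
      · subst hk
        rw [if_pos hcard, if_pos (by rw [hcardj]; exact hcard),
          filter_heavy_eq hε4 (fun x hx => hw0 x (hAjI hx)) (hwle k) hj hheavy,
          filter_heavy_eq hε4 (fun x hx => hw0 x (hsub' k hx)) hwj h'mem h'heavy]
        simp only [Finset.sum_singleton]
        exact le_of_lt hww
      · by_cases hk' : h' ∈ A k
        · rw [if_neg (h'card k hk'), if_neg (by rw [hcardk k hk hk']; exact h'card k hk')]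
        · rw [hA'k2 k hk hk']
    · refine ⟨j, Finset.mem_univ j, ?_⟩
      rw [if_pos hcard, if_pos (by rw [hcardj]; exact hcard),
        filter_heavy_eq hε4 (fun x hx => hw0 x (hAjI hx)) (hwle j) hj hheavy,
        filter_heavy_eq hε4 (fun x hx => hw0 x (hsub' j hx)) hwj h'mem h'heavy]
      simpa using hww
  exact ⟨A', ⟨hsub', hdisj', hw', hslack', hvi', hinv'⟩, hPhi⟩

lemma floor_profit {ε : ℝ} (hε : 0 < ε) {a b : ℝ} (hfl : ⌊a / ε⌋ = ⌊b / ε⌋) :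
    b - ε < a := by
  have h1 : (⌊a / ε⌋ : ℝ) ≤ a / ε := Int.floor_le _
  have h2 : b / ε < (⌊b / ε⌋ : ℝ) + 1 := Int.lt_floor_add_one _
  rw [← hfl] at h2
  have h3 : (⌊a / ε⌋ : ℝ) * ε ≤ a := by
    rw [← le_div_iff₀ hε]; exact h1
  have h4 : b < ((⌊a / ε⌋ : ℝ) + 1) * ε := by
    rw [← div_lt_iff₀ hε]; exact h2
  nlinarith

lemma good_profit {ε : ℝ} {p w : ι → ℝ} {I T : Finset ι} {m : ℕ} {J A : Fin m → Finset ι}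
    (hε : 0 < ε) (hG : Good ε p w I T J A) (hJp : ∀ j, 2/3 - ε ≤ ∑ i ∈ J j, p i) :
    ∀ j, 2/3 - 2 * ε ≤ ∑ i ∈ A j, p i := by
  intro j
  rcases hG.2.2.2.2.2 j with hAJ | ⟨g, h₀, hgJ, _, h₀J, _, hfl, hAj⟩
  · rw [hAJ]; linarith [hJp j]
  · have hnm : h₀ ∉ (J j).erase g := fun hmem => h₀J (Finset.mem_of_mem_erase hmem)
    rw [hAj, Finset.sum_insert hnm, Finset.sum_erase_eq_sub hgJ]
    have := floor_profit hε hfl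
    linarith [hJp j]

/-- Lemma 4.6: given a slack solution of value at least `2/3 - ε` with profile `T`,
there is a slack solution of value at least `2/3 - 2ε` such that every critical
heavy item `h` in a knapsack `A j` satisfies
`w(A j) - w h ≤ (1-ε)(1 - w̃(h))`, and within each type every critical heavy item
is at least as heavy as every non-critical heavy item. -/
theorem stmt8 : ∃ ε₀ : ℝ, 0 < ε₀ ∧
    ∀ ε : ℝ, 0 < ε → ε ≤ ε₀ →
    ∀ (ι : Type u) (p w : ι → ℝ) (I : Finset ι) (m : ℕ)
      (T : Finset ι) (J : Fin m → Finset ι),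
      (∀ i ∈ I, 0 ≤ p i) → (∀ i ∈ I, 0 ≤ w i) →
      (∀ i ∈ I, w i = 0 → p i = 0) →
      (∀ i ∈ I, p i < 2/3 - 6 * ε) →
      (∀ i ∈ I, Heavy ε w i → Expensive ε p i) →
      T ⊆ I → (∀ t ∈ T, Heavy ε w t) →
      (∀ j, J j ⊆ I) → (∀ j j', j ≠ j' → Disjoint (J j) (J j')) →
      (∀ j, ∑ i ∈ J j, w i ≤ 1) →
      Slack ε w J →
      (∀ j, 2/3 - ε ≤ ∑ i ∈ J j, p i) →
      IsProfile ε p w J T →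
      ∃ A : Fin m → Finset ι,
        (∀ j, A j ⊆ I) ∧ (∀ j j', j ≠ j' → Disjoint (A j) (A j')) ∧
        (∀ j, ∑ i ∈ A j, w i ≤ 1) ∧ Slack ε w A ∧
        (∀ j, 2/3 - 2 * ε ≤ ∑ i ∈ A j, p i) ∧
        (∀ j : Fin m, ∀ h ∈ A j, Heavy ε w h → 3 ≤ (A j).card →
          (TSet ε p w T h).Nonempty ∧
          (∑ i ∈ A j, w i) - w h ≤ (1 - ε) * (1 - labelW ε p w T h)) ∧
        (¬ ∃ h h', Heavy ε w h ∧ Critical ε p w A h ∧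
          h' ∈ I ∧ Heavy ε w h' ∧ ¬ Critical ε p w A h' ∧
          SameType ε p w T h h' ∧ w h < w h') := by
  refine ⟨1/2, by norm_num, ?_⟩
  intro ε hε hε2 ι p w I m T J hp0 hw0 hwp hplt hhe hTI hTheavy hJI hJdisj hJw hJslack hJp hprof
  have h1ε : 0 < 1 - ε := by linarith
  have hGJ : Good ε p w I T J J := by
    refine ⟨hJI, hJdisj, hJw, hJslack, ?_, fun j => Or.inl rfl⟩
    intro j h hhj hheavy hcard
    obtain ⟨t, htT, hfl, hw1, hw2⟩ := hprof j h hhj hheavy hcard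
    have hwt : w h ≤ w t := by
      have := le_of_mul_le_mul_left hw2 h1ε
      linarith
    have htT' : t ∈ TSet ε p w T h := Finset.mem_filter.mpr ⟨htT, hfl, hwt⟩
    refine ⟨⟨t, htT'⟩, ?_⟩
    have hL := labelW_le htT'
    have : (1 - ε) * (1 - w t) ≤ (1 - ε) * (1 - labelW ε p w T h) :=
      mul_le_mul_of_nonneg_left (by linarith) (le_of_lt h1ε)
    linarith
  have hfin : {A : Fin m → Finset ι | Good ε p w I T J A}.Finite := by
    have h1 : (Set.univ.pi (fun _ : Fin m => {s : Finset ι | s ⊆ I})).Finite := by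
      apply Set.Finite.pi
      intro _
      have he : {s : Finset ι | s ⊆ I} = ↑I.powerset := by
        ext s; simp [Finset.mem_powerset]
      rw [he]
      exact I.powerset.finite_toSet
    apply h1.subset
    intro A hA
    rw [Set.mem_pi]
    intro j _
    exact hA.1 j
  obtain ⟨A, hGA, hmax⟩ :=
    Set.Finite.exists_maximalFor (Phi ε w) _ hfin ⟨J, hGJ⟩
  have hGA' : Good ε p w I T J A := hGA
  refine ⟨A, hGA'.1, hGA'.2.1, hGA'.2.2.1, hGA'.2.2.2.1,
    good_profit hε hGA' hJp, hGA'.2.2.2.2.1, ?_⟩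
  rintro ⟨h, h', hh, hcrit, h'I, h'h, h'nc, hst, hww⟩
  obtain ⟨A'', hGA'', hlt⟩ :=
    good_swap hε hε2 hw0 hGA' hh hcrit h'I h'h h'nc hst hww
  exact absurd (hmax hGA'' (le_of_lt hlt)) (not_le.mpr hlt)
end

section
/- There exists a constant ε₀ > 0 such that the following holds for every ε ∈ (0, ε₀]. Let I be a finite set of items where each item i has profit p(i) ≥ 0 and weight w(i) ≥ 0, with p(i) = 0 whenever w(i) = 0, p(i) < 2/3 − 6ε for every i ∈ I, and p(i) ≥ ε whenever w(i) ≥ 1 − ε². Let T ⊆ I be a set of heavy items, and define label weights w̃ for heavy and light-expensive items as in the context. Let H*_1, …, H*_m ⊆ I be sets of heavy items with |H*_j| ≤ 1 for every j. Suppose there exists a slack feasible solution (J_1, …, J_m) such that: p(J_j) ≥ 2/3 − 2ε for every j; for every j, if J_j contains a critical heavy item h then T(h) ≠ ∅ and w(J_j) − w(h) ≤ (1 − ε)(1 − w̃(h)); and for every j the set of critical heavy items in J_j is exactly H*_j. Then there exists a feasible solution (I_1, …, I_m) satisfying: (i) p(I_j) ≥ 2/3 − 3ε for every j; (ii) for every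 j, the set of critical heavy items in I_j is exactly H*_j; (iii) for every j with |I_j| ≥ 3, w(I_j) − w(L*_j) + w̃(L*_j) − w(H*_j) + w̃(H*_j) ≤ 1, where L*_j is the set of critical light items in I_j and w̃ is extended additively to sets; (iv) there is no critical light-expensive item e and non-critical light-expensive item e′ of the same type with w(e) < w(e′). -/
open scoped Classical

universe u

variable {ι : Type u}

/-- The scaling factor `W(e)` for a light-expensive item `e`: if
`T′(e) = {t ∈ T : w e ≤ 1 - w t}` is nonempty then `ε · (1 - max{w t : t ∈ T′(e)})`,
otherwise `ε³`. -/
noncomputable def Wfac (ε : ℝ) (w : ι → ℝ) (T : Finset ι) (e : ι) : ℝ :=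
  if (T.filter (fun t => w e ≤ 1 - w t)).Nonempty then
    ε * (1 - sSup {x : ℝ | ∃ t ∈ T.filter (fun t => w e ≤ 1 - w t), w t = x})
  else ε ^ 3

/-- The label weight of a light-expensive item:
`w̃(e) = ⌈w e / (ε · W(e))⌉ · ε · W(e)`. -/
noncomputable def labelWLight (ε : ℝ) (w : ι → ℝ) (T : Finset ι) (e : ι) : ℝ :=
  (⌈w e / (ε * Wfac ε w T e)⌉ : ℝ) * (ε * Wfac ε w T e)

/-- The label profit of a light-expensive item: `p̃(e) = ⌊p e / ε²⌋ · ε²`. -/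
noncomputable def labelPLight (ε : ℝ) (p : ι → ℝ) (e : ι) : ℝ :=
  (⌊p e / ε ^ 2⌋ : ℝ) * ε ^ 2

/-- Two light-expensive items have the same type if they have equal label weights
and equal label profits. -/
def SameTypeLight (ε : ℝ) (p w : ι → ℝ) (T : Finset ι) (e₁ e₂ : ι) : Prop :=
  labelWLight ε w T e₁ = labelWLight ε w T e₂ ∧
    labelPLight ε p e₁ = labelPLight ε p e₂

section helpers
variable {ι : Type u}

lemma setOf_eq_image (w : ι → ℝ) (F : Finset ι) :
    {x : ℝ | ∃ t ∈ F, w t = x} = ↑(F.image w) := by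
  ext x; simp [eq_comm]

lemma sInf_image_spec {w : ι → ℝ} {F : Finset ι} (hF : F.Nonempty) :
    (∃ t ∈ F, w t = sInf {x : ℝ | ∃ t ∈ F, w t = x}) ∧
      ∀ t ∈ F, sInf {x : ℝ | ∃ t ∈ F, w t = x} ≤ w t := by
  rw [setOf_eq_image]
  have hne : (F.image w).Nonempty := hF.image w
  rw [hne.csInf_eq_min']
  constructor
  · have := (F.image w).min'_mem hne
    simpa [Finset.mem_image] using this
  · intro t ht
    exact Finset.min'_le _ _ (Finset.mem_image_of_mem w ht)

lemma sSup_image_spec {w : ι → ℝ} {F : Finset ι} (hF : F.Nonempty) :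
    (∃ t ∈ F, w t = sSup {x : ℝ | ∃ t ∈ F, w t = x}) ∧
      ∀ t ∈ F, w t ≤ sSup {x : ℝ | ∃ t ∈ F, w t = x} := by
  rw [setOf_eq_image]
  have hne : (F.image w).Nonempty := hF.image w
  rw [hne.csSup_eq_max']
  constructor
  · have := (F.image w).max'_mem hne
    simpa [Finset.mem_image] using this
  · intro t ht
    exact Finset.le_max' _ _ (Finset.mem_image_of_mem w ht)

lemma Wfac_pos {ε : ℝ} {w : ι → ℝ} {T : Finset ι} {e : ι} (hε : 0 < ε)
    (hwe : 0 < w e) : 0 < Wfac ε w T e := by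
  unfold Wfac
  split
  · next hne =>
    obtain ⟨⟨t₀, ht₀, hwt₀⟩, -⟩ := sSup_image_spec (w := w) hne
    have h1 : w e ≤ 1 - w t₀ := (Finset.mem_filter.mp ht₀).2
    have : sSup {x : ℝ | ∃ t ∈ T.filter (fun t => w e ≤ 1 - w t), w t = x} ≤ 1 - w e := by
      rw [← hwt₀]; linarith
    have h2 : 0 < 1 - sSup {x : ℝ | ∃ t ∈ T.filter (fun t => w e ≤ 1 - w t), w t = x} := by
      linarith
    positivity
  · positivity

lemma Wfac_le_of_mem {ε c : ℝ} {w : ι → ℝ} {T : Finset ι} {e t' : ι} (hε : 0 < ε)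
    (ht' : t' ∈ T) (hwt' : w e ≤ 1 - w t') (hc : 1 - w t' ≤ c) :
    Wfac ε w T e ≤ ε * c := by
  have hmem : t' ∈ T.filter (fun t => w e ≤ 1 - w t) := Finset.mem_filter.mpr ⟨ht', hwt'⟩
  have hne : (T.filter (fun t => w e ≤ 1 - w t)).Nonempty := ⟨t', hmem⟩
  unfold Wfac
  rw [if_pos hne]
  obtain ⟨-, hub⟩ := sSup_image_spec (w := w) hne
  have := hub t' hmem
  have : 1 - sSup {x : ℝ | ∃ t ∈ T.filter (fun t => w e ≤ 1 - w t), w t = x} ≤ c := by linarith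
  nlinarith

lemma Wfac_le_cube {ε : ℝ} {w : ι → ℝ} {T : Finset ι} {e : ι} (hε : 0 < ε)
    (hT : ∀ t ∈ T, Heavy ε w t) : Wfac ε w T e ≤ ε ^ 3 := by
  by_cases hne : (T.filter (fun t => w e ≤ 1 - w t)).Nonempty
  · obtain ⟨t', ht'⟩ := hne
    have ht'T := (Finset.mem_filter.mp ht').1
    have hwt' := (Finset.mem_filter.mp ht').2
    have hh : 1 - ε ^ 2 ≤ w t' := hT t' ht'T
    have := Wfac_le_of_mem (c := ε ^ 2) hε ht'T hwt' (by linarith)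
    calc Wfac ε w T e ≤ ε * ε ^ 2 := this
      _ = ε ^ 3 := by ring
  · unfold Wfac; rw [if_neg hne]

lemma le_labelWLight {ε : ℝ} {w : ι → ℝ} {T : Finset ι} {e : ι} (hε : 0 < ε)
    (hwe : 0 < w e) : w e ≤ labelWLight ε w T e := by
  have hy : 0 < ε * Wfac ε w T e := mul_pos hε (Wfac_pos hε hwe)
  unfold labelWLight
  calc w e = (w e / (ε * Wfac ε w T e)) * (ε * Wfac ε w T e) := by rw [div_mul_cancel₀ _ hy.ne']
    _ ≤ _ := by
        have := Int.le_ceil (w e / (ε * Wfac ε w T e))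
        exact mul_le_mul_of_nonneg_right this hy.le

lemma labelWLight_le {ε : ℝ} {w : ι → ℝ} {T : Finset ι} {e : ι} (hε : 0 < ε)
    (hwe : 0 < w e) : labelWLight ε w T e ≤ w e + ε * Wfac ε w T e := by
  have hy : 0 < ε * Wfac ε w T e := mul_pos hε (Wfac_pos hε hwe)
  unfold labelWLight
  have h1 : (⌈w e / (ε * Wfac ε w T e)⌉ : ℝ) < w e / (ε * Wfac ε w T e) + 1 :=
    Int.ceil_lt_add_one _
  have := mul_le_mul_of_nonneg_right h1.le hy.le
  calc (⌈w e / (ε * Wfac ε w T e)⌉ : ℝ) * (ε * Wfac ε w T e)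
      ≤ (w e / (ε * Wfac ε w T e) + 1) * (ε * Wfac ε w T e) := this
    _ = w e + ε * Wfac ε w T e := by rw [add_mul, div_mul_cancel₀ _ hy.ne', one_mul]

lemma labelPLight_le {ε : ℝ} {p : ι → ℝ} {e : ι} (hε : 0 < ε) :
    labelPLight ε p e ≤ p e ∧ p e ≤ labelPLight ε p e + ε ^ 2 := by
  have hy : (0:ℝ) < ε ^ 2 := by positivity
  unfold labelPLight
  constructor
  · calc (⌊p e / ε ^ 2⌋ : ℝ) * ε ^ 2 ≤ (p e / ε ^ 2) * ε ^ 2 :=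
        mul_le_mul_of_nonneg_right (Int.floor_le _) hy.le
      _ = p e := by field_simp
  · have h1 : p e / ε ^ 2 - 1 < (⌊p e / ε ^ 2⌋ : ℝ) := by
      have := Int.lt_floor_add_one (p e / ε ^ 2); linarith
    have h3 := mul_le_mul_of_nonneg_right h1.le hy.le
    rw [sub_mul, div_mul_cancel₀ _ hy.ne'] at h3
    linarith

lemma labelW_spec {ε : ℝ} {p w : ι → ℝ} {T : Finset ι} {h : ι}
    (hne : (TSet ε p w T h).Nonempty) :
    (∃ t ∈ TSet ε p w T h, w t = labelW ε p w T h) ∧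
      w h ≤ labelW ε p w T h := by
  obtain ⟨⟨t, ht, hwt⟩, hlb⟩ := sInf_image_spec (w := w) hne
  refine ⟨⟨t, ht, hwt⟩, ?_⟩
  have : w h ≤ w t := (Finset.mem_filter.mp ht).2.2
  rw [labelW, ← hwt]; exact this

lemma greedy_select {p : ι → ℝ} {E : Finset ι} {ε base θ : ℝ} (hε : 0 < ε)
    (hθ : 0 ≤ θ) (hbase : 0 ≤ base) (hE : ∀ e ∈ E, ε ≤ p e)
    (hreach : θ ≤ base + ∑ e ∈ E, p e) :
    ∃ S ⊆ E, θ ≤ base + ∑ e ∈ S, p e ∧ ((S.card : ℝ) - 1) * ε ≤ θ := by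
  classical
  set 𝒮 := E.powerset.filter (fun S => θ ≤ base + ∑ e ∈ S, p e) with h𝒮
  have hEmem : E ∈ 𝒮 := by
    simp only [h𝒮, Finset.mem_filter, Finset.mem_powerset]
    exact ⟨subset_rfl, hreach⟩
  obtain ⟨S, hS𝒮, hSmin⟩ := Finset.exists_min_image 𝒮 Finset.card ⟨E, hEmem⟩
  have hSsub : S ⊆ E := Finset.mem_powerset.mp (Finset.mem_filter.mp hS𝒮).1
  have hSgood : θ ≤ base + ∑ e ∈ S, p e := (Finset.mem_filter.mp hS𝒮).2
  refine ⟨S, hSsub, hSgood, ?_⟩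
  rcases S.eq_empty_or_nonempty with rfl | ⟨s, hs⟩
  · simp; nlinarith
  · have herase : S.erase s ∉ 𝒮 := by
      intro hmem
      have := hSmin _ hmem
      have hlt : (S.erase s).card < S.card := Finset.card_erase_lt_of_mem hs
      omega
    have herase' : ¬ (θ ≤ base + ∑ e ∈ S.erase s, p e) := by
      intro hcon
      exact herase (by
        simp only [h𝒮, Finset.mem_filter, Finset.mem_powerset]
        exact ⟨(Finset.erase_subset s S).trans hSsub, hcon⟩)
    push_neg at herase'
    have hcard : ((S.erase s).card : ℝ) * ε ≤ ∑ e ∈ S.erase s, p e := by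
      have := Finset.card_nsmul_le_sum (S.erase s) p ε
        (fun x hx => hE x (hSsub (Finset.mem_of_mem_erase hx)))
      simpa [nsmul_eq_mul] using this
    have hc : (S.erase s).card = S.card - 1 := Finset.card_erase_of_mem hs
    have hc1 : 1 ≤ S.card := Finset.card_pos.mpr ⟨s, hs⟩
    have hcR : ((S.erase s).card : ℝ) = (S.card : ℝ) - 1 := by
      rw [hc]; push_cast [hc1]; ring
    rw [hcR] at hcard
    linarith

lemma exists_pad {s t : Finset ι} (hst : s ⊆ t) (ht : 3 ≤ t.card) :
    ∃ u, s ⊆ u ∧ u ⊆ t ∧ 3 ≤ u.card ∧ u.card ≤ max s.card 3 := by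
  rcases le_or_gt 3 s.card with h | h
  · exact ⟨s, subset_rfl, hst, h, le_max_left _ _⟩
  · obtain ⟨u, h1, h2, h3⟩ := Finset.exists_subsuperset_card_eq (n := 3) hst
      (by omega) (by omega)
    exact ⟨u, h1, h2, by omega, by omega⟩

lemma sum_exchange {B : Finset ι} {e e' : ι} (f : ι → ℝ) (he : e ∈ B) (he' : e' ∉ B) :
    ∑ i ∈ insert e' (B.erase e), f i = ∑ i ∈ B, f i - f e + f e' := by
  classical
  rw [Finset.sum_insert (fun h => he' (Finset.mem_of_mem_erase h)),
    Finset.sum_erase_eq_sub he]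
  ring

lemma card_exchange {B : Finset ι} {e e' : ι} (he : e ∈ B) (he' : e' ∉ B) :
    (insert e' (B.erase e)).card = B.card := by
  classical
  rw [Finset.card_insert_of_notMem (fun h => he' (Finset.mem_of_mem_erase h)),
    Finset.card_erase_of_mem he]
  have : 1 ≤ B.card := Finset.card_pos.mpr ⟨e, he⟩
  omega

end helpers

set_option maxHeartbeats 1600000 in
/-- Lemma 4.10: given the guessed critical heavy items `H* j` and a slack solution
`J` of value at least `2/3 - 2ε` whose critical heavy items are exactly the `H* j`
and which satisfies the profile inequality with label weights, there is a feasible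
solution of value at least `2/3 - 3ε` with the same critical heavy items, whose
label-weight rounding is feasible in every knapsack with at least three items, and
in which, within each type, every critical light-expensive item is at least as
heavy as every non-critical light-expensive item. -/
theorem stmt9 : ∃ ε₀ : ℝ, 0 < ε₀ ∧
    ∀ ε : ℝ, 0 < ε → ε ≤ ε₀ →
    ∀ (ι : Type u) (p w : ι → ℝ) (I : Finset ι) (m : ℕ)
      (T : Finset ι) (Hstar : Fin m → Finset ι) (J : Fin m → Finset ι),
      (∀ i ∈ I, 0 ≤ p i) → (∀ i ∈ I, 0 ≤ w i) →
      (∀ i ∈ I, w i = 0 → p i = 0) →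
      (∀ i ∈ I, p i < 2/3 - 6 * ε) →
      (∀ i ∈ I, Heavy ε w i → Expensive ε p i) →
      T ⊆ I → (∀ t ∈ T, Heavy ε w t) →
      (∀ j, ∀ h ∈ Hstar j, Heavy ε w h) → (∀ j, (Hstar j).card ≤ 1) →
      (∀ j, J j ⊆ I) → (∀ j j', j ≠ j' → Disjoint (J j) (J j')) →
      (∀ j, ∑ i ∈ J j, w i ≤ 1) →
      Slack ε w J →
      (∀ j, 2/3 - 2 * ε ≤ ∑ i ∈ J j, p i) →
      (∀ j : Fin m, ∀ h ∈ J j, Heavy ε w h → 3 ≤ (J j).card →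
        (TSet ε p w T h).Nonempty ∧
        (∑ i ∈ J j, w i) - w h ≤ (1 - ε) * (1 - labelW ε p w T h)) →
      (∀ j : Fin m, ∀ i : ι,
        i ∈ Hstar j ↔ (i ∈ J j ∧ Heavy ε w i ∧ 3 ≤ (J j).card)) →
      ∃ A : Fin m → Finset ι,
        (∀ j, A j ⊆ I) ∧ (∀ j j', j ≠ j' → Disjoint (A j) (A j')) ∧
        (∀ j, ∑ i ∈ A j, w i ≤ 1) ∧
        (∀ j, 2/3 - 3 * ε ≤ ∑ i ∈ A j, p i) ∧
        (∀ j : Fin m, ∀ i : ι,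
          i ∈ Hstar j ↔ (i ∈ A j ∧ Heavy ε w i ∧ 3 ≤ (A j).card)) ∧
        (∀ j : Fin m, 3 ≤ (A j).card →
          (∑ i ∈ A j, w i)
            - (∑ i ∈ (A j).filter (fun i => ¬ Heavy ε w i ∧ Expensive ε p i), w i)
            + (∑ i ∈ (A j).filter (fun i => ¬ Heavy ε w i ∧ Expensive ε p i),
                labelWLight ε w T i)
            - (∑ i ∈ Hstar j, w i)
            + (∑ i ∈ Hstar j, labelW ε p w T i) ≤ 1) ∧
        (¬ ∃ e e', (¬ Heavy ε w e ∧ Expensive ε p e) ∧ Critical ε p w A e ∧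
          e' ∈ I ∧ (¬ Heavy ε w e' ∧ Expensive ε p e') ∧ ¬ Critical ε p w A e' ∧
          SameTypeLight ε p w T e e' ∧ w e < w e') := by
  refine ⟨1/9, by norm_num, ?_⟩
  intro ε hε hε9 ι p w I m T Hstar J hp0 hw0 hwp0 hplt hHE hTI hTheavy hHheavy
    hHcard hJI hJdisj hJw hslack hJp hJlab hJiff
  classical
  have hε1 : ε ≤ 1 := by linarith
  -- basic facts
  have hwpos : ∀ i ∈ I, Expensive ε p i → 0 < w i := by
    intro i hi hexp
    rcases (hw0 i hi).lt_or_eq with h | h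
    · exact h
    · exfalso
      have := hwp0 i hi h.symm
      have : ε ≤ (0:ℝ) := by rw [← this]; exact hexp
      linarith
  have hHlabB : ∀ j : Fin m, ∀ h ∈ Hstar j,
      (TSet ε p w T h).Nonempty ∧ w h ≤ labelW ε p w T h := by
    intro j h hh
    obtain ⟨hJm, hhv, hc3⟩ := (hJiff j h).mp hh
    obtain ⟨hne, -⟩ := hJlab j h hJm hhv hc3
    exact ⟨hne, (labelW_spec hne).2⟩
  have hHsum : ∀ j : Fin m, ∑ i ∈ Hstar j, w i ≤ ∑ i ∈ Hstar j, labelW ε p w T i :=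
    fun j => Finset.sum_le_sum (fun h hh => (hHlabB j h hh).2)
  have hLEsum : ∀ B : Finset ι, B ⊆ I →
      ∑ i ∈ B.filter (fun i => ¬ Heavy ε w i ∧ Expensive ε p i), w i ≤
        ∑ i ∈ B.filter (fun i => ¬ Heavy ε w i ∧ Expensive ε p i), labelWLight ε w T i := by
    intro B hBI
    refine Finset.sum_le_sum (fun i hi => ?_)
    have hmem := Finset.mem_filter.mp hi
    exact le_labelWLight hε (hwpos i (hBI hmem.1) hmem.2.2)
  have hQsum0 : ∀ B : Finset ι,
      0 ≤ ∑ i ∈ B.filter (fun i => ¬ Heavy ε w i ∧ Expensive ε p i),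
        (p i - labelPLight ε p i) := by
    intro B
    refine Finset.sum_nonneg (fun i _ => ?_)
    have := (labelPLight_le (p := p) (e := i) hε).1
    linarith
  have hQsum : ∀ B : Finset ι,
      ∑ i ∈ B.filter (fun i => ¬ Heavy ε w i ∧ Expensive ε p i),
        (p i - labelPLight ε p i) ≤
      ((B.filter (fun i => ¬ Heavy ε w i ∧ Expensive ε p i)).card : ℝ) * ε ^ 2 := by
    intro B
    have := Finset.sum_le_card_nsmul
      (B.filter (fun i => ¬ Heavy ε w i ∧ Expensive ε p i))
      (fun i => p i - labelPLight ε p i) (ε ^ 2)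
      (fun i _ => by
        show p i - labelPLight ε p i ≤ ε ^ 2
        have := (labelPLight_le (p := p) (e := i) hε).2; linarith)
    simpa [nsmul_eq_mul] using this
  -- the invariant predicate
  set P : (Fin m → Finset ι) → Prop := fun A =>
    (∀ j, A j ⊆ I) ∧ (∀ j j', j ≠ j' → Disjoint (A j) (A j')) ∧
    (∀ j, (A j).card ≤ 2 → ∑ i ∈ A j, w i ≤ 1) ∧
    (∀ j, 3 ≤ (A j).card →
      (∑ i ∈ A j, w i)
        - (∑ i ∈ (A j).filter (fun i => ¬ Heavy ε w i ∧ Expensive ε p i), w i)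
        + (∑ i ∈ (A j).filter (fun i => ¬ Heavy ε w i ∧ Expensive ε p i),
            labelWLight ε w T i)
        - (∑ i ∈ Hstar j, w i)
        + (∑ i ∈ Hstar j, labelW ε p w T i) ≤ 1) ∧
    (∀ j : Fin m, ∀ i : ι,
      i ∈ Hstar j ↔ (i ∈ A j ∧ Heavy ε w i ∧ 3 ≤ (A j).card)) ∧
    (∀ j, 2/3 - 3 * ε ≤ (∑ i ∈ A j, p i)
        - ∑ i ∈ (A j).filter (fun i => ¬ Heavy ε w i ∧ Expensive ε p i),
            (p i - labelPLight ε p i)) with hPdef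
  -- every P-solution is feasible and has large profit
  have hPw : ∀ A, P A → ∀ j, ∑ i ∈ A j, w i ≤ 1 := by
    intro A hA j
    obtain ⟨hsub, -, hw2, hvi, -, -⟩ := hA
    rcases le_or_gt 3 (A j).card with h3 | h3
    · have h1 := hvi j h3
      have h2 := hLEsum (A j) (hsub j)
      have h3' := hHsum j
      linarith
    · exact hw2 j (by omega)
  have hPp : ∀ A, P A → ∀ j, 2/3 - 3 * ε ≤ ∑ i ∈ A j, p i := by
    intro A hA j
    obtain ⟨-, -, -, -, -, hQ⟩ := hA
    have := hQsum0 (A j)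
    linarith [hQ j]
  -- construction of the initial solution
  have hA0ex : ∀ j : Fin m, ∃ B : Finset ι, B ⊆ J j ∧
      (3 ≤ B.card →
        (∑ i ∈ B, w i)
          - (∑ i ∈ B.filter (fun i => ¬ Heavy ε w i ∧ Expensive ε p i), w i)
          + (∑ i ∈ B.filter (fun i => ¬ Heavy ε w i ∧ Expensive ε p i),
              labelWLight ε w T i)
          - (∑ i ∈ Hstar j, w i)
          + (∑ i ∈ Hstar j, labelW ε p w T i) ≤ 1) ∧
      (∀ i : ι, i ∈ Hstar j ↔ (i ∈ B ∧ Heavy ε w i ∧ 3 ≤ B.card)) ∧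
      (2/3 - 3 * ε ≤ (∑ i ∈ B, p i)
        - ∑ i ∈ B.filter (fun i => ¬ Heavy ε w i ∧ Expensive ε p i),
            (p i - labelPLight ε p i)) := by
    intro j
    by_cases hc3 : 3 ≤ (J j).card
    · by_cases hh : ∃ h ∈ J j, Heavy ε w h
      · -- heavy knapsack
        obtain ⟨h, hhJ, hheavy⟩ := hh
        have hhH : h ∈ Hstar j := (hJiff j h).mpr ⟨hhJ, hheavy, hc3⟩
        have huniq : ∀ i ∈ J j, Heavy ε w i → i = h := fun i hi hiv =>
          Finset.card_le_one.mp (hHcard j) i ((hJiff j i).mpr ⟨hi, hiv, hc3⟩) h hhH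
        have hHj : Hstar j = {h} :=
          Finset.eq_singleton_iff_unique_mem.mpr
            ⟨hhH, fun x hx => Finset.card_le_one.mp (hHcard j) x hx h hhH⟩
        obtain ⟨hTne, hJw'⟩ := hJlab j h hhJ hheavy hc3
        obtain ⟨⟨t0, ht0TS, hwt0⟩, hwh_le⟩ := labelW_spec hTne
        have ht0T : t0 ∈ T := (Finset.mem_filter.mp ht0TS).1
        have herase0 : (0:ℝ) ≤ ∑ i ∈ (J j).erase h, w i :=
          Finset.sum_nonneg (fun i hi => hw0 i (hJI j (Finset.mem_of_mem_erase hi)))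
        have heraseJ : ∑ i ∈ (J j).erase h, w i = ∑ i ∈ J j, w i - w h :=
          Finset.sum_erase_eq_sub hhJ
        have hprod : (0:ℝ) ≤ (1 - ε) * (1 - labelW ε p w T h) := by
          rw [heraseJ] at herase0; linarith
        have hε' : (0:ℝ) < 1 - ε := by linarith
        have h1lw : 0 ≤ 1 - labelW ε p w T h := by nlinarith [hprod, hε']
        -- greedy selection of expensive light items
        have hbase0 : 0 ≤ ∑ i ∈ (J j).filter
            (fun i => ¬ (¬ Heavy ε w i ∧ Expensive ε p i)), p i :=
          Finset.sum_nonneg (fun i hi => hp0 i (hJI j (Finset.filter_subset _ _ hi)))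
        have hsplit := Finset.sum_filter_add_sum_filter_not (J j)
          (fun i => ¬ Heavy ε w i ∧ Expensive ε p i) p
        have hreach : 2/3 - 2*ε ≤ (∑ i ∈ (J j).filter
            (fun i => ¬ (¬ Heavy ε w i ∧ Expensive ε p i)), p i) +
            ∑ e ∈ (J j).filter (fun i => ¬ Heavy ε w i ∧ Expensive ε p i), p e := by
          linarith [hJp j]
        obtain ⟨S, hSE, hSp, hScard⟩ := greedy_select hε (by linarith) hbase0
          (fun e he => (Finset.mem_filter.mp he).2.2) hreach
        set B₀ := ((J j).filter (fun i => ¬ (¬ Heavy ε w i ∧ Expensive ε p i))) ∪ S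
          with hB₀def
        have hB0J : B₀ ⊆ J j :=
          Finset.union_subset (Finset.filter_subset _ _)
            (hSE.trans (Finset.filter_subset _ _))
        have hhB0 : h ∈ B₀ := Finset.mem_union_left _
          (Finset.mem_filter.mpr ⟨hhJ, fun hcon => hcon.1 hheavy⟩)
        obtain ⟨B, hB0B, hBJ, hB3, hBle⟩ := exists_pad hB0J hc3
        have hhB : h ∈ B := hB0B hhB0
        -- the light-expensive items of B
        have hFsub : B.filter (fun i => ¬ Heavy ε w i ∧ Expensive ε p i) ⊆ S ∪ (B \ B₀) := by
          intro x hx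
          obtain ⟨hxB, hxLE⟩ := Finset.mem_filter.mp hx
          by_cases hxB0 : x ∈ B₀
          · rcases Finset.mem_union.mp hxB0 with hxC | hxS
            · exact absurd hxLE (Finset.mem_filter.mp hxC).2
            · exact Finset.mem_union_left _ hxS
          · exact Finset.mem_union_right _ (Finset.mem_sdiff.mpr ⟨hxB, hxB0⟩)
        have hcardB : B.card ≤ B₀.card + 2 := by
          have h1 : 1 ≤ B₀.card := Finset.card_pos.mpr ⟨h, hhB0⟩
          rcases max_cases B₀.card 3 with ⟨hm, -⟩ | ⟨hm, -⟩ <;> omega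
        have hcardF : (B.filter (fun i => ¬ Heavy ε w i ∧ Expensive ε p i)).card
            ≤ S.card + 2 := by
          calc (B.filter (fun i => ¬ Heavy ε w i ∧ Expensive ε p i)).card
              ≤ (S ∪ (B \ B₀)).card := Finset.card_le_card hFsub
            _ ≤ S.card + (B \ B₀).card := Finset.card_union_le _ _
            _ = S.card + (B.card - B₀.card) := by rw [Finset.card_sdiff_of_subset hB0B]
            _ ≤ S.card + 2 := by omega
        have hcFe : ((B.filter (fun i => ¬ Heavy ε w i ∧ Expensive ε p i)).card : ℝ) * ε
            ≤ 2/3 + ε := by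
          have h1 : ((B.filter (fun i => ¬ Heavy ε w i ∧ Expensive ε p i)).card : ℝ)
              ≤ (S.card : ℝ) + 2 := by exact_mod_cast hcardF
          have h2 := mul_le_mul_of_nonneg_right h1 hε.le
          nlinarith [hScard]
        have hcFe2 : ((B.filter (fun i => ¬ Heavy ε w i ∧ Expensive ε p i)).card : ℝ) * ε ^ 2
            ≤ ε := by
          have hcnn : (0:ℝ) ≤ ((B.filter (fun i => ¬ Heavy ε w i ∧ Expensive ε p i)).card : ℝ) :=
            Nat.cast_nonneg _
          nlinarith [hcFe, hε, hcnn]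
        -- per-item label bound
        have hlabF : ∀ i ∈ B.filter (fun i => ¬ Heavy ε w i ∧ Expensive ε p i),
            labelWLight ε w T i ≤ w i + ε ^ 2 * (1 - labelW ε p w T h) := by
          intro i hi
          obtain ⟨hiB, hiH, hiE⟩ := Finset.mem_filter.mp hi
          have hiJ : i ∈ J j := hBJ hiB
          have hiI : i ∈ I := hJI j hiJ
          have hwi : 0 < w i := hwpos i hiI hiE
          have hine : i ≠ h := fun hcon => hiH (hcon ▸ hheavy)
          have hwi_le : w i ≤ ∑ x ∈ (J j).erase h, w x :=
            Finset.single_le_sum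
              (fun x hx => hw0 x (hJI j (Finset.mem_of_mem_erase hx)))
              (Finset.mem_erase.mpr ⟨hine, hiJ⟩)
          have hwi_le2 : w i ≤ 1 - labelW ε p w T h := by
            rw [heraseJ] at hwi_le
            nlinarith [hJw', h1lw, hε]
          have hWle : Wfac ε w T i ≤ ε * (1 - labelW ε p w T h) :=
            Wfac_le_of_mem hε ht0T (by rw [hwt0]; exact hwi_le2) (by rw [hwt0])
          have h1 := labelWLight_le (T := T) hε hwi
          have h2 := mul_le_mul_of_nonneg_left hWle hε.le
          have h3 : ε * (ε * (1 - labelW ε p w T h)) = ε ^ 2 * (1 - labelW ε p w T h) := by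
            ring
          linarith
        have hlabsum : ∑ i ∈ B.filter (fun i => ¬ Heavy ε w i ∧ Expensive ε p i),
              labelWLight ε w T i
            ≤ (∑ i ∈ B.filter (fun i => ¬ Heavy ε w i ∧ Expensive ε p i), w i)
              + ((B.filter (fun i => ¬ Heavy ε w i ∧ Expensive ε p i)).card : ℝ)
                * (ε ^ 2 * (1 - labelW ε p w T h)) := by
          calc ∑ i ∈ B.filter (fun i => ¬ Heavy ε w i ∧ Expensive ε p i),
                labelWLight ε w T i
              ≤ ∑ i ∈ B.filter (fun i => ¬ Heavy ε w i ∧ Expensive ε p i),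
                (w i + ε ^ 2 * (1 - labelW ε p w T h)) := Finset.sum_le_sum hlabF
            _ = _ := by rw [Finset.sum_add_distrib, Finset.sum_const, nsmul_eq_mul]
        have hwBer : ∑ i ∈ B, w i - w h ≤ (1 - ε) * (1 - labelW ε p w T h) := by
          have h1 : ∑ i ∈ B.erase h, w i = ∑ i ∈ B, w i - w h :=
            Finset.sum_erase_eq_sub hhB
          have h2 : ∑ i ∈ B.erase h, w i ≤ ∑ i ∈ (J j).erase h, w i :=
            Finset.sum_le_sum_of_subset_of_nonneg
              (Finset.erase_subset_erase h hBJ)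
              (fun x hx _ => hw0 x (hJI j (Finset.mem_of_mem_erase hx)))
          rw [heraseJ] at h2
          linarith
        refine ⟨B, hBJ, ?_, ?_, ?_⟩
        · -- the VI inequality
          intro _
          rw [hHj, Finset.sum_singleton, Finset.sum_singleton]
          have hmul := mul_le_mul_of_nonneg_right hcFe2 h1lw
          nlinarith [hlabsum, hwBer, hwh_le]
        · -- the Hstar characterization
          intro i
          rw [hHj, Finset.mem_singleton]
          constructor
          · rintro rfl; exact ⟨hhB, hheavy, hB3⟩
          · rintro ⟨hiB, hiv, -⟩; exact huniq i (hBJ hiB) hiv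
        · -- profit invariant
          have hBp : ∑ i ∈ B₀, p i ≤ ∑ i ∈ B, p i :=
            Finset.sum_le_sum_of_subset_of_nonneg hB0B
              (fun x hx _ => hp0 x (hJI j (hBJ hx)))
          have hdisjCS : Disjoint ((J j).filter
              (fun i => ¬ (¬ Heavy ε w i ∧ Expensive ε p i))) S := by
            rw [Finset.disjoint_left]
            intro x hxC hxS
            exact (Finset.mem_filter.mp hxC).2 (Finset.mem_filter.mp (hSE hxS)).2
          have hB0p : ∑ i ∈ B₀, p i = (∑ i ∈ (J j).filter
              (fun i => ¬ (¬ Heavy ε w i ∧ Expensive ε p i)), p i) + ∑ i ∈ S, p i := by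
            rw [hB₀def, Finset.sum_union hdisjCS]
          have hq1 := hQsum B
          linarith [hcFe2, hSp]
      · -- all-light knapsack
        have hxor := hslack j hc3
        unfold Xor' at hxor
        rcases hxor with ⟨⟨hlight, hwJ⟩, -⟩ | ⟨⟨h, hhJ, hheavy, -⟩, -⟩
        swap
        · exact absurd ⟨h, hhJ, hheavy⟩ hh
        have hHempty : Hstar j = ∅ := by
          rw [Finset.eq_empty_iff_forall_notMem]
          intro i hi
          obtain ⟨hiJ, hiv, -⟩ := (hJiff j i).mp hi
          exact hh ⟨i, hiJ, hiv⟩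
        have hbase0 : 0 ≤ ∑ i ∈ (J j).filter
            (fun i => ¬ (¬ Heavy ε w i ∧ Expensive ε p i)), p i :=
          Finset.sum_nonneg (fun i hi => hp0 i (hJI j (Finset.filter_subset _ _ hi)))
        have hsplit := Finset.sum_filter_add_sum_filter_not (J j)
          (fun i => ¬ Heavy ε w i ∧ Expensive ε p i) p
        have hreach : 2/3 - 2*ε ≤ (∑ i ∈ (J j).filter
            (fun i => ¬ (¬ Heavy ε w i ∧ Expensive ε p i)), p i) +
            ∑ e ∈ (J j).filter (fun i => ¬ Heavy ε w i ∧ Expensive ε p i), p e := by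
          linarith [hJp j]
        obtain ⟨S, hSE, hSp, hScard⟩ := greedy_select hε (by linarith) hbase0
          (fun e he => (Finset.mem_filter.mp he).2.2) hreach
        set B := ((J j).filter (fun i => ¬ (¬ Heavy ε w i ∧ Expensive ε p i))) ∪ S
          with hBdef
        have hBJ : B ⊆ J j :=
          Finset.union_subset (Finset.filter_subset _ _)
            (hSE.trans (Finset.filter_subset _ _))
        have hFB : B.filter (fun i => ¬ Heavy ε w i ∧ Expensive ε p i) = S := by
          ext x
          simp only [Finset.mem_filter, hBdef, Finset.mem_union]
          constructor
          · rintro ⟨hC | hS, hLE⟩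
            · exact absurd hLE hC.2
            · exact hS
          · intro hS
            exact ⟨Or.inr hS, (Finset.mem_filter.mp (hSE hS)).2⟩
        have hdisjCS : Disjoint ((J j).filter
            (fun i => ¬ (¬ Heavy ε w i ∧ Expensive ε p i))) S := by
          rw [Finset.disjoint_left]
          intro x hxC hxS
          exact (Finset.mem_filter.mp hxC).2 (Finset.mem_filter.mp (hSE hxS)).2
        have hBp : ∑ i ∈ B, p i = (∑ i ∈ (J j).filter
            (fun i => ¬ (¬ Heavy ε w i ∧ Expensive ε p i)), p i) + ∑ i ∈ S, p i := by
          rw [hBdef, Finset.sum_union hdisjCS]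
        have hcSe : ((S.card : ℝ)) * ε ≤ 2/3 - ε := by nlinarith [hScard]
        refine ⟨B, hBJ, ?_, ?_, ?_⟩
        · -- VI
          intro _
          rw [hHempty, hFB]
          simp only [Finset.sum_empty]
          have hwB : ∑ i ∈ B, w i ≤ 1 - ε ^ 3 := by
            refine le_trans (Finset.sum_le_sum_of_subset_of_nonneg hBJ
              (fun x hx _ => hw0 x (hJI j hx))) hwJ
          have hlabS : ∑ i ∈ S, labelWLight ε w T i
              ≤ (∑ i ∈ S, w i) + (S.card : ℝ) * ε ^ 4 := by
            calc ∑ i ∈ S, labelWLight ε w T i ≤ ∑ i ∈ S, (w i + ε ^ 4) := by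
                  refine Finset.sum_le_sum (fun i hi => ?_)
                  have hiJ : i ∈ J j := (Finset.filter_subset _ _) (hSE hi)
                  have hiE : Expensive ε p i := (Finset.mem_filter.mp (hSE hi)).2.2
                  have hwi : 0 < w i := hwpos i (hJI j hiJ) hiE
                  have h1 := labelWLight_le (T := T) hε hwi
                  have h2 : Wfac ε w T i ≤ ε ^ 3 := Wfac_le_cube hε hTheavy
                  nlinarith
              _ = _ := by rw [Finset.sum_add_distrib, Finset.sum_const, nsmul_eq_mul]
          have hS4 : (S.card : ℝ) * ε ^ 4 ≤ ε ^ 3 := by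
            nlinarith [mul_le_mul_of_nonneg_right hcSe (pow_nonneg hε.le 3),
              pow_nonneg hε.le 3, hε]
          linarith
        · intro i
          rw [hHempty]
          simp only [Finset.notMem_empty, false_iff]
          rintro ⟨hiB, hiv, -⟩
          exact hh ⟨i, hBJ hiB, hiv⟩
        · rw [hFB, hBp]
          have h1 : ∑ i ∈ S, (p i - labelPLight ε p i) ≤ (S.card : ℝ) * ε ^ 2 := by
            have := Finset.sum_le_card_nsmul S (fun i => p i - labelPLight ε p i) (ε ^ 2)
              (fun i _ => by
                show p i - labelPLight ε p i ≤ ε ^ 2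
                have := (labelPLight_le (p := p) (e := i) hε).2; linarith)
            simpa [nsmul_eq_mul] using this
          have h2 : (S.card : ℝ) * ε ^ 2 ≤ ε := by
            nlinarith [mul_le_mul_of_nonneg_right hcSe hε.le, hε]
          linarith [hSp]
    · -- small knapsack : take B = J j
      refine ⟨J j, subset_rfl, fun h3 => absurd h3 hc3, fun i => hJiff j i, ?_⟩
      have hcF : ((J j).filter (fun i => ¬ Heavy ε w i ∧ Expensive ε p i)).card ≤ 2 := by
        have := Finset.card_filter_le (J j) (fun i => ¬ Heavy ε w i ∧ Expensive ε p i)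
        omega
      have h1 := hQsum (J j)
      have h2 : (((J j).filter (fun i => ¬ Heavy ε w i ∧ Expensive ε p i)).card : ℝ)
          * ε ^ 2 ≤ 2 * ε ^ 2 := by
        have : (((J j).filter (fun i => ¬ Heavy ε w i ∧ Expensive ε p i)).card : ℝ) ≤ 2 := by
          exact_mod_cast hcF
        nlinarith [sq_nonneg ε]
      nlinarith [hJp j, hε]

  choose A0 hA0J hA0vi hA0iff hA0Q using hA0ex
  have hA0P : P A0 := by
    refine ⟨fun j => (hA0J j).trans (hJI j),
      fun j j' hne => Finset.disjoint_of_subset_left (hA0J j)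
        (Finset.disjoint_of_subset_right (hA0J j') (hJdisj j j' hne)),
      fun j _ => le_trans (Finset.sum_le_sum_of_subset_of_nonneg (hA0J j)
        (fun i hi _ => hw0 i (hJI j hi))) (hJw j),
      hA0vi, hA0iff, hA0Q⟩
  -- maximize the weight of critical light-expensive items
  set Φ : (Fin m → Finset ι) → ℝ := fun A =>
    ∑ j : Fin m, if 3 ≤ (A j).card then
      ∑ i ∈ (A j).filter (fun i => ¬ Heavy ε w i ∧ Expensive ε p i), w i
    else 0 with hΦdef
  have hfin : {A : Fin m → Finset ι | P A}.Finite := by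
    refine Set.Finite.subset (Set.Finite.pi (fun _ : Fin m => I.powerset.finite_toSet)) ?_
    intro A hA
    rw [Set.mem_pi]
    intro j _
    exact Finset.mem_coe.mpr (Finset.mem_powerset.mpr (hA.1 j))
  obtain ⟨A, hAP, hAmax⟩ := hfin.exists_maximalFor Φ _ ⟨A0, hA0P⟩
  obtain ⟨hsub, hdisj, hw2, hvi, hiff, hQb⟩ := hAP
  have hAPP : P A := ⟨hsub, hdisj, hw2, hvi, hiff, hQb⟩
  refine ⟨A, hsub, hdisj, hPw A hAPP, hPp A hAPP, hiff, hvi, ?_⟩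
  -- no violating pair, by maximality
  rintro ⟨e, e', ⟨heH, heE⟩, ⟨-, j₀, hej₀, hc₀⟩, he'I, ⟨he'H, he'E⟩, he'nc,
    ⟨hstW, hstP⟩, hwlt⟩
  have heI : e ∈ I := hsub j₀ hej₀
  have hene' : e ≠ e' := fun hcon => absurd hwlt (by rw [hcon]; exact lt_irrefl _)
  have he'small : ∀ jj, e' ∈ A jj → (A jj).card ≤ 2 := by
    intro jj hjj
    by_contra hgt
    exact he'nc ⟨Or.inr he'E, jj, hjj, by omega⟩
  have he'j₀ : e' ∉ A j₀ := fun hmem => by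
    have := he'small j₀ hmem; omega
  have he_only : ∀ jj, e ∈ A jj → jj = j₀ := by
    intro jj hjj
    by_contra hne
    exact (Finset.disjoint_left.mp (hdisj jj j₀ hne) hjj) hej₀
  set A' : Fin m → Finset ι := fun jj =>
    if jj = j₀ then insert e' ((A j₀).erase e)
    else if e' ∈ A jj then insert e ((A jj).erase e') else A jj with hA'def
  have hA'j₀ : A' j₀ = insert e' ((A j₀).erase e) := by simp [hA'def]
  have hA'of : ∀ jj, jj ≠ j₀ → e' ∈ A jj → A' jj = insert e ((A jj).erase e') := by
    intro jj h1 h2; simp [hA'def, h1, h2]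
  have hA'none : ∀ jj, jj ≠ j₀ → e' ∉ A jj → A' jj = A jj := by
    intro jj h1 h2; simp [hA'def, h1, h2]
  have henotin : ∀ jj, jj ≠ j₀ → e ∉ A jj := fun jj h1 h2 => h1 (he_only jj h2)
  have hcard' : ∀ jj, (A' jj).card = (A jj).card := by
    intro jj
    by_cases h1 : jj = j₀
    · subst h1; rw [hA'j₀]; exact card_exchange hej₀ he'j₀
    · by_cases h2 : e' ∈ A jj
      · rw [hA'of jj h1 h2]; exact card_exchange h2 (henotin jj h1)
      · rw [hA'none jj h1 h2]
  have hsumj₀ : ∀ f : ι → ℝ, ∑ i ∈ A' j₀, f i = (∑ i ∈ A j₀, f i) - f e + f e' := by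
    intro f; rw [hA'j₀]; exact sum_exchange f hej₀ he'j₀
  have hfiltj₀ : (A' j₀).filter (fun i => ¬ Heavy ε w i ∧ Expensive ε p i)
      = insert e' (((A j₀).filter (fun i => ¬ Heavy ε w i ∧ Expensive ε p i)).erase e) := by
    rw [hA'j₀, Finset.filter_insert, if_pos (⟨he'H, he'E⟩ : ¬ Heavy ε w e' ∧ Expensive ε p e'),
      Finset.filter_erase]
  have hefilt : e ∈ (A j₀).filter (fun i => ¬ Heavy ε w i ∧ Expensive ε p i) :=
    Finset.mem_filter.mpr ⟨hej₀, heH, heE⟩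
  have he'filt : e' ∉ (A j₀).filter (fun i => ¬ Heavy ε w i ∧ Expensive ε p i) :=
    fun hcon => he'j₀ (Finset.mem_filter.mp hcon).1
  have hsumfj₀ : ∀ f : ι → ℝ,
      ∑ i ∈ (A' j₀).filter (fun i => ¬ Heavy ε w i ∧ Expensive ε p i), f i
        = (∑ i ∈ (A j₀).filter (fun i => ¬ Heavy ε w i ∧ Expensive ε p i), f i)
          - f e + f e' := by
    intro f; rw [hfiltj₀]; exact sum_exchange f hefilt he'filt
  have hsumj₁ : ∀ jj, jj ≠ j₀ → e' ∈ A jj → ∀ f : ι → ℝ,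
      ∑ i ∈ A' jj, f i = (∑ i ∈ A jj, f i) - f e' + f e := by
    intro jj h1 h2 f; rw [hA'of jj h1 h2]; exact sum_exchange f h2 (henotin jj h1)
  have hsumfj₁ : ∀ jj, jj ≠ j₀ → e' ∈ A jj → ∀ f : ι → ℝ,
      ∑ i ∈ (A' jj).filter (fun i => ¬ Heavy ε w i ∧ Expensive ε p i), f i
        = (∑ i ∈ (A jj).filter (fun i => ¬ Heavy ε w i ∧ Expensive ε p i), f i)
          - f e' + f e := by
    intro jj h1 h2 f
    rw [hA'of jj h1 h2, Finset.filter_insert,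
      if_pos (⟨heH, heE⟩ : ¬ Heavy ε w e ∧ Expensive ε p e), Finset.filter_erase]
    exact sum_exchange f (Finset.mem_filter.mpr ⟨h2, he'H, he'E⟩)
      (fun hcon => henotin jj h1 (Finset.mem_filter.mp hcon).1)
  have hmem' : ∀ jj x, x ∈ A' jj →
      (x ∈ A jj ∧ x ≠ e' ∧ (jj = j₀ → x ≠ e)) ∨ (jj = j₀ ∧ x = e') ∨
        (jj ≠ j₀ ∧ e' ∈ A jj ∧ x = e) := by
    intro jj x hx
    by_cases h1 : jj = j₀
    · subst h1
      rw [hA'j₀, Finset.mem_insert, Finset.mem_erase] at hx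
      rcases hx with rfl | ⟨hxe, hxA⟩
      · exact Or.inr (Or.inl ⟨rfl, rfl⟩)
      · exact Or.inl ⟨hxA, fun hcon => he'j₀ (hcon ▸ hxA), fun _ => hxe⟩
    · by_cases h2 : e' ∈ A jj
      · rw [hA'of jj h1 h2, Finset.mem_insert, Finset.mem_erase] at hx
        rcases hx with rfl | ⟨hxe, hxA⟩
        · exact Or.inr (Or.inr ⟨h1, h2, rfl⟩)
        · exact Or.inl ⟨hxA, hxe, fun hcon => absurd hcon h1⟩
      · rw [hA'none jj h1 h2] at hx
        exact Or.inl ⟨hx, fun hcon => h2 (hcon ▸ hx), fun hcon => absurd hcon h1⟩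
  have hA'P : P A' := by
    refine ⟨?_, ?_, ?_, ?_, ?_, ?_⟩
    · intro jj
      by_cases h1 : jj = j₀
      · subst jj; rw [hA'j₀]
        exact Finset.insert_subset he'I ((Finset.erase_subset _ _).trans (hsub j₀))
      · by_cases h2 : e' ∈ A jj
        · rw [hA'of jj h1 h2]
          exact Finset.insert_subset heI ((Finset.erase_subset _ _).trans (hsub jj))
        · rw [hA'none jj h1 h2]; exact hsub jj
    · intro j j' hne
      rw [Finset.disjoint_left]
      intro x hxj hxj'
      rcases hmem' j x hxj with ⟨hxA, hxne, hximp⟩ | ⟨hj, hxe'⟩ | ⟨h1, h2, hxe⟩ <;>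
        rcases hmem' j' x hxj' with ⟨hxA', hxne', hximp'⟩ | ⟨hj', hxe''⟩ | ⟨h1', h2', hxe2⟩
      · exact Finset.disjoint_left.mp (hdisj j j' hne) hxA hxA'
      · exact hxne hxe''
      · exact hximp (he_only j (hxe2 ▸ hxA)) hxe2
      · exact hxne' hxe'
      · exact hne (hj.trans hj'.symm)
      · exact hene' (by rw [← hxe2, hxe'])
      · exact hximp' (he_only j' (hxe ▸ hxA')) hxe
      · exact hene' (by rw [← hxe, hxe''])
      · exact Finset.disjoint_left.mp (hdisj j j' hne) h2 h2'
    · intro jj hcle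
      by_cases h1 : jj = j₀
      · subst jj; rw [hcard' j₀] at hcle; omega
      · by_cases h2 : e' ∈ A jj
        · rw [hsumj₁ jj h1 h2 w]
          have := hw2 jj (by rw [← hcard' jj]; exact hcle)
          linarith
        · rw [hA'none jj h1 h2]
          exact hw2 jj (by rw [← hcard' jj]; exact hcle)
    · intro jj h3
      by_cases h1 : jj = j₀
      · subst jj
        have hVI := hvi j₀ hc₀
        rw [hsumj₀ w, hsumfj₀ w, hsumfj₀ (labelWLight ε w T)]
        have hlabeq : labelWLight ε w T e = labelWLight ε w T e' := hstW
        linarith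
      · by_cases h2 : e' ∈ A jj
        · exfalso
          have := he'small jj h2
          rw [hcard' jj] at h3
          omega
        · rw [hA'none jj h1 h2]
          exact hvi jj (by rw [hcard' jj] at h3; exact h3)
    · intro jj i
      by_cases hih : Heavy ε w i
      · have hie : i ≠ e := fun hcon => heH (hcon ▸ hih)
        have hie' : i ≠ e' := fun hcon => he'H (hcon ▸ hih)
        have hmemiff : i ∈ A' jj ↔ i ∈ A jj := by
          by_cases h1 : jj = j₀
          · subst jj
            rw [hA'j₀]
            simp only [Finset.mem_insert, Finset.mem_erase]
            constructor
            · rintro (rfl | ⟨-, hmem⟩)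
              · exact absurd rfl hie'
              · exact hmem
            · intro hmem; exact Or.inr ⟨hie, hmem⟩
          · by_cases h2 : e' ∈ A jj
            · rw [hA'of jj h1 h2]
              simp only [Finset.mem_insert, Finset.mem_erase]
              constructor
              · rintro (rfl | ⟨-, hmem⟩)
                · exact absurd rfl hie
                · exact hmem
              · intro hmem; exact Or.inr ⟨hie', hmem⟩
            · rw [hA'none jj h1 h2]
        rw [hcard' jj, hmemiff]
        exact hiff jj i
      · constructor
        · intro hiH; exact absurd (hHheavy jj i hiH) hih
        · rintro ⟨-, hih', -⟩; exact absurd hih' hih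
    · intro jj
      by_cases h1 : jj = j₀
      · subst jj
        have hq := hQb j₀
        have h2 := hsumj₀ p
        have h3 := hsumfj₀ (fun i => p i - labelPLight ε p i)
        have hpeq : labelPLight ε p e = labelPLight ε p e' := hstP
        rw [h2, h3]
        linarith
      · by_cases h2 : e' ∈ A jj
        · have hq := hQb jj
          have h3 := hsumj₁ jj h1 h2 p
          have h4 := hsumfj₁ jj h1 h2 (fun i => p i - labelPLight ε p i)
          have hpeq : labelPLight ε p e = labelPLight ε p e' := hstP
          rw [h3, h4]
          linarith
        · rw [hA'none jj h1 h2]; exact hQb jj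
  have hΦlt : Φ A < Φ A' := by
    simp only [hΦdef]
    refine Finset.sum_lt_sum (fun jj _ => ?_) ⟨j₀, Finset.mem_univ j₀, ?_⟩
    · by_cases h1 : jj = j₀
      · subst jj
        rw [if_pos hc₀, if_pos (by rw [hcard' j₀]; exact hc₀)]
        have := hsumfj₀ w
        linarith
      · by_cases h2 : e' ∈ A jj
        · have hc2 := he'small jj h2
          rw [if_neg (by omega), if_neg (by rw [hcard' jj]; omega)]
        · rw [hA'none jj h1 h2]
    · rw [if_pos hc₀, if_pos (by rw [hcard' j₀]; exact hc₀)]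
      have := hsumfj₀ w
      linarith
  have hcontra : Φ A = Φ A' := le_antisymm hΦlt.le (hAmax hA'P hΦlt.le)
  exact absurd hcontra (ne_of_lt hΦlt)
end

section
/- Let 0 < ε ≤ 1/2 with 1/ε a positive integer. Let I be a finite set of items where each item i has profit p(i) ≥ 0 and weight w(i) ≥ 0; call an item expensive if p(i) ≥ ε, and assume every expensive item has w(i) > 0. Let B_1, …, B_m > 0 be knapsack capacities. Define: for each expensive item i, w̃(i) = ε²·(1+ε²)^v where v is the smallest integer with w(i) ≤ ε²·(1+ε²)^v, and p̃(i) = ε·(1+ε)^u where u is the largest integer with p(i) ≥ ε·(1+ε)^u; for each non-expensive item i, w̃(i) = w(i) and p̃(i) = p(i); and for each j, B̃_j = (1+ε)^{t+1} where t is the smallest integer with B_j ≤ (1+ε)^t. Suppose (I_1, …, I_m) are pairwise disjoint sets of items with w(I_j) ≤ B_j, p(I_j) ≥ 1, and at most 1/ε expensive items in I_j, for every j. Then for every j, w̃(I_j) ≤ B̃_j and p̃(I_j) ≥ 1 − ε, where w̃(S) = Σ_{i∈S} w̃(i) and p̃(S) = Σ_{i∈S} p̃(i). -/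
/-- Lemma 5.3: rounding item weights up to the grid `ε²·(1+ε²)^ℤ` (for expensive
items), item profits down to the grid `ε·(1+ε)^ℤ` (for expensive items), and
knapsack capacities up to `(1+ε)^{t+1}`, preserves feasibility of a solution of
value at least 1 (with at most `1/ε` expensive items per knapsack) and loses at
most an `ε`-fraction of each knapsack's profit. -/
theorem stmt10 {ι : Type*} (ε : ℝ) (hε0 : 0 < ε) (hε2 : ε ≤ 1/2)
    (hinv : ∃ k : ℕ, 0 < k ∧ ε = 1 / (k : ℝ))
    (I : Finset ι) (p w : ι → ℝ)
    (hp : ∀ i ∈ I, 0 ≤ p i) (hw : ∀ i ∈ I, 0 ≤ w i)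
    (hexpw : ∀ i ∈ I, ε ≤ p i → 0 < w i)
    (m : ℕ) (B : Fin m → ℝ) (hB : ∀ j, 0 < B j)
    (wt pt : ι → ℝ) (Bt : Fin m → ℝ)
    (hwt : ∀ i ∈ I, ε ≤ p i → ∃ v : ℤ, wt i = ε ^ 2 * (1 + ε ^ 2) ^ v ∧
        w i ≤ ε ^ 2 * (1 + ε ^ 2) ^ v ∧
        ∀ v' : ℤ, w i ≤ ε ^ 2 * (1 + ε ^ 2) ^ v' → v ≤ v')
    (hpt : ∀ i ∈ I, ε ≤ p i → ∃ u : ℤ, pt i = ε * (1 + ε) ^ u ∧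
        ε * (1 + ε) ^ u ≤ p i ∧
        ∀ u' : ℤ, ε * (1 + ε) ^ u' ≤ p i → u' ≤ u)
    (hwt' : ∀ i ∈ I, p i < ε → wt i = w i)
    (hpt' : ∀ i ∈ I, p i < ε → pt i = p i)
    (hBt : ∀ j, ∃ t : ℤ, Bt j = (1 + ε) ^ (t + 1) ∧ B j ≤ (1 + ε) ^ t ∧
        ∀ t' : ℤ, B j ≤ (1 + ε) ^ t' → t ≤ t')
    (A : Fin m → Finset ι)
    (hsub : ∀ j, A j ⊆ I)
    (hdisj : ∀ j j', j ≠ j' → Disjoint (A j) (A j'))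
    (hcap : ∀ j, ∑ i ∈ A j, w i ≤ B j)
    (hprof : ∀ j, 1 ≤ ∑ i ∈ A j, p i)
    (hcount : ∀ j, (((A j).filter (fun i => ε ≤ p i)).card : ℝ) ≤ 1 / ε) :
    ∀ j, (∑ i ∈ A j, wt i ≤ Bt j) ∧ (1 - ε ≤ ∑ i ∈ A j, pt i) := by
  intro j
  have hε2pos : (0:ℝ) < 1 + ε ^ 2 := by positivity
  have hεpos : (0:ℝ) < 1 + ε := by linarith
  -- key weight bound
  have key1 : ∀ i ∈ A j, wt i ≤ (1 + ε ^ 2) * w i := by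
    intro i hi
    have hiI := hsub j hi
    by_cases hc : p i < ε
    · rw [hwt' i hiI hc]
      nlinarith [hw i hiI, sq_nonneg ε]
    · push_neg at hc
      obtain ⟨v, hv1, hv2, hv3⟩ := hwt i hiI hc
      have hlt : ε ^ 2 * (1 + ε ^ 2) ^ (v - 1) < w i := by
        by_contra h
        push_neg at h
        have := hv3 (v - 1) h
        omega
      have hz : (1 + ε ^ 2) ^ v = (1 + ε ^ 2) ^ (v - 1) * (1 + ε ^ 2) := by
        rw [← zpow_add_one₀ (ne_of_gt hε2pos)]; ring_nf
      rw [hv1, hz]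
      nlinarith [hlt]
  -- key profit bound
  have key2 : ∀ i ∈ A j, p i ≤ (1 + ε) * pt i := by
    intro i hi
    have hiI := hsub j hi
    by_cases hc : p i < ε
    · rw [hpt' i hiI hc]
      nlinarith [hp i hiI]
    · push_neg at hc
      obtain ⟨u, hu1, hu2, hu3⟩ := hpt i hiI hc
      have hlt : p i < ε * (1 + ε) ^ (u + 1) := by
        by_contra h
        push_neg at h
        have := hu3 (u + 1) h
        omega
      have hz : (1 + ε) ^ (u + 1) = (1 + ε) ^ u * (1 + ε) := by
        rw [← zpow_add_one₀ (ne_of_gt hεpos)]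
      rw [hu1]
      nlinarith [hlt]
  constructor
  · obtain ⟨t, ht1, ht2, _⟩ := hBt j
    have h1 : ∑ i ∈ A j, wt i ≤ (1 + ε ^ 2) * ∑ i ∈ A j, w i := by
      rw [Finset.mul_sum]
      exact Finset.sum_le_sum key1
    have h2 : (1 + ε ^ 2) * ∑ i ∈ A j, w i ≤ (1 + ε ^ 2) * B j :=
      mul_le_mul_of_nonneg_left (hcap j) (le_of_lt hε2pos)
    have htpos : (0:ℝ) < (1 + ε) ^ t := zpow_pos hεpos t
    have h3 : (1 + ε ^ 2) * B j ≤ (1 + ε) * (1 + ε) ^ t := by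
      have hBj := hB j
      have he : 1 + ε ^ 2 ≤ 1 + ε := by nlinarith
      exact mul_le_mul he ht2 (le_of_lt hBj) (le_of_lt hεpos)
    have hz : (1 + ε) ^ (t + 1) = (1 + ε) ^ t * (1 + ε) := by
      rw [← zpow_add_one₀ (ne_of_gt hεpos)]
    rw [ht1, hz]
    linarith
  · have h1 : (1:ℝ) ≤ (1 + ε) * ∑ i ∈ A j, pt i := by
      calc (1:ℝ) ≤ ∑ i ∈ A j, p i := hprof j
        _ ≤ ∑ i ∈ A j, (1 + ε) * pt i := Finset.sum_le_sum key2
        _ = (1 + ε) * ∑ i ∈ A j, pt i := by rw [Finset.mul_sum]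
    nlinarith [h1]
end

section
/- Let N and M be positive integers and let c_1, …, c_N be nonnegative reals with Σ_{i=1}^N c_i = M. Then there exists a matrix (x_{ij}) with 0 ≤ x_{ij} ≤ 1 for all i ∈ {1,…,N}, j ∈ {1,…,M}, such that Σ_{i=1}^N x_{ij} = 1 for every j, Σ_{j=1}^M x_{ij} = c_i for every i, and the number of indices j for which some entry x_{ij} lies strictly between 0 and 1 is at most N − 1. -/
open scoped Classical

private lemma clampd {a b p q : ℝ} (hab : a ≤ b) (hpq : p ≤ q) :
    max 0 (min b q - max a p) = min q (max p b) - min q (max p a) := by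
  simp only [max_def, min_def]
  split_ifs <;> linarith

/-- The transportation step in the proof of Lemma 5.8: nonnegative configuration
multiplicities `c i` summing to the number `M` of knapsacks can be distributed so
that every knapsack receives total configuration mass exactly 1, each configuration
`i` is used exactly `c i` times in total, and at most `N - 1` knapsacks receive a
fractional amount of some configuration. -/
theorem stmt13 (N M : ℕ) (hN : 0 < N) (hM : 0 < M)
    (c : Fin N → ℝ) (hc : ∀ i, 0 ≤ c i) (hsum : ∑ i, c i = (M : ℝ)) :
    ∃ x : Fin N → Fin M → ℝ,
      (∀ i j, 0 ≤ x i j ∧ x i j ≤ 1) ∧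
      (∀ j, ∑ i, x i j = 1) ∧
      (∀ i, ∑ j, x i j = c i) ∧
      (Finset.univ.filter
        (fun j : Fin M => ∃ i, 0 < x i j ∧ x i j < 1)).card ≤ N - 1 := by
  set f : ℕ → ℝ := fun i => if h : i < N then c ⟨i, h⟩ else 0 with hfdef
  have hf0 : ∀ i, 0 ≤ f i := by
    intro i; simp only [hfdef]; split_ifs with h
    · exact hc _
    · exact le_refl 0
  set S : ℕ → ℝ := fun n => ∑ k ∈ Finset.range n, f k with hSdef
  have hSmono : ∀ {m n : ℕ}, m ≤ n → S m ≤ S n := by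
    intro m n h
    exact Finset.sum_le_sum_of_subset_of_nonneg (Finset.range_subset_range.2 h)
      (fun i _ _ => hf0 i)
  have hS0 : S 0 = 0 := by simp [hSdef]
  have hSnn : ∀ n, 0 ≤ S n := fun n => hS0 ▸ hSmono (Nat.zero_le n)
  have hSN : S N = M := by
    have : ∑ k ∈ Finset.range N, f k = ∑ i : Fin N, c i := by
      rw [← Fin.sum_univ_eq_sum_range]
      exact Finset.sum_congr rfl (fun i _ => by simp [hfdef, i.isLt])
    simp only [hSdef]; rw [this, hsum]
  have hSle : ∀ n, n ≤ N → S n ≤ M := fun n hn => hSN ▸ hSmono hn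
  have hSstep : ∀ n, S (n + 1) = S n + f n := by
    intro n; simp only [hSdef]; rw [Finset.sum_range_succ]
  refine ⟨fun i j => max 0 (min (S (i + 1)) ((j : ℝ) + 1) - max (S i) (j : ℝ)),
    ?_, ?_, ?_, ?_⟩
  · intro i j
    constructor
    · exact le_max_left _ _
    · have h1 : min (S (↑i + 1)) ((j : ℝ) + 1) ≤ (j : ℝ) + 1 := min_le_right _ _
      have h2 : (j : ℝ) ≤ max (S ↑i) (j : ℝ) := le_max_right _ _
      have : min (S (↑i + 1)) ((j : ℝ) + 1) - max (S ↑i) (j : ℝ) ≤ 1 := by linarith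
      exact max_le (by norm_num) this
  · -- column sums
    intro j
    have hjM : ((j : ℕ) : ℝ) + 1 ≤ (M : ℝ) := by
      have : (j : ℕ) + 1 ≤ M := j.isLt
      exact_mod_cast this
    have hj0 : (0 : ℝ) ≤ (j : ℕ) := Nat.cast_nonneg _
    set g : ℕ → ℝ := fun n => min ((j : ℝ) + 1) (max (j : ℝ) (S n)) with hgdef
    have key : ∀ i : Fin N,
        max 0 (min (S (↑i + 1)) ((j : ℝ) + 1) - max (S ↑i) (j : ℝ))
          = g (↑i + 1) - g ↑i := by
      intro i
      exact clampd (hSmono (Nat.le_succ _)) (by linarith)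
    calc ∑ i : Fin N, max 0 (min (S (↑i + 1)) ((j : ℝ) + 1) - max (S ↑i) (j : ℝ))
        = ∑ i : Fin N, (g (↑i + 1) - g ↑i) := Finset.sum_congr rfl (fun i _ => key i)
      _ = ∑ i ∈ Finset.range N, (g (i + 1) - g i) :=
          Fin.sum_univ_eq_sum_range (fun i => g (i + 1) - g i) N
      _ = g N - g 0 := Finset.sum_range_sub g N
      _ = 1 := by
          simp only [hgdef, hS0, hSN]
          rw [max_eq_right (by linarith : (j : ℝ) ≤ (M : ℝ)),
            min_eq_left hjM, max_eq_left hj0,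
            min_eq_right (by linarith : (j : ℝ) ≤ (j : ℝ) + 1)]
          ring
  · -- row sums
    intro i
    set h : ℕ → ℝ := fun n => min (S (↑i + 1)) (max (S ↑i) (n : ℝ)) with hhdef
    have key : ∀ j : Fin M,
        max 0 (min (S (↑i + 1)) ((j : ℝ) + 1) - max (S ↑i) (j : ℝ))
          = h (↑j + 1) - h ↑j := by
      intro j
      simp only [hhdef]
      push_cast
      have e := clampd (a := ((j : ℕ) : ℝ)) (b := ((j : ℕ) : ℝ) + 1)
        (p := S ↑i) (q := S (↑i + 1)) (by linarith) (hSmono (Nat.le_succ (i : ℕ)))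
      rw [min_comm (((j : ℕ) : ℝ) + 1) (S (↑i + 1)), max_comm ((j : ℕ) : ℝ) (S ↑i)] at e
      exact e
    have hSi1 : S (↑i + 1) ≤ (M : ℝ) := hSle _ i.isLt
    have hSiM : S ↑i ≤ (M : ℝ) := hSle _ (le_of_lt i.isLt)
    calc ∑ j : Fin M, max 0 (min (S (↑i + 1)) ((j : ℝ) + 1) - max (S ↑i) (j : ℝ))
        = ∑ j : Fin M, (h (↑j + 1) - h ↑j) := Finset.sum_congr rfl (fun j _ => key j)
      _ = ∑ j ∈ Finset.range M, (h (j + 1) - h j) :=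
          Fin.sum_univ_eq_sum_range (fun j => h (j + 1) - h j) M
      _ = h M - h 0 := Finset.sum_range_sub h M
      _ = c i := by
          simp only [hhdef]
          rw [max_eq_right hSiM, min_eq_left hSi1, Nat.cast_zero,
            max_eq_left (hSnn _), min_eq_right (hSmono (Nat.le_succ _)),
            hSstep]
          simp [hfdef, i.isLt]
  · -- fractional count
    set T := Finset.univ.filter
      (fun j : Fin M => ∃ i : Fin N, 0 < max 0 (min (S (↑i + 1)) ((j : ℝ) + 1) - max (S ↑i) (j : ℝ)) ∧
        max 0 (min (S (↑i + 1)) ((j : ℝ) + 1) - max (S ↑i) (j : ℝ)) < 1) with hT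
    have hcut : ∀ j ∈ T, ∃ k : ℕ, (1 ≤ k ∧ k ≤ N - 1) ∧
        ((j : ℝ) < S k ∧ S k < (j : ℝ) + 1) := by
      intro j hj
      rw [hT, Finset.mem_filter] at hj
      obtain ⟨-, i, hpos, hlt⟩ := hj
      have hpos' : 0 < min (S (↑i + 1)) ((j : ℝ) + 1) - max (S ↑i) (j : ℝ) := by
        by_contra hcon
        push_neg at hcon
        rw [max_eq_left hcon] at hpos
        exact lt_irrefl 0 hpos
      have hlt' : min (S (↑i + 1)) ((j : ℝ) + 1) - max (S ↑i) (j : ℝ) < 1 := by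
        calc min (S (↑i + 1)) ((j : ℝ) + 1) - max (S ↑i) (j : ℝ)
            ≤ max 0 (min (S (↑i + 1)) ((j : ℝ) + 1) - max (S ↑i) (j : ℝ)) := le_max_right _ _
          _ < 1 := hlt
      rcases lt_or_ge ((j : ℝ)) (S ↑i) with h1 | h1
      · -- cut at k = i
        refine ⟨↑i, ⟨?_, ?_⟩, h1, ?_⟩
        · by_contra hcon
          push_neg at hcon
          interval_cases (i : ℕ)
          rw [hS0] at h1
          exact absurd h1 (not_lt.2 (Nat.cast_nonneg _))
        · omega
        · have : max (S ↑i) (j : ℝ) = S ↑i := max_eq_left h1.le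
          have h2 : S ↑i < min (S (↑i + 1)) ((j : ℝ) + 1) := by linarith [hpos', this.symm ▸ hpos']
          calc S ↑i < min (S (↑i + 1)) ((j : ℝ) + 1) := by
                rw [← this]; linarith
            _ ≤ (j : ℝ) + 1 := min_le_right _ _
      · -- S i ≤ j
        have hmax : max (S ↑i) (j : ℝ) = (j : ℝ) := max_eq_right h1
        rcases lt_or_ge (S (↑i + 1)) ((j : ℝ) + 1) with h2 | h2
        · refine ⟨↑i + 1, ⟨Nat.le_add_left 1 _, ?_⟩, ?_, h2⟩
          · -- i+1 ≤ N-1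
            have hne : (↑i : ℕ) + 1 ≠ N := by
              intro hcon
              have : S (↑i + 1) = M := by rw [hcon]; exact hSN
              have hjM : ((j : ℕ) : ℝ) + 1 ≤ (M : ℝ) := by
                exact_mod_cast j.isLt
              linarith
            have := i.isLt
            omega
          · have : min (S (↑i + 1)) ((j : ℝ) + 1) = S (↑i + 1) := min_eq_left h2.le
            rw [hmax, this] at hpos'
            linarith
        · exfalso
          rw [hmax, min_eq_right h2] at hlt'
          linarith
    choose! F hF1 hF2 using hcut
    have : T.card ≤ (Finset.Icc 1 (N - 1)).card := by
      apply Finset.card_le_card_of_injOn F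
      · intro j hj
        rw [Finset.mem_coe, Finset.mem_Icc]
        exact hF1 j hj
      · intro j1 hj1 j2 hj2 heq
        obtain ⟨ha1, hb1⟩ := hF2 j1 hj1
        obtain ⟨ha2, hb2⟩ := hF2 j2 hj2
        rw [heq] at ha1 hb1
        have e1 : ((j1 : ℕ) : ℝ) < (j2 : ℕ) + 1 := lt_trans ha1 hb2
        have e2 : ((j2 : ℕ) : ℝ) < (j1 : ℕ) + 1 := lt_trans ha2 hb1
        have : (j1 : ℕ) = (j2 : ℕ) := by
          have e1' : (j1 : ℕ) < (j2 : ℕ) + 1 := by exact_mod_cast e1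
          have e2' : (j2 : ℕ) < (j1 : ℕ) + 1 := by exact_mod_cast e2
          omega
        exact Fin.ext this
    rwa [Nat.card_Icc, Nat.add_sub_cancel] at this
end
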